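/- arXiv:1309.0571 — 12 statements merged into one kernel-verified Lean document; each statement's English description precedes it below -/
import Mathlib

section
/- Let M be a join-semilattice with a greatest element ⊤, let t ≥ 1 be an integer, and let P be a monotone, multilinear predicate on t-tuples of elements of M. Let m be an integer with 1 ≤ m ≤ t, and let 𝒩 be a nonempty finite subset of M such that P(N,…,N,⊤,…,⊤) holds for every N ∈ 𝒩 (with N repeated m times and ⊤ repeated t−m times). Let N̂ be any lower bound of 𝒩 in M and let Ĝ be the supremum of 𝒩. Then P(N̂,…,N̂,Ĝ,…,Ĝ) holds, with N̂ repeated m−1 times and Ĝ repeated t−m+1 times. -/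
/-- A predicate on `t`-tuples of elements of a preorder is *monotone* if it is preserved
by replacing each argument with a smaller one. -/
def MonotonePred {L : Type*} [Preorder L] {t : ℕ} (P : (Fin t → L) → Prop) : Prop :=
  ∀ N N' : Fin t → L, (∀ i, N' i ≤ N i) → P N → P N'

/-- A predicate on `t`-tuples of elements of a join-semilattice is *multilinear* if, in each
coordinate, it is preserved by taking the join of two admissible values. -/
def MultilinearPred {L : Type*} [SemilatticeSup L] {t : ℕ} (P : (Fin t → L) → Prop) : Prop :=
  ∀ (N : Fin t → L) (i : Fin t) (a b : L),
    P (Function.update N i a) → P (Function.update N i b) →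
      P (Function.update N i (a ⊔ b))

/-- Multilinearity extends to joins over nonempty finite sets. -/
lemma multilinear_sup' {M : Type*} [SemilatticeSup M] {t : ℕ} {P : (Fin t → M) → Prop}
    (hmulti : MultilinearPred P) (N : Fin t → M) (i : Fin t) (s : Finset M) (hs : s.Nonempty)
    (h : ∀ a ∈ s, P (Function.update N i a)) : P (Function.update N i (s.sup' hs id)) := by
  induction hs using Finset.Nonempty.cons_induction with
  | singleton a => simpa using h a (by simp)
  | cons a s ha hs ih =>
      rw [Finset.sup'_cons]
      exact hmulti N i a (s.sup' hs id) (h a (by simp))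
        (ih fun b hb => h b (by simp [hb]))

/-- **Lemma 1.** If `P(N,…,N,⊤,…,⊤)` (with `N` repeated `m` times) holds for every `N` in a
nonempty finite family `𝒩`, then `P(N̂,…,N̂,Ĝ,…,Ĝ)` (with `N̂` repeated `m - 1` times) holds,
where `N̂` is any lower bound of `𝒩` and `Ĝ = sup 𝒩`. -/
theorem stmt_0 {M : Type*} [SemilatticeSup M] [OrderTop M] {t : ℕ} (ht : 1 ≤ t)
    (P : (Fin t → M) → Prop) (hmono : MonotonePred P) (hmulti : MultilinearPred P)
    {m : ℕ} (hm1 : 1 ≤ m) (hmt : m ≤ t)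
    (𝒩 : Finset M) (h𝒩 : 𝒩.Nonempty)
    (hP : ∀ N ∈ 𝒩, P (fun i => if (i : ℕ) < m then N else ⊤))
    (Nhat : M) (hNhat : ∀ N ∈ 𝒩, Nhat ≤ N) :
    P (fun i => if (i : ℕ) < m - 1 then Nhat else 𝒩.sup' h𝒩 id) := by
  set G := 𝒩.sup' h𝒩 id with hG
  -- base family of tuples
  set base : ℕ → Fin t → M := fun k i =>
    if (i : ℕ) < m - 1 then Nhat else if (i : ℕ) < m - 1 + k then G else ⊤ with hbase
  -- key claim by induction on k
  have key : ∀ k (hk : m - 1 + k < t), ∀ N ∈ 𝒩,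
      P (Function.update (base k) ⟨m - 1 + k, hk⟩ N) := by
    intro k
    induction k with
    | zero =>
        intro hk N hN
        refine hmono _ _ ?_ (hP N hN)
        intro i
        rcases eq_or_ne i ⟨m - 1 + 0, hk⟩ with rfl | hi
        · have : m - 1 + 0 < m := by omega
          have h0 : 0 < m := hm1
          simp [this, h0]
        · rw [Function.update_of_ne hi]
          have hiv : (i : ℕ) ≠ m - 1 + 0 := fun h => hi (Fin.ext h)
          simp only [hbase]
          by_cases h1 : (i : ℕ) < m - 1
          · have : (i : ℕ) < m := by omega
            simp [h1, this, hNhat N hN]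
          · have h2 : ¬ (i : ℕ) < m - 1 + 0 := by omega
            have h3 : ¬ (i : ℕ) < m := by omega
            simp [h1, h2, h3]
    | succ k ih =>
        intro hk N hN
        have hk' : m - 1 + k < t := by omega
        have hjoin : P (Function.update (base k) ⟨m - 1 + k, hk'⟩ G) :=
          multilinear_sup' hmulti (base k) ⟨m - 1 + k, hk'⟩ 𝒩 h𝒩 (ih hk')
        have hbeq : Function.update (base k) ⟨m - 1 + k, hk'⟩ G = base (k + 1) := by
          funext i
          rcases eq_or_ne i ⟨m - 1 + k, hk'⟩ with rfl | hi
          · simp only [Function.update_self, hbase, Fin.val_mk]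
            have h1 : ¬ (m - 1 + k < m - 1) := by omega
            have h2 : m - 1 + k < m - 1 + (k + 1) := by omega
            simp [h1, h2]
          · rw [Function.update_of_ne hi]
            have hiv : (i : ℕ) ≠ m - 1 + k := fun h => hi (Fin.ext h)
            simp only [hbase]
            by_cases h1 : (i : ℕ) < m - 1
            · simp [h1]
            · have : ((i : ℕ) < m - 1 + k) ↔ ((i : ℕ) < m - 1 + (k + 1)) := by omega
              simp [h1, this]
        rw [hbeq] at hjoin
        refine hmono _ _ ?_ hjoin
        intro i
        rcases eq_or_ne i ⟨m - 1 + (k + 1), hk⟩ with rfl | hi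
        · have heq : base (k + 1) ⟨m - 1 + (k + 1), hk⟩ = ⊤ := by
            have h1 : ¬ (m - 1 + (k + 1) < m - 1) := by omega
            have h2 : ¬ (m - 1 + (k + 1) < m - 1 + (k + 1)) := by omega
            simp [hbase, h1, h2]
          rw [heq]
          exact le_top
        · rw [Function.update_of_ne hi]
  -- finish: one more join at the last coordinate
  have hlast : m - 1 + (t - m) < t := by omega
  have hjoin : P (Function.update (base (t - m)) ⟨m - 1 + (t - m), hlast⟩ G) :=
    multilinear_sup' hmulti _ _ 𝒩 h𝒩 (key (t - m) hlast)
  have : Function.update (base (t - m)) ⟨m - 1 + (t - m), hlast⟩ G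
      = fun i : Fin t => if (i : ℕ) < m - 1 then Nhat else G := by
    funext i
    rcases eq_or_ne i ⟨m - 1 + (t - m), hlast⟩ with rfl | hi
    · simp only [Function.update_self, Fin.val_mk]
      have h1 : ¬ (m - 1 + (t - m) < m - 1) := by omega
      simp [h1]
    · rw [Function.update_of_ne hi]
      have hiv : (i : ℕ) ≠ m - 1 + (t - m) := fun h => hi (Fin.ext h)
      have hlt : (i : ℕ) < m - 1 + (t - m) := by omega
      simp only [hbase]
      by_cases h1 : (i : ℕ) < m - 1
      · simp [h1]
      · simp [h1, hlt]
  rwa [this] at hjoin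
end

section
/- Let L be a lattice and let k, l ≥ 1 be integers. Let Q be a monotone, multilinear predicate on k-tuples of elements of L, and for each i ∈ {1,…,k} let Rᵢ be a predicate taking an l-tuple of elements of L (the first row) and one element of L (the second row) such that: Rᵢ is monotone and multilinear in the first row for each fixed second row, and for each fixed first row v, Rᵢ(v, M) together with M ≤ M' implies Rᵢ(v, M'), and Rᵢ(v, M') together with Rᵢ(v, M'') implies Rᵢ(v, M' ⊓ M''). Define the composition Q∘R on kl-tuples (N₁,…,N_{kl}) of elements of L by: Q∘R(N₁,…,N_{kl}) holds iff there exist M₁,…,M_k ∈ L with Q(M₁,…,M_k) and Rᵢ(N_{(i−1)l+1},…,N_{il}, Mᵢ) for each i ∈ {1,…,k}. Then Q∘R is monotone and multilinear. -/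
/-- The index `(i-1)l + j` (0-indexed: `i*l + j`) of the `j`-th entry of the `i`-th block
in a `kl`-tuple split into `k` blocks of length `l`. -/
def blockIdx {k l : ℕ} (i : Fin k) (j : Fin l) : Fin (k * l) :=
  ⟨(i : ℕ) * l + (j : ℕ), by
    have h1 : (i : ℕ) * l + (j : ℕ) < ((i : ℕ) + 1) * l := by
      rw [add_mul, one_mul]; exact Nat.add_lt_add_left j.isLt _
    exact lt_of_lt_of_le h1 (Nat.mul_le_mul_right l (Nat.succ_le_of_lt i.isLt))⟩

/-- The *composition* `Q∘R`: it holds of a `kl`-tuple `(N₁,…,N_{kl})` iff there are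
`M₁,…,M_k` with `Q(M₁,…,M_k)` and `Rᵢ(N_{(i-1)l+1},…,N_{il}, Mᵢ)` for each `i`. -/
def compPred {L : Type*} [Lattice L] {k l : ℕ} (Q : (Fin k → L) → Prop)
    (R : ∀ _ : Fin k, (Fin l → L) → L → Prop) : (Fin (k * l) → L) → Prop :=
  fun Ns => ∃ M : Fin k → L, Q M ∧ ∀ i : Fin k, R i (fun j => Ns (blockIdx i j)) (M i)

lemma blockIdx_inj {k l : ℕ} {i i' : Fin k} {j j' : Fin l}
    (h : blockIdx i j = blockIdx i' j') : i = i' ∧ j = j' := by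
  have h' : (i : ℕ) * l + (j : ℕ) = (i' : ℕ) * l + (j' : ℕ) := congrArg Fin.val h
  have hl : 0 < l := j.pos
  have hi : (i : ℕ) = (i' : ℕ) := by
    have h1 : ((i : ℕ) * l + (j : ℕ)) / l = (i : ℕ) := by
      rw [Nat.mul_comm, Nat.mul_add_div hl, Nat.div_eq_of_lt j.isLt, Nat.add_zero]
    have h2 : ((i' : ℕ) * l + (j' : ℕ)) / l = (i' : ℕ) := by
      rw [Nat.mul_comm, Nat.mul_add_div hl, Nat.div_eq_of_lt j'.isLt, Nat.add_zero]
    rw [← h1, ← h2, h']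
  have hj : (j : ℕ) = (j' : ℕ) := by rw [hi] at h'; omega
  exact ⟨Fin.ext hi, Fin.ext hj⟩

lemma exists_block {k l : ℕ} (p : Fin (k * l)) : ∃ (i : Fin k) (j : Fin l),
    p = blockIdx i j := by
  have hp := p.isLt
  have hl : 0 < l := by
    rcases Nat.eq_zero_or_pos l with h | h
    · subst h; simp at hp
    · exact h
  have hi : (p : ℕ) / l < k :=
    Nat.div_lt_of_lt_mul (Nat.lt_of_lt_of_le hp (le_of_eq (Nat.mul_comm k l)))
  refine ⟨⟨(p : ℕ) / l, hi⟩, ⟨(p : ℕ) % l, Nat.mod_lt _ hl⟩, ?_⟩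
  apply Fin.ext
  simp only [blockIdx]
  exact (Nat.div_add_mod' _ _).symm

/-- **Composition Lemma.** If `Q` is monotone and multilinear, and each `Rᵢ` is monotone and
multilinear in its first row, comonotone and colinear in its second row, then the composition
`Q∘R` is monotone and multilinear. -/
theorem stmt_4 {L : Type*} [Lattice L] {k l : ℕ} (hk : 1 ≤ k) (hl : 1 ≤ l)
    (Q : (Fin k → L) → Prop) (hQmono : MonotonePred Q) (hQmulti : MultilinearPred Q)
    (R : ∀ _ : Fin k, (Fin l → L) → L → Prop)
    (hRmono : ∀ (i : Fin k) (M : L), MonotonePred (fun v => R i v M))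
    (hRmulti : ∀ (i : Fin k) (M : L), MultilinearPred (fun v => R i v M))
    (hRcomono : ∀ (i : Fin k) (v : Fin l → L) (M M' : L), M ≤ M' → R i v M → R i v M')
    (hRcolin : ∀ (i : Fin k) (v : Fin l → L) (M' M'' : L),
      R i v M' → R i v M'' → R i v (M' ⊓ M'')) :
    MonotonePred (compPred Q R) ∧ MultilinearPred (compPred Q R) := by
  constructor
  · rintro N N' hle ⟨M, hQ, hR⟩
    exact ⟨M, hQ, fun i => hRmono i (M i) _ _ (fun j => hle _) (hR i)⟩
  · rintro N p a b ⟨M', hQ', hR'⟩ ⟨M'', hQ'', hR''⟩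
    obtain ⟨i, j, rfl⟩ := exists_block p
    -- rows of the updated tuples
    have row_other : ∀ (x : L) (i' : Fin k), i' ≠ i →
        (fun j' => Function.update N (blockIdx i j) x (blockIdx i' j')) =
        (fun j' => N (blockIdx i' j')) := by
      intro x i' hne
      funext j'
      apply Function.update_of_ne
      intro h
      exact hne (blockIdx_inj h).1
    have row_self : ∀ (x : L),
        (fun j' => Function.update N (blockIdx i j) x (blockIdx i j')) =
        Function.update (fun j' => N (blockIdx i j')) j x := by
      intro x
      funext j'
      by_cases h : j' = j
      · subst h; simp
      · rw [Function.update_of_ne h, Function.update_of_ne]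
        intro hh
        exact h (blockIdx_inj hh).2
    set S : Fin k → L := fun i' => M' i' ⊓ M'' i' with hS
    refine ⟨Function.update S i (M' i ⊔ M'' i), ?_, ?_⟩
    · apply hQmulti S i (M' i) (M'' i)
      · exact hQmono _ _ (fun i' => by
          by_cases h : i' = i
          · subst h; simp
          · rw [Function.update_of_ne h]; exact inf_le_left) hQ'
      · exact hQmono _ _ (fun i' => by
          by_cases h : i' = i
          · subst h; simp
          · rw [Function.update_of_ne h]; exact inf_le_right) hQ''
    · intro i'
      by_cases h : i' = i
      · subst h
        rw [Function.update_self, row_self]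
        apply hRmulti i' (M' i' ⊔ M'' i') (fun j' => N (blockIdx i' j')) j a b
        · rw [← row_self]
          exact hRcomono i' _ _ _ le_sup_left (hR' i')
        · rw [← row_self]
          exact hRcomono i' _ _ _ le_sup_right (hR'' i')
      · rw [Function.update_of_ne h]
        have h1 := hR' i'
        have h2 := hR'' i'
        rw [row_other a i' h] at h1
        rw [row_other b i' h] at h2
        rw [show (fun j' => Function.update N (blockIdx i j) (a ⊔ b) (blockIdx i' j')) =
            (fun j' => N (blockIdx i' j')) from row_other (a ⊔ b) i' h]
        exact hRcolin i' _ _ _ h1 h2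
end

section
/- Let G be a group, let l ≥ 1 be an integer, and let Q be a monotone, multilinear predicate on l-tuples of normal subgroups of G (with respect to the lattice of normal subgroups of G ordered by inclusion). Let 𝓒 be a class of groups which is both radical and a formation. Then there exists a monotone, multilinear predicate P on l-tuples of normal subgroups of G such that for every normal subgroup N of G, P(N,…,N) holds if and only if there exists a normal subgroup M of G with M ≤ N, Q(M,…,M), and with the quotient group N/M lying in 𝓒. -/
universe u

/-- A *class of groups*: a predicate on groups in a fixed universe. -/
abbrev GroupClass : Type (u + 1) := ∀ (H : Type u) [Group H], Prop

/-- A class of groups is invariant under group isomorphism. -/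
def IsoClosed (C : GroupClass.{u}) : Prop :=
  ∀ (A B : Type u) [Group A] [Group B], (A ≃* B) → C A → C B

/-- A class of groups is *radical* if it is closed under normal subgroups and under
products of two normal subgroups. -/
def IsRadicalClass (C : GroupClass.{u}) : Prop :=
  (∀ (A : Type u) [Group A] (K : Subgroup A), K.Normal → C A → C ↥K) ∧
  (∀ (A : Type u) [Group A] (K₁ K₂ : Subgroup A), K₁.Normal → K₂.Normal →
    K₁ ⊔ K₂ = ⊤ → C ↥K₁ → C ↥K₂ → C A)

/-- A class of groups is a *formation* if it is closed under quotients and under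
subdirect products of two groups. -/
def IsFormation (C : GroupClass.{u}) : Prop :=
  (∀ (A : Type u) [Group A] (K : Subgroup A) [K.Normal], C A → C (A ⧸ K)) ∧
  (∀ (A B : Type u) [Group A] [Group B] (K : Subgroup (A × B)),
    (Function.Surjective fun k : ↥K => (k : A × B).1) →
    (Function.Surjective fun k : ↥K => (k : A × B).2) →
    C A → C B → C ↥K)

/-- `quotInClass C N M hM` says that the quotient group `N/(N ∩ M)` lies in the class `C`.
When `M ≤ N`, this is the quotient group `N/M`. -/
def quotInClass (C : GroupClass.{u}) {G : Type u} [Group G]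
    (N M : Subgroup G) (hM : M.Normal) : Prop :=
  haveI : ((N ⊓ M).subgroupOf N).Normal := by
    constructor
    intro x hx g
    simp only [Subgroup.mem_subgroupOf, Subgroup.mem_inf] at hx ⊢
    push_cast
    exact ⟨mul_mem (mul_mem g.2 hx.1) (inv_mem g.2), hM.conj_mem _ hx.2 _⟩
  C (↥N ⧸ (N ⊓ M).subgroupOf N)

/-- A predicate on `l`-tuples of normal subgroups of `G` is *monotone* if it is preserved by
replacing each entry with a smaller normal subgroup. -/
def MonoOnNormal {G : Type u} [Group G] {l : ℕ}
    (P : (Fin l → Subgroup G) → Prop) : Prop :=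
  ∀ N N' : Fin l → Subgroup G, (∀ i, (N i).Normal) → (∀ i, (N' i).Normal) →
    (∀ i, N' i ≤ N i) → P N → P N'

/-- A predicate on `l`-tuples of normal subgroups of `G` is *multilinear* if, in each
coordinate, it is preserved by taking the join (product) of two admissible normal
subgroups. -/
def MultiOnNormal {G : Type u} [Group G] {l : ℕ}
    (P : (Fin l → Subgroup G) → Prop) : Prop :=
  ∀ (N : Fin l → Subgroup G) (i : Fin l) (A B : Subgroup G),
    (∀ j, (N j).Normal) → A.Normal → B.Normal →
    P (Function.update N i A) → P (Function.update N i B) →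
      P (Function.update N i (A ⊔ B))

namespace Stmt6Aux

open Subgroup QuotientGroup Function Pointwise

variable {G : Type u} [Group G] (C : GroupClass.{u})

lemma qc_iff (N M : Subgroup G) [hN : N.Normal] [hM : M.Normal] :
    quotInClass C N M hM ↔ C (↥N ⧸ (N ⊓ M).subgroupOf N) := Iff.rfl

lemma qc_congr (hiso : IsoClosed C) {N M M' : Subgroup G} [hN : N.Normal] [hM : M.Normal]
    [hM' : M'.Normal] (h : N ⊓ M = N ⊓ M') :
    quotInClass C N M hM → quotInClass C N M' hM' := by
  rw [qc_iff, qc_iff]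
  have h' : (N ⊓ M).subgroupOf N = (N ⊓ M').subgroupOf N := by rw [h]
  exact hiso _ _ (QuotientGroup.quotientMulEquivOfEq h')

lemma qc_congr' {N N' M M' : Subgroup G} (hN : N = N') (hM : M = M')
    (h : M.Normal) (h' : M'.Normal) :
    quotInClass C N M h → quotInClass C N' M' h' := by
  subst hN
  subst hM
  exact id

lemma ker_comp_inclusion {N' N M : Subgroup G} (h : N' ≤ N) [((N ⊓ M).subgroupOf N).Normal] :
    ((QuotientGroup.mk' ((N ⊓ M).subgroupOf N)).comp (Subgroup.inclusion h)).ker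
      = (N' ⊓ M).subgroupOf N' := by
  ext x
  simp only [MonoidHom.mem_ker, MonoidHom.comp_apply, QuotientGroup.mk'_apply,
    QuotientGroup.eq_one_iff, Subgroup.mem_subgroupOf, Subgroup.mem_inf,
    Subgroup.coe_inclusion]
  exact ⟨fun hx => ⟨x.2, hx.2⟩, fun hx => ⟨h x.2, hx.2⟩⟩

lemma range_comp_inclusion_normal {N' N : Subgroup G} (hN' : N'.Normal) (h : N' ≤ N)
    (J : Subgroup ↥N) [J.Normal] :
    ((QuotientGroup.mk' J).comp (Subgroup.inclusion h)).range.Normal := by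
  constructor
  intro n hn g
  obtain ⟨y, rfl⟩ := QuotientGroup.mk'_surjective J g
  obtain ⟨x, rfl⟩ := hn
  refine ⟨⟨(y : G) * x * (y : G)⁻¹, hN'.conj_mem _ x.2 _⟩, ?_⟩
  have hz : Subgroup.inclusion h ⟨(y : G) * x * (y : G)⁻¹, hN'.conj_mem _ x.2 _⟩
      = y * Subgroup.inclusion h x * y⁻¹ := by
    ext
    simp
  simp only [MonoidHom.comp_apply, hz, map_mul, map_inv, QuotientGroup.mk'_apply]

lemma qc_mono (hiso : IsoClosed C) (hrad : IsRadicalClass C) {N N' M : Subgroup G}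
    [hN : N.Normal] [hN' : N'.Normal] [hM : M.Normal] (h : N' ≤ N) :
    quotInClass C N M hM → quotInClass C N' M hM := by
  rw [qc_iff, qc_iff]
  intro hC
  set ψ : ↥N' →* ↥N ⧸ (N ⊓ M).subgroupOf N :=
    (QuotientGroup.mk' ((N ⊓ M).subgroupOf N)).comp (Subgroup.inclusion h) with hψ
  have h1 : C ψ.range := hrad.1 _ ψ.range (range_comp_inclusion_normal hN' h _) hC
  have h2 := hiso _ _ (QuotientGroup.quotientKerEquivRange ψ).symm h1
  have hker : ψ.ker = (N' ⊓ M).subgroupOf N' := by rw [hψ, ker_comp_inclusion]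
  exact hiso _ _ (QuotientGroup.quotientMulEquivOfEq hker) h2

lemma qc_enlarge (hiso : IsoClosed C) (hform : IsFormation C) {N M M' : Subgroup G}
    [hN : N.Normal] [hM : M.Normal] [hM' : M'.Normal] (h : M ≤ M') :
    quotInClass C N M hM → quotInClass C N M' hM' := by
  rw [qc_iff, qc_iff]
  intro hC
  have hle : (N ⊓ M).subgroupOf N ≤ (N ⊓ M').subgroupOf N := by
    intro x hx
    simp only [Subgroup.mem_subgroupOf, Subgroup.mem_inf] at hx ⊢
    exact ⟨hx.1, h hx.2⟩
  haveI : (((N ⊓ M').subgroupOf N).map (QuotientGroup.mk' ((N ⊓ M).subgroupOf N))).Normal :=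
    Subgroup.Normal.map inferInstance _ (QuotientGroup.mk'_surjective _)
  have h1 := hform.1 _ (((N ⊓ M').subgroupOf N).map (QuotientGroup.mk' ((N ⊓ M).subgroupOf N))) hC
  exact hiso _ _ (QuotientGroup.quotientQuotientEquivQuotient _ _ hle) h1

lemma qc_inf (hiso : IsoClosed C) (hform : IsFormation C) {N M₁ M₂ : Subgroup G}
    [hN : N.Normal] [hM₁ : M₁.Normal] [hM₂ : M₂.Normal] :
    quotInClass C N M₁ hM₁ → quotInClass C N M₂ hM₂ →
      quotInClass C N (M₁ ⊓ M₂) (Subgroup.normal_inf_normal M₁ M₂) := by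
  rw [qc_iff, qc_iff, qc_iff]
  intro hC₁ hC₂
  set f : ↥N →* (↥N ⧸ (N ⊓ M₁).subgroupOf N) × (↥N ⧸ (N ⊓ M₂).subgroupOf N) :=
    (QuotientGroup.mk' _).prod (QuotientGroup.mk' _) with hf
  have hK : C ↥f.range := by
    refine hform.2 _ _ f.range ?_ ?_ hC₁ hC₂
    · intro a
      obtain ⟨n, rfl⟩ := QuotientGroup.mk'_surjective _ a
      exact ⟨⟨f n, ⟨n, rfl⟩⟩, rfl⟩
    · intro a
      obtain ⟨n, rfl⟩ := QuotientGroup.mk'_surjective _ a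
      exact ⟨⟨f n, ⟨n, rfl⟩⟩, rfl⟩
  have h2 := hiso _ _ (QuotientGroup.quotientKerEquivRange f).symm hK
  have hker : f.ker = (N ⊓ (M₁ ⊓ M₂)).subgroupOf N := by
    rw [hf, MonoidHom.ker_prod, QuotientGroup.ker_mk', QuotientGroup.ker_mk']
    ext x
    simp only [Subgroup.mem_inf, Subgroup.mem_subgroupOf]
    exact ⟨fun hx => ⟨x.2, hx.1.2, hx.2.2⟩, fun hx => ⟨⟨x.2, hx.2.1⟩, x.2, hx.2.2⟩⟩
  exact hiso _ _ (QuotientGroup.quotientMulEquivOfEq hker) h2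

lemma qc_sup (hiso : IsoClosed C) (hrad : IsRadicalClass C) {A B M : Subgroup G}
    [hA : A.Normal] [hB : B.Normal] [hM : M.Normal] :
    quotInClass C A M hM → quotInClass C B M hM →
      quotInClass C (A ⊔ B) M hM := by
  rw [qc_iff, qc_iff, qc_iff]
  intro hCA hCB
  let fA : ↥A →* ↥(A ⊔ B) ⧸ ((A ⊔ B) ⊓ M).subgroupOf (A ⊔ B) :=
    (QuotientGroup.mk' _).comp (Subgroup.inclusion le_sup_left)
  let fB : ↥B →* ↥(A ⊔ B) ⧸ ((A ⊔ B) ⊓ M).subgroupOf (A ⊔ B) :=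
    (QuotientGroup.mk' _).comp (Subgroup.inclusion le_sup_right)
  have hkerA : (A ⊓ M).subgroupOf A = fA.ker := (ker_comp_inclusion le_sup_left).symm
  have hkerB : (B ⊓ M).subgroupOf B = fB.ker := (ker_comp_inclusion le_sup_right).symm
  have hCA2 := hiso _ _ (QuotientGroup.quotientMulEquivOfEq hkerA) hCA
  have hCB2 := hiso _ _ (QuotientGroup.quotientMulEquivOfEq hkerB) hCB
  have hCA' : C fA.range := hiso _ _ (QuotientGroup.quotientKerEquivRange fA) hCA2
  have hCB' : C fB.range := hiso _ _ (QuotientGroup.quotientKerEquivRange fB) hCB2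
  have hsup : fA.range ⊔ fB.range = ⊤ := by
    rw [eq_top_iff]
    intro t _
    obtain ⟨x, rfl⟩ := QuotientGroup.mk'_surjective _ t
    have hx : (x : G) ∈ ((A : Set G) * (B : Set G)) := by
      rw [← Subgroup.mul_normal A B]
      exact x.2
    obtain ⟨a, ha, b, hb, hab⟩ := hx
    have hx' : x = (Subgroup.inclusion (le_sup_left : A ≤ A ⊔ B) ⟨a, ha⟩)
        * (Subgroup.inclusion (le_sup_right : B ≤ A ⊔ B) ⟨b, hb⟩) := by
      ext
      simpa using hab.symm
    rw [hx', map_mul]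
    exact mul_mem (Subgroup.mem_sup_left ⟨⟨a, ha⟩, rfl⟩)
      (Subgroup.mem_sup_right ⟨⟨b, hb⟩, rfl⟩)
  exact hrad.2 _ fA.range fB.range (range_comp_inclusion_normal hA _ _)
    (range_comp_inclusion_normal hB _ _) hsup hCA' hCB'

lemma qc_finset_inf (hiso : IsoClosed C) (hform : IsFormation C) {l : ℕ} {N : Subgroup G}
    [hN : N.Normal] (M : Fin l → Subgroup G) (hM : ∀ i, (M i).Normal)
    (h : ∀ i, quotInClass C N (M i) (hM i)) (s : Finset (Fin l)) (hs : s.Nonempty) :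
    ∃ hn : (s.inf M).Normal, quotInClass C N (s.inf M) hn := by
  induction hs using Finset.Nonempty.cons_induction with
  | singleton a =>
    rw [Finset.inf_singleton]
    exact ⟨hM a, h a⟩
  | cons a s ha hs ih =>
    obtain ⟨hn, hq⟩ := ih
    rw [Finset.inf_cons]
    haveI := hn
    haveI := hM a
    exact ⟨inferInstance, qc_inf C hiso hform (h a) hq⟩

def qc2 (N M : Subgroup G) : Prop := ∃ h : M.Normal, quotInClass C N M h

lemma qc2_mono (hiso : IsoClosed C) (hrad : IsRadicalClass C) {N N' M : Subgroup G}
    (hN : N.Normal) (hN' : N'.Normal) (h : N' ≤ N) : qc2 C N M → qc2 C N' M := by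
  rintro ⟨hm, hq⟩
  haveI := hN; haveI := hN'; haveI := hm
  exact ⟨hm, qc_mono C hiso hrad h hq⟩

lemma qc2_congr (hiso : IsoClosed C) {N M M' : Subgroup G} (hN : N.Normal)
    (hM' : M'.Normal) (h : N ⊓ M = N ⊓ M') : qc2 C N M → qc2 C N M' := by
  rintro ⟨hm, hq⟩
  haveI := hN; haveI := hm; haveI := hM'
  exact ⟨hM', qc_congr C hiso h hq⟩

lemma qc2_enlarge (hiso : IsoClosed C) (hform : IsFormation C) {N M M' : Subgroup G}
    (hN : N.Normal) (hM' : M'.Normal) (h : M ≤ M') : qc2 C N M → qc2 C N M' := by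
  rintro ⟨hm, hq⟩
  haveI := hN; haveI := hm; haveI := hM'
  exact ⟨hM', qc_enlarge C hiso hform h hq⟩

lemma qc2_inf (hiso : IsoClosed C) (hform : IsFormation C) {N M₁ M₂ : Subgroup G}
    (hN : N.Normal) : qc2 C N M₁ → qc2 C N M₂ → qc2 C N (M₁ ⊓ M₂) := by
  rintro ⟨hm₁, hq₁⟩ ⟨hm₂, hq₂⟩
  haveI := hN; haveI := hm₁; haveI := hm₂
  exact ⟨inferInstance, qc_inf C hiso hform hq₁ hq₂⟩

lemma qc2_sup (hiso : IsoClosed C) (hrad : IsRadicalClass C) {A B M : Subgroup G}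
    (hA : A.Normal) (hB : B.Normal) : qc2 C A M → qc2 C B M → qc2 C (A ⊔ B) M := by
  rintro ⟨hm, hq₁⟩ ⟨hm', hq₂⟩
  haveI := hA; haveI := hB; haveI := hm
  exact ⟨hm, qc_sup C hiso hrad hq₁ hq₂⟩

lemma qc2_finset_inf (hiso : IsoClosed C) (hform : IsFormation C) {l : ℕ} {N : Subgroup G}
    (hN : N.Normal) (M : Fin l → Subgroup G)
    (h : ∀ i, qc2 C N (M i)) (s : Finset (Fin l)) (hs : s.Nonempty) :
    qc2 C N (s.inf M) := by
  induction hs using Finset.Nonempty.cons_induction with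
  | singleton a =>
    rw [Finset.inf_singleton]
    exact h a
  | cons a s ha hs ih =>
    rw [Finset.inf_cons]
    exact qc2_inf C hiso hform hN (h a) ih

end Stmt6Aux

set_option maxHeartbeats 1000000 in
open Stmt6Aux Function in
/-- **Extension lemma** (the case of a radical formation). Given a monotone multilinear
predicate `Q` on `l`-tuples of normal subgroups of `G` and a radical formation `𝓒`, there is
a monotone multilinear predicate `P` such that `P(N,…,N)` holds exactly when some normal
subgroup `M ≤ N` satisfies `Q(M,…,M)` and `N/M` lies in `𝓒`. -/
theorem stmt_6 {G : Type u} [Group G] {l : ℕ} (hl : 1 ≤ l)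
    (Q : (Fin l → Subgroup G) → Prop) (hQmono : MonoOnNormal Q)
    (hQmulti : MultiOnNormal Q)
    (C : GroupClass.{u}) (hiso : IsoClosed C) (hrad : IsRadicalClass C)
    (hform : IsFormation C) :
    ∃ P : (Fin l → Subgroup G) → Prop, MonoOnNormal P ∧ MultiOnNormal P ∧
      ∀ N : Subgroup G, N.Normal →
        (P (fun _ => N) ↔
          ∃ (M : Subgroup G) (hM : M.Normal), M ≤ N ∧ Q (fun _ => M) ∧
            quotInClass C N M hM) := by
  refine ⟨fun N => ∃ M : Fin l → Subgroup G,
      (∀ i, (M i).Normal) ∧ (∀ i, M i ≤ N i) ∧ (∀ i, qc2 C (N i) (M i)) ∧ Q M, ?_, ?_, ?_⟩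
  · -- monotone
    rintro N N' hN hN' hle ⟨M, hM, hMle, hqc, hQ⟩
    refine ⟨fun i => M i ⊓ N' i,
      fun i => @Subgroup.normal_inf_normal G _ _ _ (hM i) (hN' i),
      fun i => inf_le_right, fun i => ?_, ?_⟩
    · have h1 : qc2 C (N' i) (M i) :=
        qc2_mono C hiso hrad (hN i) (hN' i) (hle i) (hqc i)
      refine qc2_congr C hiso (hN' i)
        (@Subgroup.normal_inf_normal G _ _ _ (hM i) (hN' i)) ?_ h1
      show N' i ⊓ M i = N' i ⊓ (M i ⊓ N' i)
      rw [inf_comm (M i) (N' i), ← inf_assoc, inf_idem]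
    · exact hQmono M _ hM (fun i => @Subgroup.normal_inf_normal G _ _ _ (hM i) (hN' i))
        (fun i => inf_le_left) hQ
  · -- multilinear
    rintro N i A B hN hA hB ⟨MA, hMA, hMAle, hqcA, hQA⟩ ⟨MB, hMB, hMBle, hqcB, hQB⟩
    have hT : ∀ j, (MA j ⊓ MB j).Normal :=
      fun j => @Subgroup.normal_inf_normal G _ _ _ (hMA j) (hMB j)
    refine ⟨Function.update (fun j => MA j ⊓ MB j) i (MA i ⊔ MB i), fun j => ?_,
      fun j => ?_, fun j => ?_, ?_⟩
    · rcases eq_or_ne j i with rfl | hj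
      · rw [Function.update_self]
        exact @Subgroup.sup_normal G _ _ _ (hMA j) (hMB j)
      · rw [Function.update_of_ne hj]
        exact hT j
    · rcases eq_or_ne j i with rfl | hj
      · rw [Function.update_self, Function.update_self]
        have h1 := hMAle j
        have h2 := hMBle j
        rw [Function.update_self] at h1 h2
        exact sup_le_sup h1 h2
      · rw [Function.update_of_ne hj, Function.update_of_ne hj]
        have h1 := hMAle j
        rw [Function.update_of_ne hj] at h1
        exact inf_le_left.trans h1
    · rcases eq_or_ne j i with rfl | hj
      · have h1 := hqcA j
        have h2 := hqcB j
        rw [Function.update_self] at h1 h2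
        rw [Function.update_self, Function.update_self]
        have h1' : qc2 C A (MA j ⊔ MB j) :=
          qc2_enlarge C hiso hform hA (@Subgroup.sup_normal G _ _ _ (hMA j) (hMB j))
            le_sup_left h1
        have h2' : qc2 C B (MA j ⊔ MB j) :=
          qc2_enlarge C hiso hform hB (@Subgroup.sup_normal G _ _ _ (hMA j) (hMB j))
            le_sup_right h2
        exact qc2_sup C hiso hrad hA hB h1' h2'
      · have h1 := hqcA j
        have h2 := hqcB j
        rw [Function.update_of_ne hj] at h1 h2
        rw [Function.update_of_ne hj, Function.update_of_ne hj]
        exact qc2_inf C hiso hform (hN j) h1 h2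
    · have h1 : Q (Function.update (fun j => MA j ⊓ MB j) i (MA i)) := by
        refine hQmono MA _ hMA (fun j => ?_) (fun j => ?_) hQA
        · rcases eq_or_ne j i with rfl | hj
          · rw [Function.update_self]; exact hMA j
          · rw [Function.update_of_ne hj]; exact hT j
        · rcases eq_or_ne j i with rfl | hj
          · rw [Function.update_self]
          · rw [Function.update_of_ne hj]; exact inf_le_left
      have h2 : Q (Function.update (fun j => MA j ⊓ MB j) i (MB i)) := by
        refine hQmono MB _ hMB (fun j => ?_) (fun j => ?_) hQB
        · rcases eq_or_ne j i with rfl | hj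
          · rw [Function.update_self]; exact hMB j
          · rw [Function.update_of_ne hj]; exact hT j
        · rcases eq_or_ne j i with rfl | hj
          · rw [Function.update_self]
          · rw [Function.update_of_ne hj]; exact inf_le_right
      exact hQmulti _ i (MA i) (MB i) hT (hMA i) (hMB i) h1 h2
  · -- diagonal characterization
    intro N hN
    constructor
    · rintro ⟨M, hM, hle, hqc, hQ⟩
      have huniv : (Finset.univ : Finset (Fin l)).Nonempty :=
        ⟨⟨0, hl⟩, Finset.mem_univ _⟩
      obtain ⟨hn, hq⟩ := qc2_finset_inf C hiso hform hN M hqc Finset.univ huniv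
      refine ⟨Finset.univ.inf M, hn,
        (Finset.inf_le (Finset.mem_univ ⟨0, hl⟩)).trans (hle _), ?_, hq⟩
      exact hQmono M _ hM (fun _ => hn) (fun i => Finset.inf_le (Finset.mem_univ i)) hQ
    · rintro ⟨M, hM, hle, hQ, hqc⟩
      exact ⟨fun _ => M, fun _ => hM, fun _ => hle, fun _ => ⟨hM, hqc⟩, hQ⟩
end

section
/- Let G be a group, let t ≥ 1 be an integer, and let N be a normal subgroup of G of finite index. Then there exists a characteristic subgroup H of G of finite index such that log₂[G : H] ≤ f^{t−1}(log₂[G : N]) and such that, for every outer commutator word w of weight k with k ≤ t, if w(N,…,N) is the trivial subgroup then w(H,…,H) is the trivial subgroup. -/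
/-- Full binary trees encoding outer commutator words. -/
inductive CTree : Type
  | leaf : CTree
  | node : CTree → CTree → CTree

/-- The weight (number of leaves) of an outer commutator word. -/
def CTree.weight : CTree → ℕ
  | .leaf => 1
  | .node a b => a.weight + b.weight

/-- The verbal subgroup `w_T(N₁,…,N_t)` associated with an outer commutator word `T`. -/
def CTree.sub {G : Type*} [Group G] :
    (T : CTree) → (Fin T.weight → Subgroup G) → Subgroup G
  | .leaf, N => N ⟨0, Nat.one_pos⟩
  | .node a b, N =>
      ⁅a.sub (fun i => N (Fin.castAdd b.weight i)),
        b.sub (fun i => N (Fin.natAdd a.weight i))⁆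

namespace KM

variable {G : Type*} [Group G]

theorem normal_iSup {ι : Sort*} {s : ι → Subgroup G} (h : ∀ i, (s i).Normal) :
    (⨆ i, s i).Normal := by
  constructor
  intro x hx g
  refine Subgroup.iSup_induction s (C := fun y => g * y * g⁻¹ ∈ ⨆ i, s i) hx ?_ ?_ ?_
  · intro i y hy
    exact Subgroup.mem_iSup_of_mem i ((h i).conj_mem y hy g)
  · simpa using one_mem (⨆ i, s i)
  · intro y z hy hz
    have hyz : g * (y * z) * g⁻¹ = (g * y * g⁻¹) * (g * z * g⁻¹) := by group
    rw [hyz]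
    exact mul_mem hy hz

open scoped commutatorElement in
theorem commutator_iSup_left {ι : Sort*} {s : ι → Subgroup G} (B : Subgroup G)
    (hs : ∀ i, (s i).Normal) (hB : B.Normal) :
    ⁅(⨆ i, s i), B⁆ ≤ ⨆ i, ⁅s i, B⁆ := by
  have hR : (⨆ i, ⁅s i, B⁆).Normal := normal_iSup fun i =>
    @Subgroup.commutator_normal _ _ (s i) B (hs i) hB
  rw [Subgroup.commutator_le]
  intro g hg b hb
  revert b
  refine Subgroup.iSup_induction s (C := fun y => ∀ b ∈ B, ⁅y, b⁆ ∈ ⨆ i, ⁅s i, B⁆) hg ?_ ?_ ?_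
  · intro i y hy b hb
    exact Subgroup.mem_iSup_of_mem i (Subgroup.commutator_mem_commutator hy hb)
  · intro b hb
    simpa using one_mem (⨆ i, ⁅s i, B⁆)
  · intro y z hy hz b hb
    have key : ⁅y * z, b⁆ = y * ⁅z, b⁆ * y⁻¹ * ⁅y, b⁆ := by
      simp only [commutatorElement_def]
      group
    rw [key]
    exact mul_mem (hR.conj_mem _ (hz b hb) y) (hy b hb)

theorem commutator_iSup_right {ι : Sort*} {s : ι → Subgroup G} (A : Subgroup G)
    (hs : ∀ i, (s i).Normal) (hA : A.Normal) :
    ⁅A, (⨆ i, s i)⁆ ≤ ⨆ i, ⁅A, s i⁆ := by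
  rw [Subgroup.commutator_comm]
  refine le_trans (commutator_iSup_left A hs hA) ?_
  exact iSup_mono fun i => le_of_eq (Subgroup.commutator_comm _ _)

/-- Join of the values of `T.sub` over all assignments with at most `r` slots `Q`,
remaining slots `X`. -/
def mix (X Q : Subgroup G) : CTree → ℕ → Subgroup G
  | .leaf, 0 => X
  | .leaf, _ + 1 => Q
  | .node a b, r => ⨆ p : Fin (r + 1), ⁅mix X Q a p.1, mix X Q b (r - p.1)⁆

variable {X Q X' Q' : Subgroup G}

theorem sub_const_mono {A B : Subgroup G} (h : A ≤ B) (T : CTree) :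
    T.sub (fun _ => A) ≤ T.sub (fun _ => B) := by
  induction T with
  | leaf => exact h
  | node a b iha ihb => exact Subgroup.commutator_mono iha ihb

theorem sub_const_normal {A : Subgroup G} (hA : A.Normal) (T : CTree) :
    (T.sub (fun _ => A)).Normal := by
  induction T with
  | leaf => exact hA
  | node a b iha ihb => exact @Subgroup.commutator_normal _ _ _ _ iha ihb

theorem map_sub_const {H : Type*} [Group H] (f : G →* H) {A : Subgroup G} (T : CTree) :
    Subgroup.map f (T.sub (fun _ => A)) = T.sub (fun _ => Subgroup.map f A) := by
  induction T with
  | leaf => rfl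
  | node a b iha ihb =>
    show Subgroup.map f ⁅_, _⁆ = ⁅_, _⁆
    rw [Subgroup.map_commutator, iha, ihb]

theorem mix_normal (hX : X.Normal) (hQ : Q.Normal) (T : CTree) (r : ℕ) :
    (mix X Q T r).Normal := by
  induction T generalizing r with
  | leaf =>
    cases r with
    | zero => exact hX
    | succ n => exact hQ
  | node a b iha ihb =>
    exact normal_iSup fun p => @Subgroup.commutator_normal _ _ _ _ (iha _) (ihb _)

theorem le_mix_node {a b : CTree} {p q : ℕ} :
    ⁅mix X Q a p, mix X Q b q⁆ ≤ mix X Q (.node a b) (p + q) := by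
  have h : p < p + q + 1 := by omega
  have h2 : p + q - p = q := by omega
  calc ⁅mix X Q a p, mix X Q b q⁆
      = ⁅mix X Q a (⟨p, h⟩ : Fin (p + q + 1)).1,
          mix X Q b (p + q - (⟨p, h⟩ : Fin (p + q + 1)).1)⁆ := by rw [h2]
    _ ≤ _ := le_iSup (fun p' : Fin (p + q + 1) =>
        ⁅mix X Q a p'.1, mix X Q b (p + q - p'.1)⁆) ⟨p, h⟩

theorem mix_mono_args (hX : X ≤ X') (hQ : Q ≤ Q') (T : CTree) (r : ℕ) :
    mix X Q T r ≤ mix X' Q' T r := by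
  induction T generalizing r with
  | leaf =>
    cases r with
    | zero => exact hX
    | succ n => exact hQ
  | node a b iha ihb =>
    refine iSup_le fun p => le_iSup_of_le p ?_
    exact Subgroup.commutator_mono (iha _) (ihb _)

theorem mix_mono_r (hXQ : X ≤ Q) {r r' : ℕ} (h : r ≤ r') (T : CTree) :
    mix X Q T r ≤ mix X Q T r' := by
  induction T generalizing r r' with
  | leaf =>
    cases r with
    | zero =>
      cases r' with
      | zero => exact le_rfl
      | succ n => exact hXQ
    | succ n =>
      cases r' with
      | zero => omega
      | succ m => exact le_rfl
  | node a b iha ihb =>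
    refine iSup_le fun p => ?_
    refine le_trans (Subgroup.commutator_mono le_rfl
      (ihb (show r - p.1 ≤ r' - p.1 by omega))) ?_
    have key := le_mix_node (X := X) (Q := Q) (a := a) (b := b) (p := p.1) (q := r' - p.1)
    have hpq : p.1 + (r' - p.1) = r' := by omega
    rwa [hpq] at key

theorem mix_zero (T : CTree) : mix X Q T 0 = T.sub (fun _ => X) := by
  induction T with
  | leaf => rfl
  | node a b iha ihb =>
    show (⨆ p : Fin 1, ⁅mix X Q a p.1, mix X Q b (0 - p.1)⁆) = _
    rw [iSup_unique]
    show ⁅mix X Q a 0, mix X Q b 0⁆ = _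
    rw [iha, ihb]
    rfl

theorem sub_const_le_mix (hXQ : X ≤ Q) {T : CTree} {r : ℕ} (h : T.weight ≤ r) :
    T.sub (fun _ => Q) ≤ mix X Q T r := by
  induction T generalizing r with
  | leaf =>
    cases r with
    | zero => exact absurd h (by simp [CTree.weight])
    | succ n => exact le_rfl
  | node a b iha ihb =>
    show ⁅_, _⁆ ≤ _
    have ha := iha (le_refl a.weight)
    have hb := ihb (le_refl b.weight)
    refine le_trans (Subgroup.commutator_mono ha hb) ?_
    refine le_trans le_mix_node (mix_mono_r hXQ ?_ _)
    exact h

theorem map_mix (φ : G ≃* G) (T : CTree) (r : ℕ) :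
    Subgroup.map φ.toMonoidHom (mix X Q T r)
      = mix (Subgroup.map φ.toMonoidHom X) (Subgroup.map φ.toMonoidHom Q) T r := by
  induction T generalizing r with
  | leaf => cases r with
    | zero => rfl
    | succ n => rfl
  | node a b iha ihb =>
    show Subgroup.map _ (⨆ p : Fin (r + 1), _) = ⨆ p : Fin (r + 1), _
    rw [Subgroup.map_iSup]
    exact iSup_congr fun p => by rw [Subgroup.map_commutator, iha, ihb]

/-- The key expansion estimate. -/
theorem mix_le_iSup_map {ι : Type*} [Nonempty ι] (f : ι → G ≃* G)
    (hX : X.Normal) (hQ : Q.Normal) (hX' : X'.Normal) (hQ' : Q'.Normal)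
    (hXQ : X ≤ Q)
    (hQfix : ∀ i, Subgroup.map (f i).toMonoidHom Q = Q)
    (hX'le : ∀ i, X' ≤ Subgroup.map (f i).toMonoidHom X)
    (hQ'le : Q' ≤ ⨆ i, Subgroup.map (f i).toMonoidHom X)
    (T : CTree) (r : ℕ) :
    mix X' Q' T r ≤ ⨆ i, Subgroup.map (f i).toMonoidHom (mix X Q T (r - 1)) := by
  have hmapX : ∀ i, (Subgroup.map (f i).toMonoidHom X).Normal := fun i =>
    hX.map _ (MulEquiv.surjective (f i))
  have hQ'Q : Q' ≤ Q := by
    refine le_trans hQ'le (iSup_le fun i => ?_)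
    rw [← hQfix i]
    exact Subgroup.map_mono hXQ
  have hmapmix : ∀ i (S : CTree) (k : ℕ),
      (Subgroup.map (f i).toMonoidHom (mix X Q S k)).Normal := fun i S k =>
    (mix_normal hX hQ S k).map _ (MulEquiv.surjective (f i))
  induction T generalizing r with
  | leaf =>
    cases r with
    | zero => exact le_iSup_of_le (Classical.arbitrary ι) (hX'le _)
    | succ n =>
      refine le_trans hQ'le (iSup_mono fun i => Subgroup.map_mono ?_)
      show X ≤ mix X Q .leaf (n + 1 - 1)
      cases n with
      | zero => exact le_rfl
      | succ m => exact hXQ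
  | node a b iha ihb =>
    refine iSup_le fun p => ?_
    rcases hc : p.1 with _ | p'
    · -- p = 0 : expand the right factor, bound the left factor uniformly
      have hA : ∀ i, mix X' Q' a 0 ≤ Subgroup.map (f i).toMonoidHom (mix X Q a 0) := by
        intro i
        rw [mix_zero, mix_zero, map_sub_const]
        exact sub_const_mono (hX'le i) a
      have hB := ihb (r - 0)
      refine le_trans (Subgroup.commutator_mono le_rfl hB) ?_
      refine le_trans (commutator_iSup_right _ (fun i => hmapmix i b (r - 0 - 1))
        (mix_normal hX' hQ' a 0)) ?_
      refine iSup_mono fun i => ?_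
      refine le_trans (Subgroup.commutator_mono (hA i) le_rfl) ?_
      rw [← Subgroup.map_commutator]
      refine Subgroup.map_mono ?_
      refine le_trans le_mix_node (mix_mono_r hXQ (by omega) _)
    · -- p = p' + 1 : expand the left factor
      have hA := iha (p' + 1)
      have hB : ∀ i, mix X' Q' b (r - (p' + 1))
          ≤ Subgroup.map (f i).toMonoidHom (mix X Q b (r - (p' + 1))) := by
        intro i
        rw [map_mix]
        exact mix_mono_args (hX'le i) (le_trans hQ'Q (le_of_eq (hQfix i).symm)) b _
      have hple : p' + 1 ≤ r := by
        have h2 := p.isLt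
        omega
      refine le_trans (Subgroup.commutator_mono hA le_rfl) ?_
      refine le_trans (commutator_iSup_left _ (fun i => hmapmix i a (p' + 1 - 1))
        (mix_normal hX' hQ' b (r - (p' + 1)))) ?_
      refine iSup_mono fun i => ?_
      refine le_trans (Subgroup.commutator_mono le_rfl (hB i)) ?_
      rw [← Subgroup.map_commutator]
      refine Subgroup.map_mono ?_
      refine le_trans le_mix_node (mix_mono_r hXQ (by omega) _)


/-! ### Automorphic closure -/

/-- The characteristic closure: join of all automorphic images. -/
def autJoin (X : Subgroup G) : Subgroup G := ⨆ φ : G ≃* G, Subgroup.map φ.toMonoidHom X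

theorem le_autJoin (X : Subgroup G) : X ≤ autJoin X := by
  refine le_iSup_of_le (MulEquiv.refl G) ?_
  intro x hx
  exact ⟨x, hx, rfl⟩

theorem map_map_equiv (φ ψ : G ≃* G) (X : Subgroup G) :
    Subgroup.map ψ.toMonoidHom (Subgroup.map φ.toMonoidHom X)
      = Subgroup.map (φ.trans ψ).toMonoidHom X := by
  rw [Subgroup.map_map]
  rfl

theorem map_autJoin (ψ : G ≃* G) (X : Subgroup G) :
    Subgroup.map ψ.toMonoidHom (autJoin X) = autJoin X := by
  unfold autJoin
  rw [Subgroup.map_iSup]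
  apply le_antisymm
  · refine iSup_le fun φ => ?_
    rw [map_map_equiv φ ψ X]
    exact le_iSup (fun χ : G ≃* G => Subgroup.map χ.toMonoidHom X) (φ.trans ψ)
  · refine iSup_le fun φ => ?_
    have h1 : Subgroup.map ψ.toMonoidHom (Subgroup.map (φ.trans ψ.symm).toMonoidHom X)
        = Subgroup.map φ.toMonoidHom X := by
      rw [map_map_equiv]
      congr 1
      ext x
      simp
    rw [← h1]
    exact le_iSup (fun χ : G ≃* G =>
      Subgroup.map ψ.toMonoidHom (Subgroup.map χ.toMonoidHom X)) (φ.trans ψ.symm)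

theorem autJoin_characteristic (X : Subgroup G) : (autJoin X).Characteristic :=
  Subgroup.characteristic_iff_map_eq.mpr fun φ => map_autJoin φ X


/-! ### Finite subfamilies of automorphic images -/

noncomputable local instance : DecidableEq (G ≃* G) := Classical.decEq _

/-- Join of images of `X` under a finite set of automorphisms. -/
def jf (X : Subgroup G) (F : Finset (G ≃* G)) : Subgroup G :=
  ⨆ φ ∈ F, Subgroup.map φ.toMonoidHom X

theorem jf_mono {X : Subgroup G} {F F' : Finset (G ≃* G)} (h : F ⊆ F') :
    jf X F ≤ jf X F' :=
  iSup₂_le fun φ hφ => le_iSup₂_of_le φ (h hφ) le_rfl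

theorem jf_le_autJoin (X : Subgroup G) (F : Finset (G ≃* G)) : jf X F ≤ autJoin X :=
  iSup₂_le fun φ _ => le_iSup (fun χ : G ≃* G => Subgroup.map χ.toMonoidHom X) φ

theorem map_le_jf {X : Subgroup G} {F : Finset (G ≃* G)} {φ : G ≃* G} (h : φ ∈ F) :
    Subgroup.map φ.toMonoidHom X ≤ jf X F :=
  le_iSup₂_of_le φ h le_rfl

theorem jf_insert (X : Subgroup G) (F : Finset (G ≃* G)) (φ : G ≃* G) :
    jf X (insert φ F) = Subgroup.map φ.toMonoidHom X ⊔ jf X F := by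
  unfold jf
  rw [Finset.iSup_insert]

theorem jf_singleton (X : Subgroup G) (φ : G ≃* G) :
    jf X ({φ} : Finset (G ≃* G)) = Subgroup.map φ.toMonoidHom X := by
  unfold jf
  rw [Finset.iSup_singleton]

theorem index_map_equiv (φ : G ≃* G) (X : Subgroup G) :
    (Subgroup.map φ.toMonoidHom X).index = X.index := by
  have hk : φ.toMonoidHom.ker = ⊥ := (MonoidHom.ker_eq_bot_iff _).mpr φ.injective
  exact Subgroup.index_map_eq X φ.surjective (hk ▸ bot_le)

theorem jf_finiteIndex {X : Subgroup G} (hXf : X.FiniteIndex) {F : Finset (G ≃* G)}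
    (hne : F.Nonempty) : (jf X F).FiniteIndex := by
  obtain ⟨φ, hφ⟩ := hne
  have : (Subgroup.map φ.toMonoidHom X).FiniteIndex :=
    ⟨by rw [index_map_equiv]; exact hXf.index_ne_zero⟩
  exact @Subgroup.finiteIndex_of_le _ _ _ _ this (map_le_jf hφ)

theorem eq_of_le_of_index_eq' {H K : Subgroup G} (h : H ≤ K) (hidx : K.index = H.index)
    (hK : K.index ≠ 0) : H = K := by
  refine le_antisymm h ?_
  have hm := Subgroup.relIndex_mul_index h
  rw [← hidx] at hm
  have h1 : H.relIndex K = 1 := by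
    have := Nat.eq_of_mul_eq_mul_right (Nat.pos_of_ne_zero hK) (hm.trans (one_mul K.index).symm)
    exact this
  exact Subgroup.relIndex_eq_one.mp h1

theorem double_le {K L : Subgroup G} (h : K < L) (hK : K.index ≠ 0) :
    2 * L.index ≤ K.index := by
  have hm := Subgroup.relIndex_mul_index h.le
  have hrel1 : K.relIndex L ≠ 1 := fun h1 => h.not_ge (Subgroup.relIndex_eq_one.mp h1)
  have hrel0 : K.relIndex L ≠ 0 := by
    intro h0
    rw [h0, zero_mul] at hm
    exact hK hm.symm
  have h2 : 2 ≤ K.relIndex L := by omega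
  calc 2 * L.index ≤ K.relIndex L * L.index := Nat.mul_le_mul_right _ h2
    _ = K.index := hm

/-- A finite set of automorphisms realizing the automorphic closure, which is
irredundant. -/
theorem exists_good_finset (X : Subgroup G) (hXf : X.FiniteIndex) :
    ∃ F : Finset (G ≃* G), F.Nonempty ∧ jf X F = autJoin X ∧
      (∀ φ ∈ F, (F.erase φ).Nonempty →
        ¬ Subgroup.map φ.toMonoidHom X ≤ jf X (F.erase φ)) := by
  classical
  have hex : ∃ n, ∃ F : Finset (G ≃* G), F.Nonempty ∧ (jf X F).index = n :=
    ⟨_, {MulEquiv.refl G}, Finset.singleton_nonempty _, rfl⟩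
  obtain ⟨F₀, hF₀ne, hF₀idx⟩ := Nat.find_spec hex
  have hF₀fin : (jf X F₀).FiniteIndex := jf_finiteIndex hXf hF₀ne
  -- the minimal-index join is the automorphic closure
  have hclos : jf X F₀ = autJoin X := by
    refine le_antisymm (jf_le_autJoin X F₀) (iSup_le fun ψ => ?_)
    set F' : Finset (G ≃* G) := insert ψ F₀ with hF'
    have hsub : F₀ ⊆ F' := Finset.subset_insert ψ F₀
    have hle : jf X F₀ ≤ jf X F' := jf_mono hsub
    have hmin : Nat.find hex ≤ (jf X F').index :=
      Nat.find_min' hex ⟨F', Finset.insert_nonempty ψ F₀, rfl⟩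
    have hanti : (jf X F').index ≤ (jf X F₀).index :=
      Nat.le_of_dvd (Nat.pos_of_ne_zero hF₀fin.index_ne_zero) (Subgroup.index_dvd_of_le hle)
    have h0 : (jf X F₀).index ≠ 0 := hF₀fin.index_ne_zero
    have heq : jf X F₀ = jf X F' := by
      refine eq_of_le_of_index_eq' hle ?_ ?_
      · omega
      · omega
    have : Subgroup.map ψ.toMonoidHom X ≤ jf X F' := map_le_jf (Finset.mem_insert_self ψ F₀)
    rw [← heq] at this
    exact this
  -- choose one of minimal cardinality
  have hex2 : ∃ n, ∃ F : Finset (G ≃* G),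
      (F.Nonempty ∧ jf X F = autJoin X) ∧ F.card = n :=
    ⟨_, F₀, ⟨hF₀ne, hclos⟩, rfl⟩
  obtain ⟨F₁, ⟨hF₁ne, hF₁eq⟩, hF₁card⟩ := Nat.find_spec hex2
  refine ⟨F₁, hF₁ne, hF₁eq, ?_⟩
  intro φ hφ hne hcontra
  have herase : jf X (F₁.erase φ) = jf X F₁ := by
    refine le_antisymm (jf_mono (Finset.erase_subset φ F₁)) ?_
    conv_lhs => rw [← Finset.insert_erase hφ]
    rw [jf_insert]
    exact sup_le hcontra le_rfl
  have hlt : (F₁.erase φ).card < Nat.find hex2 := by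
    rw [← hF₁card]
    have := Finset.card_erase_of_mem hφ
    have hpos : 0 < F₁.card := Finset.card_pos.mpr ⟨φ, hφ⟩
    omega
  exact Nat.find_min hex2 hlt ⟨F₁.erase φ, ⟨hne, herase.trans hF₁eq⟩, rfl⟩

/-- Chain bound: an irredundant family has cardinality bounded via the index. -/
theorem jf_chain_bound (X : Subgroup G) (hXf : X.FiniteIndex) :
    ∀ F : Finset (G ≃* G), F.Nonempty →
      (∀ φ ∈ F, (F.erase φ).Nonempty →
        ¬ Subgroup.map φ.toMonoidHom X ≤ jf X (F.erase φ)) →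
      2 ^ (F.card - 1) * (jf X F).index ≤ X.index := by
  intro F
  induction F using Finset.strongInduction with
  | _ F ih =>
    intro hne hP
    obtain ⟨φ, hφ⟩ := hne
    by_cases hcard : F.card = 1
    · obtain ⟨a, ha⟩ := Finset.card_eq_one.mp hcard
      have hfa : φ = a := by
        rw [ha] at hφ
        exact Finset.mem_singleton.mp hφ
      subst hfa
      rw [ha, jf_singleton, index_map_equiv]
      simp
    · have hpos : 0 < F.card := Finset.card_pos.mpr ⟨φ, hφ⟩
      have hcard2 : 2 ≤ F.card := by omega
      set F' := F.erase φ with hF'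
      have hne' : F'.Nonempty := by
        rw [← Finset.card_pos, hF', Finset.card_erase_of_mem hφ]
        omega
      have hP' : ∀ ψ ∈ F', (F'.erase ψ).Nonempty →
          ¬ Subgroup.map ψ.toMonoidHom X ≤ jf X (F'.erase ψ) := by
        intro ψ hψ hne'' hle
        have hψF : ψ ∈ F := Finset.mem_of_mem_erase hψ
        have hsub : F'.erase ψ ⊆ F.erase ψ :=
          Finset.erase_subset_erase ψ (Finset.erase_subset φ F)
        have hne3 : (F.erase ψ).Nonempty := hne''.mono hsub
        exact hP ψ hψF hne3 (le_trans hle (jf_mono hsub))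
      have hstrict : jf X F' < jf X F := by
        refine lt_of_le_of_ne (jf_mono (Finset.erase_subset φ F)) (fun heq => ?_)
        exact hP φ hφ hne' (heq ▸ map_le_jf hφ)
      have hfin' : (jf X F').FiniteIndex := jf_finiteIndex hXf hne'
      have hdouble : 2 * (jf X F).index ≤ (jf X F').index :=
        double_le hstrict hfin'.index_ne_zero
      have hIH := ih F' (Finset.erase_ssubset hφ) hne' hP'
      have hcards : F.card - 1 = F'.card := by
        rw [hF', Finset.card_erase_of_mem hφ]
      have hcard' : 1 ≤ F'.card := hne'.card_pos
      calc 2 ^ (F.card - 1) * (jf X F).index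
          = 2 ^ (F'.card - 1) * (2 * (jf X F).index) := by
            have hpow : (2 : ℕ) ^ F'.card = 2 ^ (F'.card - 1) * 2 := by
              rw [← pow_succ]
              congr 1
              omega
            rw [hcards, hpow]
            ring
        _ ≤ 2 ^ (F'.card - 1) * (jf X F').index := Nat.mul_le_mul_left _ hdouble
        _ ≤ X.index := hIH


/-! ### Intersections of finitely many automorphic images -/

theorem inf_normal {A B : Subgroup G} (hA : A.Normal) (hB : B.Normal) : (A ⊓ B).Normal := by
  constructor
  intro x hx g
  exact ⟨hA.conj_mem x hx.1 g, hB.conj_mem x hx.2 g⟩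

theorem finset_inf_normal {ι : Type*} (F : Finset ι) (f : ι → Subgroup G)
    (hf : ∀ i ∈ F, (f i).Normal) : (F.inf f).Normal := by
  classical
  induction F using Finset.induction_on with
  | empty =>
    rw [Finset.inf_empty]
    exact inferInstance
  | insert _ _ ha ih =>
    rw [Finset.inf_insert]
    exact inf_normal (hf _ (Finset.mem_insert_self _ _))
      (ih fun i hi => hf i (Finset.mem_insert_of_mem hi))

theorem finset_inf_index_le {ι : Type*} (F : Finset ι) (f : ι → Subgroup G) :
    (F.inf f).index ≤ ∏ i ∈ F, (f i).index := by
  classical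
  induction F using Finset.induction_on with
  | empty =>
    rw [Finset.inf_empty, Finset.prod_empty, Subgroup.index_top]
  | @insert a s ha ih =>
    rw [Finset.inf_insert, Finset.prod_insert ha]
    exact le_trans Subgroup.index_inf_le (Nat.mul_le_mul_left _ ih)

/-! ### The upgrade step -/

theorem upgrade {t : ℕ} {N X Q : Subgroup G} {r : ℕ}
    (hXn : X.Normal) (hXf : X.FiniteIndex) (hQc : Q.Characteristic) (hQn : Q.Normal)
    (hXQ : X ≤ Q)
    (hA : ∀ T : CTree, T.weight ≤ t → T.sub (fun _ => N) = ⊥ → mix X Q T r = ⊥) :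
    ∃ X' Q' : Subgroup G, ∃ s : ℕ,
      X'.Normal ∧ X'.FiniteIndex ∧ Q'.Characteristic ∧ Q'.Normal ∧
      X' ≤ Q' ∧ X ≤ Q' ∧
      1 ≤ s ∧ 2 ^ (s - 1) ≤ X.index ∧ X'.index ≤ X.index ^ s ∧
      (∀ T : CTree, T.weight ≤ t → T.sub (fun _ => N) = ⊥ → mix X' Q' T (r + 1) = ⊥) := by
  classical
  obtain ⟨F, hne, hjf, hP⟩ := exists_good_finset X hXf
  obtain ⟨φ₀, hφ₀⟩ := hne
  have hmapn : ∀ φ : G ≃* G, (Subgroup.map φ.toMonoidHom X).Normal := fun φ =>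
    hXn.map _ φ.surjective
  have hmapfin : ∀ φ : G ≃* G, (Subgroup.map φ.toMonoidHom X).FiniteIndex := fun φ =>
    ⟨by rw [index_map_equiv]; exact hXf.index_ne_zero⟩
  have hX'n : (F.inf (fun φ : G ≃* G => Subgroup.map φ.toMonoidHom X)).Normal :=
    finset_inf_normal F _ (fun i _ => hmapn i)
  have hX'f : (F.inf (fun φ : G ≃* G => Subgroup.map φ.toMonoidHom X)).FiniteIndex := by
    rw [Finset.inf_eq_iInf]
    exact Subgroup.finiteIndex_iInf' _ (fun i _ => hmapfin i)
  have hQ'c : (autJoin X).Characteristic := autJoin_characteristic X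
  have hQ'n : (autJoin X).Normal := normal_iSup (fun φ => hmapn φ)
  have hX'Q' : F.inf (fun φ : G ≃* G => Subgroup.map φ.toMonoidHom X) ≤ autJoin X := by
    refine le_trans (Finset.inf_le hφ₀) ?_
    rw [← hjf]
    exact map_le_jf hφ₀
  have hXQ' : X ≤ autJoin X := le_autJoin X
  have hchain := jf_chain_bound X hXf F ⟨φ₀, hφ₀⟩ hP
  have hjffin : (jf X F).FiniteIndex := jf_finiteIndex hXf ⟨φ₀, hφ₀⟩
  have h2s : 2 ^ (F.card - 1) ≤ X.index := by
    have hpos : 0 < (jf X F).index := Nat.pos_of_ne_zero hjffin.index_ne_zero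
    calc 2 ^ (F.card - 1) ≤ 2 ^ (F.card - 1) * (jf X F).index :=
          Nat.le_mul_of_pos_right _ hpos
      _ ≤ X.index := hchain
  have hidx : (F.inf (fun φ : G ≃* G => Subgroup.map φ.toMonoidHom X)).index
      ≤ X.index ^ F.card := by
    refine le_trans (finset_inf_index_le F _) ?_
    rw [show (∏ φ ∈ F, (Subgroup.map φ.toMonoidHom X).index) = X.index ^ F.card from ?_]
    rw [← Finset.prod_const]
    exact Finset.prod_congr rfl fun φ _ => index_map_equiv φ X
  refine ⟨F.inf (fun φ : G ≃* G => Subgroup.map φ.toMonoidHom X), autJoin X, F.card,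
    hX'n, hX'f, hQ'c, hQ'n, hX'Q', hXQ',
    Finset.card_pos.mpr ⟨φ₀, hφ₀⟩, h2s, hidx, ?_⟩
  intro T hw hsub
  haveI : Nonempty {φ // φ ∈ F} := ⟨⟨φ₀, hφ₀⟩⟩
  have hQfix : ∀ i : {φ // φ ∈ F}, Subgroup.map (i.1).toMonoidHom Q = Q := fun i =>
    Subgroup.characteristic_iff_map_eq.mp hQc i.1
  have hX'le : ∀ i : {φ // φ ∈ F},
      F.inf (fun φ : G ≃* G => Subgroup.map φ.toMonoidHom X)
        ≤ Subgroup.map i.1.toMonoidHom X := fun i => Finset.inf_le i.2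
  have hQ'le : autJoin X ≤ ⨆ i : {φ // φ ∈ F}, Subgroup.map i.1.toMonoidHom X := by
    rw [← hjf]
    exact iSup₂_le fun φ hφ =>
      le_iSup (fun i : {φ // φ ∈ F} => Subgroup.map i.1.toMonoidHom X) ⟨φ, hφ⟩
  have key := mix_le_iSup_map (ι := {φ // φ ∈ F}) (fun i => i.1)
    hXn hQn hX'n hQ'n hXQ hQfix hX'le hQ'le T (r + 1)
  rw [Nat.add_sub_cancel, hA T hw hsub] at key
  refine le_bot_iff.mp (le_trans key ?_)
  refine iSup_le fun i => ?_
  rw [Subgroup.map_bot]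

/-! ### Real-number estimates -/

theorem real_step {n m : ℕ} {s : ℕ} (hn : n ≠ 0) (hm : m ≠ 0)
    (h1 : 1 ≤ s) (h2 : 2 ^ (s - 1) ≤ n) (h3 : m ≤ n ^ s) :
    Real.logb 2 (m : ℝ) ≤ Real.logb 2 (n : ℝ) * (Real.logb 2 (n : ℝ) + 1) := by
  have hn1 : (1 : ℝ) ≤ (n : ℝ) := by exact_mod_cast Nat.one_le_iff_ne_zero.mpr hn
  have hz : 0 ≤ Real.logb 2 (n : ℝ) := Real.logb_nonneg one_lt_two hn1
  have hmpos : (0 : ℝ) < (m : ℝ) := by exact_mod_cast Nat.pos_of_ne_zero hm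
  have step1 : Real.logb 2 (m : ℝ) ≤ (s : ℝ) * Real.logb 2 (n : ℝ) := by
    have h3' : (m : ℝ) ≤ (n : ℝ) ^ s := by exact_mod_cast h3
    have := Real.logb_le_logb_of_le one_lt_two hmpos h3'
    rwa [Real.logb_pow] at this
  have step2 : (s : ℝ) ≤ Real.logb 2 (n : ℝ) + 1 := by
    have h2' : (2 : ℝ) ^ (s - 1) ≤ (n : ℝ) := by exact_mod_cast h2
    have hpos : (0 : ℝ) < (2 : ℝ) ^ (s - 1) := by positivity
    have := Real.logb_le_logb_of_le one_lt_two hpos h2'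
    rw [Real.logb_pow, Real.logb_self_eq_one one_lt_two] at this
    have hcast2 : ((s - 1 : ℕ) : ℝ) = (s : ℝ) - 1 := by
      push_cast [h1]
      ring
    rw [hcast2, mul_one] at this
    linarith
  calc Real.logb 2 (m : ℝ) ≤ (s : ℝ) * Real.logb 2 (n : ℝ) := step1
    _ ≤ (Real.logb 2 (n : ℝ) + 1) * Real.logb 2 (n : ℝ) :=
        mul_le_mul_of_nonneg_right step2 hz
    _ = Real.logb 2 (n : ℝ) * (Real.logb 2 (n : ℝ) + 1) := by ring

theorem fiter_nonneg_mono (k : ℕ) {a b : ℝ} (ha : 0 ≤ a) (hab : a ≤ b) :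
    0 ≤ (fun x : ℝ => x * (x + 1))^[k] a ∧
      (fun x : ℝ => x * (x + 1))^[k] a ≤ (fun x : ℝ => x * (x + 1))^[k] b := by
  induction k generalizing a b with
  | zero => simpa using ⟨ha, hab⟩
  | succ k ih =>
    simp only [Function.iterate_succ_apply]
    exact ih (by nlinarith) (by nlinarith)


end KM

/-- **Khukhro–Makarenko theorem with estimate.** For every normal subgroup `N` of finite
index in `G` and every `t ≥ 1` there is a characteristic subgroup `H` of finite index with
`log₂[G:H] ≤ f^{t-1}(log₂[G:N])` (where `f(x) = x(x+1)`) such that `H` satisfies every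
outer commutator identity of weight at most `t` that `N` satisfies. -/
theorem stmt_9 {G : Type*} [Group G] {t : ℕ} (ht : 1 ≤ t)
    (N : Subgroup G) (hN : N.Normal) (hNfin : N.FiniteIndex) :
    ∃ H : Subgroup G, H.Characteristic ∧ H.FiniteIndex ∧
      Real.logb 2 (H.index : ℝ) ≤
        (fun x : ℝ => x * (x + 1))^[t - 1] (Real.logb 2 (N.index : ℝ)) ∧
      ∀ T : CTree, T.weight ≤ t →
        T.sub (fun _ => N) = ⊥ → T.sub (fun _ => H) = ⊥ := by
  classical
  -- iterate the upgrade step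
  have iter : ∀ k : ℕ, ∃ X Q : Subgroup G,
      X.Normal ∧ X.FiniteIndex ∧ Q.Characteristic ∧ Q.Normal ∧ X ≤ Q ∧
      Real.logb 2 (X.index : ℝ)
        ≤ (fun x : ℝ => x * (x + 1))^[k] (Real.logb 2 (N.index : ℝ)) ∧
      (∀ T : CTree, T.weight ≤ t → T.sub (fun _ => N) = ⊥ → KM.mix X Q T k = ⊥) := by
    intro k
    induction k with
    | zero =>
      refine ⟨N, KM.autJoin N, hN, hNfin, KM.autJoin_characteristic N,
        KM.normal_iSup (fun φ => hN.map _ φ.surjective), KM.le_autJoin N, by simp, ?_⟩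
      intro T hw hsub
      rw [KM.mix_zero]
      exact hsub
    | succ k ih =>
      obtain ⟨X, Q, hXn, hXf, hQc, hQn, hXQ, hbound, hA⟩ := ih
      obtain ⟨X', Q', s, hX'n, hX'f, hQ'c, hQ'n, hX'Q', hXQ', h1s, h2s, hidx, hA'⟩ :=
        KM.upgrade hXn hXf hQc hQn hXQ hA
      refine ⟨X', Q', hX'n, hX'f, hQ'c, hQ'n, hX'Q', ?_, hA'⟩
      have hstep := KM.real_step hXf.index_ne_zero hX'f.index_ne_zero h1s h2s hidx
      have hz : 0 ≤ Real.logb 2 (X.index : ℝ) := by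
        refine Real.logb_nonneg one_lt_two ?_
        exact_mod_cast Nat.one_le_iff_ne_zero.mpr hXf.index_ne_zero
      have hN1 : (1 : ℝ) ≤ (N.index : ℝ) := by
        exact_mod_cast Nat.one_le_iff_ne_zero.mpr hNfin.index_ne_zero
      have h0 : (0 : ℝ) ≤ Real.logb 2 (N.index : ℝ) := Real.logb_nonneg one_lt_two hN1
      have hw' : 0 ≤ (fun x : ℝ => x * (x + 1))^[k] (Real.logb 2 (N.index : ℝ)) := by
        exact le_trans (KM.fiter_nonneg_mono k (le_refl (0:ℝ)) h0).1
          (by simpa using (KM.fiter_nonneg_mono k (le_refl (0:ℝ)) h0).2)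
      rw [Function.iterate_succ_apply']
      calc Real.logb 2 (X'.index : ℝ)
          ≤ Real.logb 2 (X.index : ℝ) * (Real.logb 2 (X.index : ℝ) + 1) := hstep
        _ ≤ ((fun x : ℝ => x * (x + 1))^[k] (Real.logb 2 (N.index : ℝ)))
            * ((fun x : ℝ => x * (x + 1))^[k] (Real.logb 2 (N.index : ℝ)) + 1) := by
            nlinarith [hbound, hz, hw']
        _ = (fun x : ℝ => x * (x + 1))
            ((fun x : ℝ => x * (x + 1))^[k] (Real.logb 2 (N.index : ℝ))) := rfl
  obtain ⟨X, Q, hXn, hXf, hQc, hQn, hXQ, hbound, hA⟩ := iter (t - 1)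
  obtain ⟨X', Q', s, hX'n, hX'f, hQ'c, hQ'n, hX'Q', hXQ', h1s, h2s, hidx, hA'⟩ :=
    KM.upgrade hXn hXf hQc hQn hXQ hA
  haveI := hXf
  refine ⟨Q', hQ'c, Subgroup.finiteIndex_of_le hXQ', ?_, ?_⟩
  · have hanti : Q'.index ≤ X.index := Subgroup.index_antitone hXQ'
    have hQ'pos : (0 : ℝ) < (Q'.index : ℝ) := by
      exact_mod_cast Nat.pos_of_ne_zero (Subgroup.finiteIndex_of_le hXQ').index_ne_zero
    refine le_trans (Real.logb_le_logb_of_le one_lt_two hQ'pos (by exact_mod_cast hanti))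
      hbound
  · intro T hw hsub
    have h := hA' T hw hsub
    have ht1 : t - 1 + 1 = t := by omega
    rw [ht1] at h
    have hle := KM.sub_const_le_mix hX'Q' (T := T) (r := t) hw
    rw [h] at hle
    exact le_bot_iff.mp hle
end

section
/- Let G be a group of bounded exponent (there exists an integer e ≥ 1 with gᵉ = 1 for all g ∈ G) and let N be a finite normal subgroup of G. Then G has a characteristic finite subgroup H such that the spectrum of G/H is contained in the spectrum of G/N, i.e., for every element x of the quotient group G/H there exists an element y of the quotient group G/N with the same order as x. -/
open scoped Pointwise

namespace Stmt11

variable {G : Type*} [Group G]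

/-- `M` absorbs a proper prime-index power of every element whose order is not in `S`. -/
def Hits (S : Set ℕ) (M : Subgroup G) : Prop :=
  ∀ g : G, orderOf g ∉ S → ∃ p : ℕ, p.Prime ∧ p ∣ orderOf g ∧ g ^ (orderOf g / p) ∈ M

def Good (S : Set ℕ) (M : Subgroup G) : Prop :=
  M.Normal ∧ Finite ↥M ∧ Hits S M

lemma orderOf_pos_of_exp {e : ℕ} (he : 1 ≤ e) (hexp : ∀ g : G, g ^ e = 1) (g : G) :
    0 < orderOf g := by
  have : IsOfFinOrder g := isOfFinOrder_iff_pow_eq_one.mpr ⟨e, he, hexp g⟩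
  exact this.orderOf_pos

lemma orderOf_dvd_e {e : ℕ} (hexp : ∀ g : G, g ^ e = 1) (g : G) : orderOf g ∣ e :=
  orderOf_dvd_of_pow_eq_one (hexp g)

/-- realize any divisor of an order as an order of a power -/
lemma orderOf_pow_div {g : G} {d : ℕ} (hk : orderOf g ≠ 0) (hd : d ∣ orderOf g) :
    orderOf (g ^ (orderOf g / d)) = d := by
  rcases hd with ⟨c, hc⟩
  have hc0 : c ≠ 0 := by rintro rfl; simp only [mul_zero] at hc; exact hk (by omega)
  have hd0 : d ≠ 0 := by rintro rfl; simp only [zero_mul] at hc; exact hk (by omega)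
  have h1 : orderOf g / d = c := by rw [hc]; exact Nat.mul_div_cancel_left c (by omega)
  have hfin : IsOfFinOrder g := by
    rw [← orderOf_pos_iff]; omega
  rw [h1, hfin.orderOf_pow]
  have : Nat.gcd (orderOf g) c = c := Nat.gcd_eq_right ⟨d, by rw [hc, mul_comm]⟩
  rw [this, hc, Nat.mul_div_cancel _ (by omega)]

lemma orderOf_mk_dvd {M : Subgroup G} [M.Normal] (g : G) :
    orderOf (g : G ⧸ M) ∣ orderOf g := by
  apply orderOf_dvd_of_pow_eq_one
  rw [← QuotientGroup.mk_pow, pow_orderOf_eq_one, QuotientGroup.mk_one]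

/-- every order in a quotient is realized as an order in the group -/
lemma exists_order_lift {e : ℕ} (he : 1 ≤ e) (hexp : ∀ g : G, g ^ e = 1)
    {M : Subgroup G} [M.Normal] (x : G ⧸ M) : ∃ g : G, orderOf g = orderOf x := by
  induction x using QuotientGroup.induction_on with
  | H h =>
    have h1 : orderOf ((h : G ⧸ M)) ∣ orderOf h := orderOf_mk_dvd h
    have h2 : orderOf h ≠ 0 := (orderOf_pos_of_exp he hexp h).ne'
    exact ⟨h ^ (orderOf h / orderOf (h : G ⧸ M)), orderOf_pow_div h2 h1⟩


lemma hits_of_witness {e : ℕ} (he : 1 ≤ e) (hexp : ∀ g : G, g ^ e = 1) {S : Set ℕ}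
    {M : Subgroup G} [M.Normal] (hW : ∀ x : G ⧸ M, orderOf x ∈ S) : Hits S M := by
  intro g hg
  set k := orderOf g with hk
  set t := orderOf ((g : G ⧸ M)) with ht
  have htS : t ∈ S := hW _
  have htd : t ∣ k := orderOf_mk_dvd g
  have hk0 : k ≠ 0 := (orderOf_pos_of_exp he hexp g).ne'
  have htne : t ≠ k := by intro h; rw [h] at htS; exact hg htS
  have ht0 : t ≠ 0 := by rintro h; rw [h] at htd; exact hk0 (Nat.eq_zero_of_zero_dvd htd)
  obtain ⟨m, hm⟩ := htd
  have hm1 : m ≠ 1 := by rintro rfl; rw [mul_one] at hm; exact htne hm.symm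
  have hm0 : m ≠ 0 := by rintro rfl; rw [mul_zero] at hm; exact hk0 hm
  set p := m.minFac with hp
  have hpp : p.Prime := Nat.minFac_prime hm1
  obtain ⟨r, hr⟩ := m.minFac_dvd
  refine ⟨p, hpp, ⟨t * r, by rw [hm, hr]; ring⟩, ?_⟩
  have hkp : k / p = t * r := by
    rw [hm, hr, show t * (p * r) = p * (t * r) by ring]
    exact Nat.mul_div_cancel_left _ hpp.pos
  rw [hkp, ← QuotientGroup.eq_one_iff, QuotientGroup.mk_pow, pow_mul]
  have : ((g : G ⧸ M)) ^ t = 1 := pow_orderOf_eq_one _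
  rw [this, one_pow]

/-- `Hits` is preserved by automorphisms (image). -/
lemma hits_map {S : Set ℕ} {M : Subgroup G} (hM : Hits S M) (φ : G ≃* G) :
    Hits S (M.map φ.toMonoidHom) := by
  intro g hg
  have hord : orderOf (φ.symm g) = orderOf g := orderOf_injective φ.symm.toMonoidHom φ.symm.injective g
  obtain ⟨p, hp, hpd, hmem⟩ := hM (φ.symm g) (by rwa [hord])
  rw [hord] at hpd hmem
  refine ⟨p, hp, hpd, ?_⟩
  exact ⟨(φ.symm g) ^ (orderOf g / p), hmem, by simp [map_pow]⟩


lemma finite_of_le {A B : Subgroup G} (hB : Finite ↥B) (h : A ≤ B) : Finite ↥A :=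
  Finite.of_injective (Subgroup.inclusion h) (Subgroup.inclusion_injective h)

lemma card_lt_of_lt {A B : Subgroup G} (hB : Finite ↥B) (h : A < B) :
    Nat.card ↥A < Nat.card ↥B := by
  have hle := Subgroup.card_le_of_le h.le
  rcases lt_or_eq_of_le hle with h' | h'
  · exact h'
  · exact absurd (Subgroup.eq_of_le_of_card_ge h.le h'.ge) h.ne

lemma finite_subgroups_le {M : Subgroup G} (hM : Finite ↥M) :
    {E : Subgroup G | E ≤ M}.Finite := by
  have : Finite (Set ↥M) := inferInstance
  apply Set.Finite.of_finite_image (f := fun E : Subgroup G => {x : ↥M | (x : G) ∈ E})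
  · exact Set.Finite.subset (Set.finite_univ) (Set.subset_univ _)
  · intro E₁ h₁ E₂ h₂ hEq
    ext x
    constructor
    · intro hx
      have h3 : (⟨x, h₁ hx⟩ : ↥M) ∈ {x : ↥M | (x : G) ∈ E₁} := hx
      simp only [hEq] at h3; exact h3
    · intro hx
      have h3 : (⟨x, h₂ hx⟩ : ↥M) ∈ {x : ↥M | (x : G) ∈ E₂} := hx
      simp only [← hEq] at h3; exact h3


/-- Lemma A: the set of good subgroups of minimal cardinality is finite. -/
lemma minimal_good_finite {e : ℕ} (he : 1 ≤ e) (hexp : ∀ g : G, g ^ e = 1) (S : Set ℕ) :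
    {M : Subgroup G | Good S M ∧
      Nat.card ↥M = sInf {n | ∃ M' : Subgroup G, Good S M' ∧ Nat.card ↥M' = n}}.Finite := by
  set m₀ := sInf {n | ∃ M' : Subgroup G, Good S M' ∧ Nat.card ↥M' = n} with hm₀
  set ℳ : Set (Subgroup G) :=
    {M : Subgroup G | Good S M ∧ Nat.card ↥M = m₀} with hℳ
  by_contra hfin
  have hinf : ℳ.Infinite := hfin
  -- the family of subgroups below infinitely many members of ℳ
  set 𝒟 : Set (Subgroup G) := {D : Subgroup G | {M | M ∈ ℳ ∧ D ≤ M}.Infinite} with h𝒟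
  have hbot : (⊥ : Subgroup G) ∈ 𝒟 := by
    have : {M | M ∈ ℳ ∧ (⊥ : Subgroup G) ≤ M} = ℳ := by
      ext M; simp [bot_le]
    simpa [h𝒟, this] using hinf
  have hDle : ∀ D ∈ 𝒟, Nat.card ↥D ≤ m₀ := by
    intro D hD
    obtain ⟨M, hM, hDM⟩ := hD.nonempty
    have : Finite ↥M := hM.1.2.1
    calc Nat.card ↥D ≤ Nat.card ↥M := Subgroup.card_le_of_le hDM
    _ = m₀ := hM.2
  -- pick D₀ in 𝒟 of maximal cardinality
  set cards : Set ℕ := {n | ∃ D ∈ 𝒟, Nat.card ↥D = n} with hcards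
  have hcne : cards.Nonempty := ⟨_, ⊥, hbot, rfl⟩
  have hcbdd : BddAbove cards := by
    refine ⟨m₀, ?_⟩; rintro n ⟨D, hD, rfl⟩; exact hDle D hD
  obtain ⟨D₀, hD₀mem, hD₀card⟩ : ∃ D ∈ 𝒟, Nat.card ↥D = sSup cards := Nat.sSup_mem hcne hcbdd
  have hDmax : ∀ E : Subgroup G, E ∈ 𝒟 → Nat.card ↥E ≤ Nat.card ↥D₀ := by
    intro E hE; rw [hD₀card]; exact le_csSup hcbdd ⟨E, hE, rfl⟩
  -- key: for M₁ ∈ ℳ above D₀, only finitely many members above D₀ meet M₁ in more than D₀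
  have key : ∀ M₁ ∈ ℳ, D₀ ≤ M₁ → {M | M ∈ ℳ ∧ D₀ ≤ M ∧ M ⊓ M₁ ≠ D₀}.Finite := by
    intro M₁ hM₁ hD₀M₁
    have hM₁fin : Finite ↥M₁ := hM₁.1.2.1
    have hsub : {M | M ∈ ℳ ∧ D₀ ≤ M ∧ M ⊓ M₁ ≠ D₀} ⊆
        ⋃ E ∈ {E : Subgroup G | E ≤ M₁ ∧ D₀ < E}, {M | M ∈ ℳ ∧ E ≤ M} := by
      rintro M ⟨hMℳ, hD₀M, hne⟩
      refine Set.mem_biUnion (?_ : M ⊓ M₁ ∈ _) ⟨hMℳ, inf_le_left⟩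
      exact ⟨inf_le_right, lt_of_le_of_ne (le_inf hD₀M hD₀M₁) (Ne.symm hne)⟩
    refine Set.Finite.subset (Set.Finite.biUnion ?_ ?_) hsub
    · exact Set.Finite.subset (finite_subgroups_le hM₁fin) (fun E hE => hE.1)
    · rintro E ⟨hEM₁, hD₀E⟩
      by_contra hEinf
      have : E ∈ 𝒟 := hEinf
      have h1 : Nat.card ↥E ≤ Nat.card ↥D₀ := hDmax E this
      have h2 : Nat.card ↥D₀ < Nat.card ↥E := card_lt_of_lt (finite_of_le hM₁fin hEM₁) hD₀E
      omega
  -- construct arbitrarily long lists of members pairwise meeting exactly in D₀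
  have hlist : ∀ r : ℕ, ∃ l : List (Subgroup G), l.length = r ∧
      l.Pairwise (fun A B => A ⊓ B = D₀ ∧ A ≠ B) ∧ ∀ M ∈ l, M ∈ ℳ ∧ D₀ ≤ M := by
    intro r
    induction r with
    | zero => exact ⟨[], rfl, List.Pairwise.nil, by simp⟩
    | succ r ih =>
      obtain ⟨l, hlen, hpw, hmem⟩ := ih
      have hexcl : ({M | M ∈ l} ∪ ⋃ A ∈ {A | A ∈ l}, {M | M ∈ ℳ ∧ D₀ ≤ M ∧ M ⊓ A ≠ D₀}).Finite := by
        refine Set.Finite.union (List.finite_toSet l) ?_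
        exact Set.Finite.biUnion (List.finite_toSet l)
          (fun A hA => key A (hmem A hA).1 (hmem A hA).2)
      have hbase : {M | M ∈ ℳ ∧ D₀ ≤ M}.Infinite := hD₀mem
      obtain ⟨Mn, hMn⟩ := (hbase.diff hexcl).nonempty
      refine ⟨Mn :: l, by simp [hlen], ?_, ?_⟩
      · rw [List.pairwise_cons]
        refine ⟨?_, hpw⟩
        intro A hA
        have h1 : Mn ∉ ({M | M ∈ l} ∪ ⋃ A ∈ {A | A ∈ l}, {M | M ∈ ℳ ∧ D₀ ≤ M ∧ M ⊓ A ≠ D₀}) := hMn.2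
        constructor
        · by_contra hne
          exact h1 (Or.inr (Set.mem_biUnion hA ⟨hMn.1.1, hMn.1.2, hne⟩))
        · intro heq; exact h1 (Or.inl (heq ▸ hA))
      · intro M hM
        rcases List.mem_cons.mp hM with rfl | hM'
        · exact hMn.1
        · exact hmem M hM'
  obtain ⟨l, hlen, hpw, hmem⟩ := hlist (e + 1)
  -- pairwise property for distinct indices
  have hpair : ∀ i j : Fin l.length, i ≠ j → (l.get i) ⊓ (l.get j) = D₀ := by
    intro i j hij
    rcases lt_or_gt_of_ne hij with h | h
    · exact (List.pairwise_iff_get.mp hpw i j h).1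
    · rw [inf_comm]; exact (List.pairwise_iff_get.mp hpw j i h).1
  -- D₀ hits every bad element, by pigeonhole on primes
  have hD₀hits : Hits S D₀ := by
    intro g hg
    set k := orderOf g with hk
    have hk0 : 0 < k := orderOf_pos_of_exp he hexp g
    have hke : k ∣ e := orderOf_dvd_e hexp g
    have hkle : k ≤ e := Nat.le_of_dvd (by omega) hke
    -- choose a prime for each member of the list
    have hchoice : ∀ i : Fin l.length, ∃ p : ℕ, p.Prime ∧ p ∣ k ∧ g ^ (k / p) ∈ l.get i := by
      intro i
      exact ((hmem _ (List.get_mem l i)).1).1.2.2 g hg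
    choose P hPp hPd hPm using hchoice
    -- pigeonhole
    have hcard : (Finset.Icc 2 k).card < (Finset.univ : Finset (Fin l.length)).card := by
      simp [hlen, Nat.card_Icc]; omega
    have hmaps : ∀ i ∈ (Finset.univ : Finset (Fin l.length)), P i ∈ Finset.Icc 2 k := by
      intro i _
      exact Finset.mem_Icc.mpr ⟨(hPp i).two_le, Nat.le_of_dvd hk0 (hPd i)⟩
    obtain ⟨i, _, j, _, hij, hPij⟩ :=
      Finset.exists_ne_map_eq_of_card_lt_of_maps_to hcard hmaps
    refine ⟨P i, hPp i, hPd i, ?_⟩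
    have h1 : g ^ (k / P i) ∈ (l.get i) ⊓ (l.get j) := by
      refine ⟨hPm i, ?_⟩
      rw [hPij]; exact hPm j
    rwa [hpair i j hij] at h1
  -- D₀ is normal, finite, of cardinality < m₀ : contradiction with minimality
  have hlen2 : 2 ≤ l.length := by omega
  set i0 : Fin l.length := ⟨0, by omega⟩ with hi0
  set i1 : Fin l.length := ⟨1, by omega⟩ with hi1
  have hne01 : i0 ≠ i1 := by
    intro h; rw [Fin.ext_iff] at h; simp [hi0, hi1] at h
  have hlt01 : i0 < i1 := by rw [Fin.lt_iff_val_lt_val]; simp [hi0, hi1]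
  have hD : (l.get i0) ⊓ (l.get i1) = D₀ := hpair i0 i1 hne01
  have hMne : l.get i0 ≠ l.get i1 := (List.pairwise_iff_get.mp hpw i0 i1 hlt01).2
  have hM₀ : l.get i0 ∈ ℳ := (hmem _ (List.get_mem l i0)).1
  have hM₁ : l.get i1 ∈ ℳ := (hmem _ (List.get_mem l i1)).1
  have hfinM₀ : Finite ↥(l.get i0) := hM₀.1.2.1
  have hD₀fin : Finite ↥D₀ := finite_of_le hfinM₀ (hD ▸ inf_le_left)
  have hD₀norm : D₀.Normal := by
    haveI := hM₀.1.1; haveI := hM₁.1.1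
    rw [← hD]; infer_instance
  have hlt : D₀ < l.get i0 := by
    refine lt_of_le_of_ne (hD ▸ inf_le_left) ?_
    intro heq
    have hle01 : l.get i0 ≤ l.get i1 := by
      conv_lhs => rw [← heq, ← hD]
      exact inf_le_right
    have hcards : Nat.card ↥(l.get i1) ≤ Nat.card ↥(l.get i0) := by rw [hM₀.2, hM₁.2]
    haveI := hM₁.1.2.1
    exact hMne (Subgroup.eq_of_le_of_card_ge hle01 hcards)
  have hcardlt : Nat.card ↥D₀ < m₀ := by
    have := card_lt_of_lt hfinM₀ hlt
    rwa [hM₀.2] at this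
  have hmin : m₀ ≤ Nat.card ↥D₀ := Nat.sInf_le ⟨D₀, ⟨hD₀norm, hD₀fin, hD₀hits⟩, rfl⟩
  omega


lemma finite_coe_subgroup {A : Subgroup G} : Finite ↥A ↔ (A : Set G).Finite := by
  rw [← SetLike.coe_sort_coe, Set.finite_coe_iff]

/-- sup of a finite family of finite normal subgroups is finite and normal -/
lemma sup_good_finite (F : Finset (Subgroup G)) (h : ∀ M ∈ F, M.Normal ∧ Finite ↥M) :
    (F.sup id).Normal ∧ Finite ↥(F.sup id) := by
  classical
  refine Finset.sup_induction (p := fun M : Subgroup G => M.Normal ∧ Finite ↥M) ⟨(inferInstance : (⊥ : Subgroup G).Normal), inferInstance⟩ ?_ h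
  rintro A ⟨hAn, hAf⟩ B ⟨hBn, hBf⟩
  haveI := hAn; haveI := hBn
  refine ⟨Subgroup.sup_normal A B, ?_⟩
  have h1 : (A : Set G).Finite := finite_coe_subgroup.mp hAf
  have h2 : (B : Set G).Finite := finite_coe_subgroup.mp hBf
  have h3 : ((A ⊔ B : Subgroup G) : Set G) = (A : Set G) * (B : Set G) :=
    Subgroup.mul_normal A B
  rw [finite_coe_subgroup, h3]
  exact Set.Finite.mul h1 h2

lemma good_map {S : Set ℕ} {M : Subgroup G} (hM : Good S M) (φ : G ≃* G) :
    Good S (M.map φ.toMonoidHom) ∧ Nat.card ↥(M.map φ.toMonoidHom) = Nat.card ↥M := by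
  obtain ⟨hn, hf, hh⟩ := hM
  have hcard : Nat.card ↥(M.map φ.toMonoidHom) = Nat.card ↥M :=
    (Nat.card_congr (M.equivMapOfInjective φ.toMonoidHom φ.injective).toEquiv).symm
  refine ⟨⟨hn.map φ.toMonoidHom φ.surjective, ?_, hits_map hh φ⟩, hcard⟩
  rw [finite_coe_subgroup] at hf ⊢
  rw [Subgroup.coe_map]
  exact hf.image _

/-- The characteristic finite hitting subgroup. -/
lemma exists_char_hits {e : ℕ} (he : 1 ≤ e) (hexp : ∀ g : G, g ^ e = 1) (S : Set ℕ)
    (hex : ∃ M : Subgroup G, Good S M) :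
    ∃ J : Subgroup G, J.Characteristic ∧ Finite ↥J ∧ Hits S J := by
  classical
  set m₀ := sInf {n | ∃ M' : Subgroup G, Good S M' ∧ Nat.card ↥M' = n} with hm₀
  set ℳ : Set (Subgroup G) := {M : Subgroup G | Good S M ∧ Nat.card ↥M = m₀} with hℳ
  have hfin : ℳ.Finite := minimal_good_finite he hexp S
  have hnem : ℳ.Nonempty := by
    obtain ⟨M, hM⟩ := hex
    have : m₀ ∈ {n | ∃ M' : Subgroup G, Good S M' ∧ Nat.card ↥M' = n} :=
      Nat.sInf_mem ⟨Nat.card ↥M, M, hM, rfl⟩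
    obtain ⟨M', hM', hc⟩ := this
    exact ⟨M', hM', hc⟩
  set F := hfin.toFinset with hF
  have hFmem : ∀ M, M ∈ F ↔ M ∈ ℳ := fun M => Set.Finite.mem_toFinset hfin
  set J := F.sup id with hJ
  have hgood := sup_good_finite F (fun M hM => ⟨((hFmem M).mp hM).1.1, ((hFmem M).mp hM).1.2.1⟩)
  have hchar : J.Characteristic := by
    rw [Subgroup.characteristic_iff_map_eq]
    intro φ
    have hcomm : ∀ A B : Subgroup G,
        Subgroup.map φ.toMonoidHom (A ⊔ B) =
          Subgroup.map φ.toMonoidHom A ⊔ Subgroup.map φ.toMonoidHom B :=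
      fun A B => Subgroup.map_sup A B φ.toMonoidHom
    have h1 : Subgroup.map φ.toMonoidHom (F.sup id) =
        F.sup (fun M => Subgroup.map φ.toMonoidHom M) := by
      refine Finset.comp_sup_eq_sup_comp _ hcomm ?_
      exact Subgroup.map_bot φ.toMonoidHom
    have h2 : F.sup (fun M => Subgroup.map φ.toMonoidHom M) =
        (F.image (fun M => Subgroup.map φ.toMonoidHom M)).sup id := by
      rw [Finset.sup_image]; rfl
    have himg : F.image (fun M => Subgroup.map φ.toMonoidHom M) = F := by
      apply Finset.eq_of_subset_of_card_le
      · intro M' hM'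
        obtain ⟨M, hM, rfl⟩ := Finset.mem_image.mp hM'
        obtain ⟨hg, hc⟩ := good_map ((hFmem M).mp hM).1 φ
        exact (hFmem _).mpr ⟨hg, by rw [hc, ((hFmem M).mp hM).2]⟩
      · rw [Finset.card_image_of_injective _ (Subgroup.map_injective φ.injective)]
    rw [hJ, h1, h2, himg]
  refine ⟨J, hchar, hgood.2, ?_⟩
  obtain ⟨M, hM⟩ := hnem
  intro g hg
  obtain ⟨p, hp, hd, hmem⟩ := hM.1.2.2 g hg
  have hle : M ≤ J := by
    have : M ∈ F := (hFmem M).mpr hM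
    exact Finset.le_sup (f := id) this
  exact ⟨p, hp, hd, hle hmem⟩


/-- the bottom-subgroup case -/
lemma aux_empty {e : ℕ} (he : 1 ≤ e) (hexp : ∀ g : G, g ^ e = 1) (S : Set ℕ)
    (hempty : {k : ℕ | k ∉ S ∧ ∃ g : G, orderOf g = k} = ∅) :
    ∃ (H : Subgroup G) (_ : H.Normal), H.Characteristic ∧ Finite ↥H ∧
      ∀ x : G ⧸ H, orderOf x ∈ S := by
  refine ⟨⊥, inferInstance, inferInstance, inferInstance, ?_⟩
  intro x
  obtain ⟨g, hg⟩ := exists_order_lift he hexp x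
  by_contra hxS
  have : orderOf g ∈ {k : ℕ | k ∉ S ∧ ∃ g : G, orderOf g = k} := ⟨hg ▸ hxS, g, rfl⟩
  rw [hempty] at this
  exact this

lemma aux (n : ℕ) : ∀ {G : Type u} [Group G] (e : ℕ), 1 ≤ e → (∀ g : G, g ^ e = 1) →
    ∀ (S : Set ℕ), (∀ s ∈ S, ∀ d, d ∣ s → d ∈ S) →
    (∃ (M : Subgroup G) (_ : M.Normal), Finite ↥M ∧ ∀ x : G ⧸ M, orderOf x ∈ S) →
    {k : ℕ | k ∉ S ∧ ∃ g : G, orderOf g = k}.ncard ≤ n →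
    ∃ (H : Subgroup G) (_ : H.Normal), H.Characteristic ∧ Finite ↥H ∧
      ∀ x : G ⧸ H, orderOf x ∈ S := by
  induction n with
  | zero =>
    intro G _ e he hexp S hSdiv hwit hcard
    set bad := {k : ℕ | k ∉ S ∧ ∃ g : G, orderOf g = k} with hbad
    have hbfin : bad.Finite := by
      refine Set.Finite.subset (Finset.range (e + 1)).finite_toSet ?_
      rintro k ⟨hk, g, rfl⟩
      simp only [Finset.coe_range, Set.mem_Iio]
      have := Nat.le_of_dvd (by omega) (orderOf_dvd_e hexp g)
      omega
    have : bad = ∅ := by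
      rw [← Set.ncard_eq_zero hbfin]; omega
    exact aux_empty he hexp S this
  | succ n ih =>
    intro G _ e he hexp S hSdiv hwit hcard
    set bad := {k : ℕ | k ∉ S ∧ ∃ g : G, orderOf g = k} with hbad
    have hbfin : bad.Finite := by
      refine Set.Finite.subset (Finset.range (e + 1)).finite_toSet ?_
      rintro k ⟨hk, g, rfl⟩
      simp only [Finset.coe_range, Set.mem_Iio]
      have := Nat.le_of_dvd (by omega) (orderOf_dvd_e hexp g)
      omega
    rcases Set.eq_empty_or_nonempty bad with hempty | hne
    · exact aux_empty he hexp S hempty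
    -- main step
    obtain ⟨M, hMn, hMf, hMW⟩ := hwit
    haveI := hMn
    have hexG : ∃ M' : Subgroup G, M'.Normal ∧ Finite ↥M' ∧ Hits S M' :=
      ⟨M, hMn, hMf, hits_of_witness he hexp hMW⟩
    obtain ⟨J, hJchar, hJfin, hJhits⟩ := exists_char_hits he hexp S hexG
    haveI := hJchar
    haveI hJn : J.Normal := inferInstance
    -- the quotient group
    set π := QuotientGroup.mk' J with hπ
    have hexpQ : ∀ x : G ⧸ J, x ^ e = 1 := by
      intro x
      induction x using QuotientGroup.induction_on with
      | H g => rw [← QuotientGroup.mk_pow, hexp g, QuotientGroup.mk_one]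
    set badQ := {k : ℕ | k ∉ S ∧ ∃ x : G ⧸ J, orderOf x = k} with hbadQ
    have hsub : badQ ⊆ bad := by
      rintro k ⟨hk, x, rfl⟩
      obtain ⟨g, hg⟩ := exists_order_lift he hexp x
      exact ⟨hk, g, hg⟩
    -- the maximal bad order dies in G/J
    obtain ⟨kmax, hkmaxmem, hkmaxmax⟩ :=
      Set.exists_max_image bad id hbfin hne
    have hkmax_pos : 0 < kmax := by
      obtain ⟨_, g, rfl⟩ := hkmaxmem
      exact orderOf_pos_of_exp he hexp g
    have hkmax_not : kmax ∉ badQ := by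
      rintro ⟨hkS, x, hx⟩
      induction x using QuotientGroup.induction_on with
      | H h =>
        have h1 : orderOf ((h : G ⧸ J)) ∣ orderOf h := by
          apply orderOf_dvd_of_pow_eq_one
          rw [← QuotientGroup.mk_pow, pow_orderOf_eq_one, QuotientGroup.mk_one]
        rw [hx] at h1
        have h2 : orderOf h ∈ bad := by
          refine ⟨fun hS => hkS (hSdiv _ hS _ h1), h, rfl⟩
        have h3 : orderOf h ≤ kmax := hkmaxmax _ h2
        have h4 : orderOf h = kmax := by
          have h5 := Nat.le_of_dvd (orderOf_pos_of_exp he hexp h) h1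
          omega
        -- J hits h
        obtain ⟨p, hp, hpd, hmem⟩ := hJhits h (by rw [h4]; exact hkS)
        have h5 : ((h : G ⧸ J)) ^ (orderOf h / p) = 1 := by
          rw [← QuotientGroup.mk_pow, QuotientGroup.eq_one_iff]
          exact hmem
        have h6 : orderOf ((h : G ⧸ J)) ∣ orderOf h / p := orderOf_dvd_of_pow_eq_one h5
        rw [hx, h4] at h6
        have h7 : kmax / p < kmax := Nat.div_lt_self hkmax_pos hp.one_lt
        have h8 : kmax ≤ kmax / p := Nat.le_of_dvd (by
          rcases hpd with ⟨c, hc⟩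
          rw [h4] at hc
          have : c ≠ 0 := by rintro rfl; omega
          have : kmax / p = c := by rw [hc, Nat.mul_div_cancel_left _ hp.pos]
          omega) h6
        omega
    -- strictly fewer bad orders in the quotient
    have hcardQ : badQ.ncard ≤ n := by
      have h1 : badQ ⊆ bad \ {kmax} := by
        intro k hk
        exact ⟨hsub hk, by rintro rfl; exact hkmax_not hk⟩
      have h2 : (bad \ {kmax}).ncard = bad.ncard - 1 :=
        Set.ncard_diff_singleton_of_mem hkmaxmem
      have h3 : badQ.ncard ≤ (bad \ {kmax}).ncard :=
        Set.ncard_le_ncard h1 hbfin.diff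
      have h4 : 1 ≤ bad.ncard := by
        rw [Nat.one_le_iff_ne_zero]
        intro h0
        rw [Set.ncard_eq_zero hbfin] at h0
        exact Set.not_nonempty_empty (h0 ▸ hne)
      omega
    -- witness in the quotient
    have hwitsQ : ∃ (W : Subgroup (G ⧸ J)) (_ : W.Normal), Finite ↥W ∧
        ∀ x : (G ⧸ J) ⧸ W, orderOf x ∈ S := by
      haveI : (M ⊔ J).Normal := Subgroup.sup_normal M J
      have hMJfin : Finite ↥(M ⊔ J) := by
        rw [finite_coe_subgroup]
        have h3 : ((M ⊔ J : Subgroup G) : Set G) = (M : Set G) * (J : Set G) :=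
          Subgroup.mul_normal M J
        rw [h3]
        exact Set.Finite.mul (finite_coe_subgroup.mp hMf) (finite_coe_subgroup.mp hJfin)
      set W := (M ⊔ J).map π with hW
      haveI hWn : W.Normal := Subgroup.Normal.map inferInstance π (QuotientGroup.mk'_surjective J)
      have hWfin : Finite ↥W := by
        rw [finite_coe_subgroup, Subgroup.coe_map]
        exact (finite_coe_subgroup.mp hMJfin).image _
      refine ⟨W, hWn, hWfin, ?_⟩
      -- (G⧸J)⧸W ≃* G⧸(M⊔J) and all orders there are in S
      have hle : J ≤ M ⊔ J := le_sup_right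
      set eqv := QuotientGroup.quotientQuotientEquivQuotient J (M ⊔ J) hle with heqv
      intro x
      have hord : orderOf x = orderOf (eqv x) :=
        (orderOf_injective eqv.toMonoidHom eqv.injective x).symm
      rw [hord]
      -- now orderOf (eqv x) where eqv x : G ⧸ (M ⊔ J)
      set z := eqv x with hz
      clear_value z
      induction z using QuotientGroup.induction_on with
      | H g =>
        have hψ : ∃ ψ : (G ⧸ M) →* (G ⧸ (M ⊔ J)),
            ψ ((g : G ⧸ M)) = ((g : G ⧸ (M ⊔ J))) := by
          refine ⟨QuotientGroup.map M (M ⊔ J) (MonoidHom.id G) ?_, ?_⟩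
          · intro m hm; exact le_sup_left (α := Subgroup G) hm
          · rfl
        obtain ⟨ψ, hψeq⟩ := hψ
        have h1 : orderOf ((g : G ⧸ (M ⊔ J))) ∣ orderOf ((g : G ⧸ M)) := by
          rw [← hψeq]; exact orderOf_map_dvd ψ _
        exact hSdiv _ (hMW _) _ h1
    -- apply the induction hypothesis to G ⧸ J
    obtain ⟨Hb, hHbn, hHbchar, hHbfin, hHbW⟩ := ih e he hexpQ S hSdiv hwitsQ hcardQ
    haveI := hHbn
    -- pull back
    set H := Hb.comap π with hH
    haveI hHn : H.Normal := hHbn.comap π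
    have hJH : J ≤ H := by
      intro x hx
      have : π x = 1 := (QuotientGroup.eq_one_iff x).mpr hx
      show π x ∈ Hb
      rw [this]; exact Hb.one_mem
    have hmapH : H.map π = Hb :=
      Subgroup.map_comap_eq_self_of_surjective (QuotientGroup.mk'_surjective J) Hb
    -- H is finite
    have hHfin : Finite ↥H := by
      rw [finite_coe_subgroup]
      have hcover : (H : Set G) ⊆ ⋃ y ∈ (Hb : Set (G ⧸ J)), {x : G | π x = y} := by
        intro x hx
        exact Set.mem_biUnion hx rfl
      refine Set.Finite.subset (Set.Finite.biUnion (finite_coe_subgroup.mp hHbfin) ?_) hcover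
      intro y hy
      obtain ⟨r, hr⟩ := QuotientGroup.mk'_surjective J y
      have : {x : G | π x = y} ⊆ (fun j => r * j) '' (J : Set G) := by
        intro x hx
        have : π x = π r := by rw [hx, hr]
        have hmem : r⁻¹ * x ∈ J := by
          rw [← QuotientGroup.eq_one_iff, ← QuotientGroup.mk'_apply J]
          simp only [map_mul, map_inv, ← hπ, this]
          group
        exact ⟨r⁻¹ * x, hmem, by group⟩
      exact Set.Finite.subset ((finite_coe_subgroup.mp hJfin).image _) this
    -- H is characteristic
    have hHchar : H.Characteristic := by
      rw [Subgroup.characteristic_iff_comap_eq]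
      intro φ
      have hφJ : J.map φ.toMonoidHom = J := Subgroup.characteristic_iff_map_eq.mp hJchar φ
      set φb := QuotientGroup.congr J J φ hφJ with hφb
      have hcomm : ∀ x : G, φb ((x : G ⧸ J)) = ((φ x : G) : G ⧸ J) := by
        intro x; exact QuotientGroup.congr_mk J J φ hφJ x
      have hfix : Hb.comap φb.toMonoidHom = Hb := Subgroup.characteristic_iff_comap_eq.mp hHbchar φb
      ext x
      constructor
      · intro hx
        have h1 : ((φ x : G) : G ⧸ J) ∈ Hb := hx
        rw [← hcomm x] at h1
        have h3 : ((x : G) : G ⧸ J) ∈ Hb.comap φb.toMonoidHom := h1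
        rw [hfix] at h3
        exact h3
      · intro hx
        have h3 : ((x : G) : G ⧸ J) ∈ Hb := hx
        have h2 : ((x : G) : G ⧸ J) ∈ Hb.comap φb.toMonoidHom := by rw [hfix]; exact h3
        have h1 : φb ((x : G) : G ⧸ J) ∈ Hb := h2
        rw [hcomm x] at h1
        exact h1
    -- spectrum of G ⧸ H
    refine ⟨H, hHn, hHchar, hHfin, ?_⟩
    have heqv2 : ∀ x : G ⧸ H, orderOf x ∈ S := by
      set e3 := QuotientGroup.quotientQuotientEquivQuotient J H hJH with he3
      haveI : (H.map π).Normal := by rw [hmapH]; exact hHbn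
      set e4 := QuotientGroup.quotientMulEquivOfEq (hmapH) with he4
      intro x
      have h1 : orderOf x = orderOf (e3.symm x) :=
        (orderOf_injective e3.symm.toMonoidHom e3.symm.injective x).symm
      have h2 : orderOf (e3.symm x) = orderOf (e4 (e3.symm x)) :=
        (orderOf_injective e4.toMonoidHom e4.injective _).symm
      rw [h1, h2]
      exact hHbW _
    exact heqv2


end Stmt11

/-- `SpectrumLE H N hH hN` says that every element of `G/H` has the same order as some
element of `G/N` (the spectrum of `G/H` is contained in the spectrum of `G/N`). -/
def SpectrumLE {G : Type*} [Group G] (H N : Subgroup G)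
    (hH : H.Normal) (hN : N.Normal) : Prop :=
  haveI := hH
  haveI := hN
  ∀ x : G ⧸ H, ∃ y : G ⧸ N, orderOf y = orderOf x

/-- **Spectrum theorem.** For any finite normal subgroup `N` of a group `G` of bounded
exponent, there is a characteristic finite subgroup `H` of `G` such that the spectrum of
`G/H` is contained in the spectrum of `G/N`. -/
theorem stmt_11 {G : Type*} [Group G] (e : ℕ) (he : 1 ≤ e)
    (hexp : ∀ g : G, g ^ e = 1)
    (N : Subgroup G) (hN : N.Normal) (hNfin : Finite ↥N) :
    ∃ (H : Subgroup G) (hH : H.Normal), H.Characteristic ∧ Finite ↥H ∧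
      SpectrumLE H N hH hN := by
  haveI := hN
  set S : Set ℕ := {n | ∃ y : G ⧸ N, orderOf y = n} with hS
  have hexpQ : ∀ x : G ⧸ N, x ^ e = 1 := by
    intro x
    induction x using QuotientGroup.induction_on with
    | H g => rw [← QuotientGroup.mk_pow, hexp g, QuotientGroup.mk_one]
  have hSdiv : ∀ s ∈ S, ∀ d, d ∣ s → d ∈ S := by
    rintro s ⟨y, rfl⟩ d hd
    have hpos : orderOf y ≠ 0 := (Stmt11.orderOf_pos_of_exp he hexpQ y).ne'
    exact ⟨y ^ (orderOf y / d), Stmt11.orderOf_pow_div hpos hd⟩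
  have hwit : ∃ (M : Subgroup G) (_ : M.Normal), Finite ↥M ∧ ∀ x : G ⧸ M, orderOf x ∈ S :=
    ⟨N, hN, hNfin, fun x => ⟨x, rfl⟩⟩
  have hbound : {k : ℕ | k ∉ S ∧ ∃ g : G, orderOf g = k}.ncard ≤ e + 1 := by
    have hsub : {k : ℕ | k ∉ S ∧ ∃ g : G, orderOf g = k} ⊆ ↑(Finset.range (e + 1)) := by
      rintro k ⟨hk, g, rfl⟩
      simp only [Finset.coe_range, Set.mem_Iio]
      have := Nat.le_of_dvd (by omega) (Stmt11.orderOf_dvd_e hexp g)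
      omega
    calc {k : ℕ | k ∉ S ∧ ∃ g : G, orderOf g = k}.ncard
        ≤ (↑(Finset.range (e + 1)) : Set ℕ).ncard :=
          Set.ncard_le_ncard hsub (Finset.range (e + 1)).finite_toSet
      _ = e + 1 := by rw [Set.ncard_coe_finset, Finset.card_range]
  obtain ⟨H, hHn, hHc, hHf, hHW⟩ := Stmt11.aux (e + 1) e he hexp S hSdiv hwit hbound
  exact ⟨H, hHn, hHc, hHf, fun x => hHW x⟩
end

section
/- Let G be a group of bounded exponent (there exists an integer e ≥ 1 with gᵉ = 1 for all g ∈ G) and let N be a finite normal subgroup of G. Then G has a characteristic finite subgroup H such that for every element x of the commutator subgroup of the quotient group G/H there exists an element y of the commutator subgroup of the quotient group G/N with the same order as x. -/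
/-- `CommSpectrumLE H N hH hN` says that every element of the commutator subgroup of `G/H`
has the same order as some element of the commutator subgroup of `G/N`. -/
def CommSpectrumLE {G : Type*} [Group G] (H N : Subgroup G)
    (hH : H.Normal) (hN : N.Normal) : Prop :=
  haveI := hH
  haveI := hN
  ∀ x : G ⧸ H, x ∈ commutator (G ⧸ H) →
    ∃ y : G ⧸ N, y ∈ commutator (G ⧸ N) ∧ orderOf y = orderOf x

open Pointwise

namespace Stmt12Helper


variable {G : Type*} [Group G]

/-- Number theory: a proper divisor of `t` divides `t / p` for some prime `p ∣ t`. -/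
lemma exists_prime_div {t d : ℕ} (ht : 0 < t) (hd : d ∣ t) (hne : d ≠ t) :
    ∃ p : ℕ, p.Prime ∧ p ∣ t ∧ d ∣ t / p := by
  obtain ⟨m, hm⟩ := hd
  have hd0 : 0 < d := by
    rcases Nat.eq_zero_or_pos d with h | h
    · subst h; simp at hm; omega
    · exact h
  have hm1 : m ≠ 1 := by rintro rfl; simp at hm; omega
  have hm0 : m ≠ 0 := by rintro rfl; simp at hm; omega
  obtain ⟨p, hp, hpm⟩ : ∃ p, p.Prime ∧ p ∣ m := ⟨m.minFac, Nat.minFac_prime hm1, Nat.minFac_dvd m⟩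
  obtain ⟨m', hm'⟩ := hpm
  have htp : t = p * (d * m') := by rw [hm, hm']; ring
  refine ⟨p, hp, ⟨d * m', htp⟩, ?_⟩
  have : t / p = d * m' := by rw [htp]; exact Nat.mul_div_cancel_left _ hp.pos
  rw [this]; exact ⟨m', rfl⟩

/-- Pigeonhole: an infinite set mapped into a finite set has an infinite fiber. -/
lemma exists_infinite_fiber {α : Type*} {I : Set ℕ} (hI : I.Infinite) (f : ℕ → α)
    {S : Set α} (hS : S.Finite) (hf : ∀ i ∈ I, f i ∈ S) :
    ∃ a ∈ S, {i | i ∈ I ∧ f i = a}.Infinite := by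
  by_contra h
  push_neg at h
  have hsub : I ⊆ ⋃ a ∈ S, {i | i ∈ I ∧ f i = a} := by
    intro i hi
    exact Set.mem_biUnion (hf i hi) ⟨hi, rfl⟩
  have : (⋃ a ∈ S, {i | i ∈ I ∧ f i = a}).Finite := by
    refine Set.Finite.biUnion hS ?_
    intro a ha
    exact h a ha
  exact hI (this.subset hsub)


/-- The join of two normal subgroups is normal. -/
lemma normal_sup {H K : Subgroup G} (hH : H.Normal) (hK : K.Normal) : (H ⊔ K).Normal := by
  haveI := hH; haveI := hK
  exact Subgroup.sup_normal H K

/-- The join of two finite subgroups, one normal, is finite. -/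
lemma finite_sup {H K : Subgroup G} (hK : K.Normal) (hHf : Finite ↥H) (hKf : Finite ↥K) :
    Finite ↥(H ⊔ K) := by
  haveI := hK
  have hset : ((H ⊔ K : Subgroup G) : Set G) = (H : Set G) * (K : Set G) :=
    Subgroup.mul_normal H K
  have : ((H ⊔ K : Subgroup G) : Set G).Finite := by
    rw [hset]
    exact Set.Finite.mul (Set.toFinite _) (Set.toFinite _)
  exact this.to_subtype

/-- Image of a finite subgroup under an automorphism is finite. -/
lemma map_aut_finite {N : Subgroup G} (hNf : Finite ↥N) (χ : G ≃* G) :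
    Finite ↥(N.map χ.toMonoidHom) := by
  have h : ((N.map χ.toMonoidHom : Subgroup G) : Set G) = χ.toMonoidHom '' (N : Set G) :=
    Subgroup.coe_map _ _
  have hfin : ((N.map χ.toMonoidHom : Subgroup G) : Set G).Finite := by
    rw [h]; exact Set.Finite.image _ (Set.toFinite _)
  exact hfin.to_subtype

lemma map_aut_normal {N : Subgroup G} (hN : N.Normal) (χ : G ≃* G) :
    (N.map χ.toMonoidHom).Normal :=
  hN.map χ.toMonoidHom χ.surjective

private lemma cover_aux {N : Subgroup G} (hN : N.Normal) (hNf : Finite ↥N)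
    (F : Finset G) (hmem : ∀ o ∈ F, ∃ χ : G ≃* G, o ∈ N.map χ.toMonoidHom) :
    ∃ P : Subgroup G, P.Normal ∧ Finite ↥P ∧ ∀ o ∈ F, o ∈ P := by
  classical
  induction F using Finset.induction_on with
  | empty => exact ⟨⊥, inferInstance, inferInstance, by simp⟩
  | @insert o F' ho ih =>
    obtain ⟨P', hP'n, hP'f, hP'sub⟩ := ih (fun o' ho' => hmem o' (Finset.mem_insert_of_mem ho'))
    obtain ⟨χ, hχ⟩ := hmem o (Finset.mem_insert_self _ _)
    refine ⟨N.map χ.toMonoidHom ⊔ P', normal_sup (map_aut_normal hN χ) hP'n,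
      finite_sup hP'n (map_aut_finite hNf χ) hP'f, ?_⟩
    intro x hx
    rcases Finset.mem_insert.mp hx with rfl | hx'
    · exact Subgroup.mem_sup_left hχ
    · exact Subgroup.mem_sup_right (hP'sub x hx')

/-- A finite set each of whose elements lies in some automorphic image of a finite normal
subgroup is contained in a finite normal subgroup. -/
lemma exists_finite_normal_cover {N : Subgroup G} (hN : N.Normal) (hNf : Finite ↥N)
    {O : Set G} (hO : O.Finite) (hmem : ∀ o ∈ O, ∃ χ : G ≃* G, o ∈ N.map χ.toMonoidHom) :
    ∃ P : Subgroup G, P.Normal ∧ Finite ↥P ∧ O ⊆ ↑P := by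
  obtain ⟨P, h1, h2, h3⟩ := cover_aux hN hNf hO.toFinset
    (fun o ho => hmem o (hO.mem_toFinset.mp ho))
  exact ⟨P, h1, h2, fun o ho => h3 o (hO.mem_toFinset.mpr ho)⟩


lemma commutator_map_surjective {A B : Type*} [Group A] [Group B] (f : A →* B)
    (hf : Function.Surjective f) : (commutator A).map f = commutator B := by
  unfold commutator
  rw [Subgroup.map_commutator, Subgroup.map_top_of_surjective f hf]

lemma mem_commutator_map {A B : Type*} [Group A] [Group B] (f : A →* B)
    (hf : Function.Surjective f) {x : A} (hx : x ∈ commutator A) : f x ∈ commutator B := by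
  rw [← commutator_map_surjective f hf]
  exact Subgroup.mem_map_of_mem f hx

lemma mem_commutator_equiv {A B : Type*} [Group A] [Group B] (e : A ≃* B)
    {x : A} (hx : x ∈ commutator A) : e x ∈ commutator B :=
  mem_commutator_map e.toMonoidHom e.surjective hx

lemma exists_commutator_preimage {A B : Type*} [Group A] [Group B] (f : A →* B)
    (hf : Function.Surjective f) {y : B} (hy : y ∈ commutator B) :
    ∃ x : A, x ∈ commutator A ∧ f x = y := by
  rw [← commutator_map_surjective f hf] at hy
  obtain ⟨x, hx, hfx⟩ := hy
  exact ⟨x, hx, hfx⟩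

/-- Realize a given order from the commutator subgroup of a surjective image, by powering up
a preimage.  `A` is assumed to have exponent dividing `e`. -/
lemma realize_order {A B : Type*} [Group A] [Group B] {e : ℕ} (he : 1 ≤ e)
    (hexpA : ∀ a : A, a ^ e = 1) (f : A →* B) (hf : Function.Surjective f)
    {y' : B} (hy' : y' ∈ commutator B) :
    ∃ y : A, y ∈ commutator A ∧ orderOf y = orderOf y' := by
  obtain ⟨y₀, hy₀, hfy₀⟩ := exists_commutator_preimage f hf hy'
  have hdm : orderOf y' ∣ orderOf y₀ := by
    rw [← hfy₀]; exact orderOf_map_dvd f y₀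
  set d := orderOf y' with hd
  set m := orderOf y₀ with hm
  have hm0 : m ≠ 0 := by
    have h1 : m ∣ e := orderOf_dvd_of_pow_eq_one (hexpA y₀)
    intro h
    rw [h] at h1
    exact absurd (Nat.eq_zero_of_zero_dvd h1) (by omega)
  have hdiv0 : m / d ≠ 0 := by
    have hd0 : d ≠ 0 := by
      intro h; rw [h] at hdm; exact hm0 (Nat.eq_zero_of_zero_dvd hdm)
    have : d ≤ m := Nat.le_of_dvd (Nat.pos_of_ne_zero hm0) hdm
    exact (Nat.div_ne_zero_iff).mpr ⟨hd0, this⟩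
  refine ⟨y₀ ^ (m / d), Subgroup.pow_mem _ hy₀ _, ?_⟩
  rw [orderOf_pow' _ hdiv0, ← hm]
  have h1 : Nat.gcd m (m / d) = m / d := Nat.gcd_eq_right (Nat.div_dvd_of_dvd hdm)
  rw [h1]
  exact Nat.div_div_self hdm hm0

/-- Quotients inherit the exponent. -/
lemma quotient_exp (M : Subgroup G) (hM : M.Normal) {e : ℕ} (hexp : ∀ g : G, g ^ e = 1) :
    ∀ x : G ⧸ M, x ^ e = 1 := by
  haveI := hM
  intro x
  obtain ⟨g, rfl⟩ := QuotientGroup.mk_surjective x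
  show ((QuotientGroup.mk' M) g) ^ e = 1
  rw [← map_pow, hexp, map_one]

lemma orderOf_ne_zero_of_exp {A : Type*} [Group A] {e : ℕ} (he : 1 ≤ e)
    (hexp : ∀ a : A, a ^ e = 1) (a : A) : orderOf a ≠ 0 := by
  have h1 : orderOf a ∣ e := orderOf_dvd_of_pow_eq_one (hexp a)
  intro h
  rw [h] at h1
  exact absurd (Nat.eq_zero_of_zero_dvd h1) (by omega)

/-- **Core combinatorial lemma.** If every nontrivial element of the finite normal subgroup
`N` has infinite `Aut G`-orbit, then there is no finite "blocking family", i.e. a finite set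
of nontrivial elements such that for every pair of automorphisms `σ, χ` some `σ v` lies in
`χ(N)`. -/
lemma no_blocking {N : Subgroup G} (hNf : Finite ↥N)
    (horb : ∀ g ∈ N, g ≠ (1 : G) → (Set.range fun φ : G ≃* G => φ g).Infinite) :
    ∀ (n : ℕ) (s : Finset G), s.card ≤ n → (∀ v ∈ s, v ≠ (1 : G)) →
      (∀ σ χ : G ≃* G, ∃ v ∈ s, σ v ∈ N.map χ.toMonoidHom) → False := by
  classical
  have hNχfin : ∀ χ : G ≃* G, ((N.map χ.toMonoidHom : Subgroup G) : Set G).Finite := by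
    intro χ; haveI := map_aut_finite hNf χ; exact Set.toFinite _
  intro n
  induction n with
  | zero =>
    intro s hcard _ hblock
    have hs : s = ∅ := Finset.card_eq_zero.mp (Nat.le_antisymm hcard (Nat.zero_le _))
    obtain ⟨v, hv, _⟩ := hblock (MulEquiv.refl G) (MulEquiv.refl G)
    rw [hs] at hv
    exact absurd hv (Finset.notMem_empty v)
  | succ n ih =>
    intro s hcard hne hblock
    rcases Finset.eq_empty_or_nonempty s with rfl | hsne
    · obtain ⟨v, hv, _⟩ := hblock (MulEquiv.refl G) (MulEquiv.refl G)
      exact absurd hv (Finset.notMem_empty v)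
    by_cases hunused : ∃ v₀ ∈ s, ∀ σ χ : G ≃* G, σ v₀ ∉ N.map χ.toMonoidHom
    · -- drop an unused element
      obtain ⟨v₀, hv₀s, hv₀⟩ := hunused
      refine ih (s.erase v₀) ?_ (fun v hv => hne v (Finset.mem_of_mem_erase hv)) ?_
      · have := Finset.card_erase_of_mem hv₀s; omega
      · intro σ χ
        obtain ⟨v, hvs, hvmem⟩ := hblock σ χ
        refine ⟨v, Finset.mem_erase.mpr ⟨?_, hvs⟩, hvmem⟩
        rintro rfl; exact hv₀ σ χ hvmem
    · push_neg at hunused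
      obtain ⟨v₁, hv₁s⟩ := hsne
      obtain ⟨σ₀, χ₀, hused⟩ := hunused v₁ hv₁s
      obtain ⟨n₀, hn₀N, hn₀eq⟩ := Subgroup.mem_map.mp hused
      have hv₁1 : v₁ ≠ 1 := hne v₁ hv₁s
      have hn₀1 : n₀ ≠ 1 := by
        rintro rfl
        apply hv₁1
        have : σ₀ v₁ = 1 := by rw [← hn₀eq]; simp
        exact σ₀.injective (by simpa using this)
      -- the orbit of `v₁` is infinite
      have hinf : (Set.range fun φ : G ≃* G => φ v₁).Infinite := by
        refine (horb n₀ hn₀N hn₀1).mono ?_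
        rintro x ⟨φ, rfl⟩
        refine ⟨σ₀.trans (χ₀.symm.trans φ), ?_⟩
        show φ (χ₀.symm (σ₀ v₁)) = φ n₀
        rw [← hn₀eq]
        simp
      -- extract a sequence of automorphisms with pairwise distinct values at `v₁`
      let emb := hinf.natEmbedding _
      have hsel : ∀ i : ℕ, ∃ φ : G ≃* G, φ v₁ = ((emb i : _) : G) := fun i => (emb i).2
      choose σs hσs using hsel
      have hinj : Function.Injective fun i => σs i v₁ := by
        intro i j hij
        simp only [hσs] at hij
        exact emb.injective (Subtype.ext hij)
      -- inner induction on the number of unprocessed elements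
      have inner : ∀ (m : ℕ) (P : Finset G), P ⊆ s.erase v₁ → P.card ≤ m →
          ∀ (I : Set ℕ), I.Infinite →
          (∀ v ∈ s.erase v₁, v ∉ P → ∀ i ∈ I, ∀ j ∈ I, σs i v = σs j v) → False := by
        intro m
        induction m using Nat.strong_induction_on with
        | _ m ihm =>
        intro P hPsub hPcard I hI hconst
        obtain ⟨i₀, hi₀⟩ := hI.nonempty
        by_cases hA : ∃ χ : G ≃* G, ∀ v ∈ s.erase v₁, v ∉ P → σs i₀ v ∉ N.map χ.toMonoidHom
        · obtain ⟨χ, hχ⟩ := hA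
          have hchoice : ∀ i ∈ I, ∃ w, w ∈ insert v₁ P ∧ σs i w ∈ N.map χ.toMonoidHom := by
            intro i hi
            obtain ⟨v, hvs, hvmem⟩ := hblock (σs i) χ
            by_cases hv1 : v = v₁
            · exact ⟨v₁, Finset.mem_insert_self _ _, hv1 ▸ hvmem⟩
            · have hver : v ∈ s.erase v₁ := Finset.mem_erase.mpr ⟨hv1, hvs⟩
              by_cases hvP : v ∈ P
              · exact ⟨v, Finset.mem_insert_of_mem hvP, hvmem⟩
              · exfalso
                have heqc := hconst v hver hvP i hi i₀ hi₀
                rw [heqc] at hvmem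
                exact hχ v hver hvP hvmem
          let f : ℕ → G := fun i => if h : i ∈ I then (hchoice i h).choose else 1
          have hfmem : ∀ i ∈ I, f i ∈ insert v₁ P ∧ σs i (f i) ∈ N.map χ.toMonoidHom := by
            intro i hi
            simp only [f, dif_pos hi]
            exact (hchoice i hi).choose_spec
          obtain ⟨w, hwmem, hwfib⟩ := exists_infinite_fiber hI f
            (S := ↑(insert v₁ P)) (insert v₁ P).finite_toSet
            (fun i hi => by exact_mod_cast (hfmem i hi).1)
          by_cases hw1 : w = v₁
          · -- contradiction: infinitely many distinct values in the finite set χ(N)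
            have himg : ((fun i => σs i v₁) '' {i | i ∈ I ∧ f i = w}).Infinite :=
              hwfib.image (hinj.injOn)
            have hsub2 : ((fun i => σs i v₁) '' {i | i ∈ I ∧ f i = w}) ⊆
                ↑(N.map χ.toMonoidHom) := by
              rintro x ⟨i, ⟨hiI, hif⟩, rfl⟩
              have h2 := (hfmem i hiI).2
              rw [hif, hw1] at h2
              exact h2
            exact himg ((hNχfin χ).subset hsub2)
          · have hwP : w ∈ P := by
              rcases Finset.mem_insert.mp (by exact_mod_cast hwmem) with h | h
              · exact absurd h hw1
              · exact h
            obtain ⟨b, hbmem, hbfib⟩ := exists_infinite_fiber hwfib (fun i => σs i w)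
              (hNχfin χ)
              (fun i hi => by
                have h2 := (hfmem i hi.1).2
                rw [hi.2] at h2
                exact h2)
            have hPpos : 0 < P.card := Finset.card_pos.mpr ⟨w, hwP⟩
            refine ihm (P.card - 1) (by omega) (P.erase w)
              ((Finset.erase_subset _ _).trans hPsub)
              (by rw [Finset.card_erase_of_mem hwP])
              {i | (i ∈ I ∧ f i = w) ∧ σs i w = b} hbfib ?_
            intro v hver hvPe i hi j hj
            by_cases hvw : v = w
            · subst hvw; rw [hi.2, hj.2]
            · have hvP : v ∉ P := fun h => hvPe (Finset.mem_erase.mpr ⟨hvw, h⟩)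
              exact hconst v hver hvP i hi.1.1 j hj.1.1
        · -- the processed constants themselves form a smaller blocking family
          push_neg at hA
          refine ih (((s.erase v₁).filter (fun v => v ∉ P)).image (σs i₀)) ?_ ?_ ?_
          · calc (((s.erase v₁).filter (fun v => v ∉ P)).image (σs i₀)).card
                ≤ ((s.erase v₁).filter (fun v => v ∉ P)).card := Finset.card_image_le
              _ ≤ (s.erase v₁).card := Finset.card_filter_le _ _
              _ = s.card - 1 := Finset.card_erase_of_mem hv₁s
              _ ≤ n := by omega
          · intro v hv
            obtain ⟨v', hv', rfl⟩ := Finset.mem_image.mp hv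
            have hv'1 : v' ≠ 1 :=
              hne v' (Finset.mem_of_mem_erase (Finset.mem_filter.mp hv').1)
            intro hcontra
            exact hv'1 ((σs i₀).injective (by simpa using hcontra))
          · intro σ χ
            obtain ⟨v, hver, hvP, hvmem⟩ := hA (χ.trans σ.symm)
            refine ⟨σs i₀ v, Finset.mem_image_of_mem _
              (Finset.mem_filter.mpr ⟨hver, hvP⟩), ?_⟩
            obtain ⟨nn, hnnN, hnneq⟩ := Subgroup.mem_map.mp hvmem
            refine Subgroup.mem_map.mpr ⟨nn, hnnN, ?_⟩
            have : σ.symm (χ nn) = σs i₀ v := hnneq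
            calc χ.toMonoidHom nn = σ (σ.symm (χ nn)) := by simp
              _ = σ (σs i₀ v) := by rw [this]
      -- start the inner induction
      exact inner (s.erase v₁).card (s.erase v₁) le_rfl le_rfl Set.univ Set.infinite_univ
        (fun v hver hvP _ _ _ _ => absurd hver hvP)

/-- Case B of the main theorem: if every nontrivial element of `N` has an infinite
`Aut G`-orbit, every order arising in `commutator G` is realized in `commutator (G ⧸ N)`. -/
lemma caseB {e : ℕ} (he : 1 ≤ e) (hexp : ∀ g : G, g ^ e = 1)
    (N : Subgroup G) (hN : N.Normal) (hNf : Finite ↥N)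
    (horb : ∀ g ∈ N, g ≠ (1 : G) → (Set.range fun φ : G ≃* G => φ g).Infinite)
    {x : G} (hx : x ∈ commutator G) :
    haveI := hN
    ∃ y : G ⧸ N, y ∈ commutator (G ⧸ N) ∧ orderOf y = orderOf x := by
  haveI := hN
  classical
  set t := orderOf x with ht
  have ht0 : t ≠ 0 := orderOf_ne_zero_of_exp he hexp x
  by_cases ht1 : t = 1
  · refine ⟨1, Subgroup.one_mem _, ?_⟩
    rw [orderOf_one, ht1]
  by_contra hno
  push_neg at hno
  set s : Finset G := t.primeFactors.image (fun p => x ^ (t / p)) with hs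
  have hne : ∀ v ∈ s, v ≠ (1 : G) := by
    intro v hv
    obtain ⟨p, hp, rfl⟩ := Finset.mem_image.mp hv
    have hpp : p.Prime := Nat.prime_of_mem_primeFactors hp
    have hpd : p ∣ t := Nat.dvd_of_mem_primeFactors hp
    intro hone
    have hdd : t ∣ t / p := orderOf_dvd_of_pow_eq_one hone
    have hlt : t / p < t := Nat.div_lt_self (Nat.pos_of_ne_zero ht0) hpp.one_lt
    have hpos : 0 < t / p := Nat.div_pos (Nat.le_of_dvd (Nat.pos_of_ne_zero ht0) hpd) hpp.pos
    have := Nat.le_of_dvd hpos hdd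
    omega
  have hblock : ∀ σ χ : G ≃* G, ∃ v ∈ s, σ v ∈ N.map χ.toMonoidHom := by
    intro σ χ
    haveI hMn : (N.map χ.toMonoidHom).Normal := map_aut_normal hN χ
    have hσx : σ x ∈ commutator G := by
      have hch : (commutator G).Characteristic := inferInstance
      have hmapeq := Subgroup.characteristic_iff_map_eq.mp hch σ
      rw [← hmapeq]
      exact Subgroup.mem_map_of_mem _ hx
    set z : G ⧸ N.map χ.toMonoidHom := (QuotientGroup.mk' _) (σ x) with hz
    have hz_comm : z ∈ commutator (G ⧸ N.map χ.toMonoidHom) :=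
      mem_commutator_map (QuotientGroup.mk' _) (QuotientGroup.mk'_surjective _) hσx
    have hzdvd : orderOf z ∣ t := by
      have h1 : orderOf z ∣ orderOf (σ x) := orderOf_map_dvd (QuotientGroup.mk' _) (σ x)
      rwa [MulEquiv.orderOf_eq] at h1
    have hzne : orderOf z ≠ t := by
      set eχ : (G ⧸ N) ≃* (G ⧸ N.map χ.toMonoidHom) :=
        QuotientGroup.congr N (N.map χ.toMonoidHom) χ rfl with heχ
      have hy₀ : eχ.symm z ∈ commutator (G ⧸ N) := mem_commutator_equiv eχ.symm hz_comm
      have hne' := hno (eχ.symm z) hy₀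
      rwa [MulEquiv.orderOf_eq] at hne'
    obtain ⟨p, hp, hpt, hdvd⟩ := exists_prime_div (Nat.pos_of_ne_zero ht0) hzdvd hzne
    refine ⟨x ^ (t / p), Finset.mem_image_of_mem _
      (Nat.mem_primeFactors.mpr ⟨hp, hpt, ht0⟩), ?_⟩
    have hz1 : z ^ (t / p) = 1 := orderOf_dvd_iff_pow_eq_one.mp hdvd
    have hz2 : (QuotientGroup.mk' (N.map χ.toMonoidHom)) (σ (x ^ (t / p))) = 1 := by
      rw [map_pow, map_pow]
      exact hz1
    exact (QuotientGroup.eq_one_iff _).mp hz2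
  exact no_blocking hNf horb s.card s le_rfl hne hblock

/-- The subgroup generated by the `Aut`-orbit of an element is characteristic. -/
lemma orbit_closure_char (g : G) :
    (Subgroup.closure (Set.range fun φ : G ≃* G => φ g)).Characteristic := by
  rw [Subgroup.characteristic_iff_map_eq]
  intro φ
  rw [MonoidHom.map_closure]
  congr 1
  ext x
  constructor
  · rintro ⟨y, ⟨ψ, rfl⟩, rfl⟩
    exact ⟨ψ.trans φ, rfl⟩
  · rintro ⟨ψ, rfl⟩
    exact ⟨(ψ.trans φ.symm) g, ⟨ψ.trans φ.symm, rfl⟩, by simp⟩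

universe u

/-- Main auxiliary induction. -/
theorem aux : ∀ (n : ℕ) {G : Type u} [Group G] (e : ℕ), 1 ≤ e → (∀ g : G, g ^ e = 1) →
    ∀ (N : Subgroup G) (hN : N.Normal), Finite ↥N → Nat.card ↥N ≤ n →
    ∃ (H : Subgroup G) (hH : H.Normal), H.Characteristic ∧ Finite ↥H ∧
      CommSpectrumLE H N hH hN := by
  intro n
  induction n with
  | zero =>
    intro G _ e he hexp N hN hNfin hcard
    haveI := hNfin
    haveI : Nonempty ↥N := ⟨⟨1, N.one_mem⟩⟩
    have := Nat.card_pos (α := ↥N)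
    omega
  | succ n ih =>
    intro G _ e he hexp N hN hNfin hcard
    haveI := hN; haveI := hNfin
    by_cases hcase : ∃ g, g ∈ N ∧ g ≠ (1 : G) ∧ ¬ (Set.range fun φ : G ≃* G => φ g).Infinite
    · -- CASE A: some nontrivial element of N has finite orbit; recurse in a quotient
      obtain ⟨g, hgN, hg1, hfin⟩ := hcase
      have horbfin : (Set.range fun φ : G ≃* G => φ g).Finite := Set.not_infinite.mp hfin
      set C : Subgroup G := Subgroup.closure (Set.range fun φ : G ≃* G => φ g) with hCdef
      have hCchar : C.Characteristic := orbit_closure_char g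
      haveI := hCchar
      have hCn : C.Normal := inferInstance
      obtain ⟨P, hPn, hPf, hPsub⟩ := exists_finite_normal_cover hN hNfin horbfin
        (fun o ho => by
          obtain ⟨φ, rfl⟩ := ho
          exact ⟨φ, Subgroup.mem_map_of_mem _ hgN⟩)
      have hCle : C ≤ P := (Subgroup.closure_le _).mpr hPsub
      have hCf : Finite ↥C := by
        haveI := hPf
        have hPfin : (P : Set G).Finite := Set.toFinite _
        exact (hPfin.subset hCle).to_subtype
      have hgC : g ∈ C := Subgroup.subset_closure ⟨MulEquiv.refl G, rfl⟩
      -- quotient setup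
      set mkC : G →* G ⧸ C := QuotientGroup.mk' C with hmkCdef
      have hmkC : Function.Surjective mkC := QuotientGroup.mk'_surjective C
      have hexp' : ∀ x : G ⧸ C, x ^ e = 1 := quotient_exp C hCn hexp
      set N' : Subgroup (G ⧸ C) := N.map mkC with hN'def
      have hN'n : N'.Normal := hN.map mkC hmkC
      have hN'f : Finite ↥N' := by
        have h1 : ((N' : Subgroup (G ⧸ C)) : Set (G ⧸ C)).Finite := by
          rw [hN'def, Subgroup.coe_map]
          exact (Set.toFinite (N : Set G)).image _
        exact h1.to_subtype
      -- strict cardinality decrease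
      have hcard' : Nat.card ↥N' < Nat.card ↥N := by
        set q : ↥N → ↥N' := fun x => ⟨mkC x, Subgroup.mem_map_of_mem _ x.2⟩ with hq
        have hqsurj : Function.Surjective q := by
          rintro ⟨y, hy⟩
          obtain ⟨x, hxN, hxy⟩ := Subgroup.mem_map.mp hy
          exact ⟨⟨x, hxN⟩, Subtype.ext hxy⟩
        have hle : Nat.card ↥N' ≤ Nat.card ↥N := Nat.card_le_card_of_surjective q hqsurj
        rcases Nat.lt_or_ge (Nat.card ↥N') (Nat.card ↥N) with h | h
        · exact h
        · exfalso
          have heq : Nat.card ↥N = Nat.card ↥N' := le_antisymm h hle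
          have hbij : Function.Bijective q :=
            (Nat.bijective_iff_surjective_and_card q).mpr ⟨hqsurj, heq⟩
          have h1 : q ⟨g, hgN⟩ = q ⟨1, N.one_mem⟩ := by
            apply Subtype.ext
            show mkC g = mkC 1
            rw [map_one]
            exact (QuotientGroup.eq_one_iff g).mpr hgC
          have := hbij.injective h1
          rw [Subtype.ext_iff] at this
          exact hg1 this
      -- recurse
      obtain ⟨H', hH'n, hH'char, hH'f, hH'spec⟩ := ih e he hexp' N' hN'n hN'f (by omega)
      haveI := hH'n; haveI := hH'f
      -- pull back
      set H : Subgroup G := H'.comap mkC with hHdef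
      have hHn : H.Normal := hH'n.comap mkC
      have hCH : C ≤ H := by
        intro c hc
        rw [hHdef, Subgroup.mem_comap]
        have h1 : mkC c = 1 := (QuotientGroup.eq_one_iff c).mpr hc
        rw [h1]
        exact H'.one_mem
      have hHchar : H.Characteristic := by
        rw [Subgroup.characteristic_iff_comap_eq]
        intro φ
        have hmapC : C.map φ.toMonoidHom = C := Subgroup.characteristic_iff_map_eq.mp hCchar φ
        set φbar : (G ⧸ C) ≃* (G ⧸ C) := QuotientGroup.congr C C φ hmapC with hφbar
        have h2 : mkC.comp φ.toMonoidHom = (φbar.toMonoidHom).comp mkC := by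
          ext x
          show mkC (φ x) = φbar (mkC x)
          rw [hφbar]
          exact (QuotientGroup.congr_mk C C φ hmapC x).symm
        rw [hHdef, Subgroup.comap_comap, h2, ← Subgroup.comap_comap]
        rw [Subgroup.characteristic_iff_comap_eq.mp hH'char φbar]
      have hHf : Finite ↥H := by
        haveI := hCf
        have hsec : ∀ y : ↥H', ∃ x : G, x ∈ H ∧ mkC x = (y : (G ⧸ C)) := by
          intro y
          obtain ⟨x, hxy⟩ := hmkC (y : (G ⧸ C))
          refine ⟨x, ?_, hxy⟩
          have : mkC x ∈ H' := by rw [hxy]; exact y.2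
          exact Subgroup.mem_comap.mpr this
        choose sec hsecH hseceq using hsec
        have hfst : ∀ h : ↥H, mkC (h : G) ∈ H' := fun h => Subgroup.mem_comap.mp h.2
        have hmemC : ∀ h : ↥H, (h : G) * (sec ⟨mkC (h : G), hfst h⟩)⁻¹ ∈ C := by
          intro h
          have h1 : mkC ((h : G) * (sec ⟨mkC (h : G), hfst h⟩)⁻¹) = 1 := by
            rw [map_mul, map_inv, hseceq]
            simp
          exact (QuotientGroup.eq_one_iff _).mp h1
        set F : ↥H → ↥H' × ↥C := fun h =>
          (⟨mkC (h : G), hfst h⟩, ⟨(h : G) * (sec ⟨mkC (h : G), hfst h⟩)⁻¹, hmemC h⟩) with hF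
        have hFinj : Function.Injective F := by
          intro h₁ h₂ hFeq
          rw [hF] at hFeq
          have hfsteq := congrArg Prod.fst hFeq
          have hsndeq := congrArg Prod.snd hFeq
          simp only at hfsteq hsndeq
          rw [Subtype.ext_iff] at hfsteq hsndeq
          simp only at hfsteq hsndeq
          have hargeq : (⟨mkC (h₁ : G), hfst h₁⟩ : ↥H') = ⟨mkC (h₂ : G), hfst h₂⟩ :=
            Subtype.ext hfsteq
          apply Subtype.ext
          rw [hargeq] at hsndeq
          exact mul_right_cancel hsndeq
        exact Finite.of_injective F hFinj
      refine ⟨H, hHn, hHchar, hHf, ?_⟩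
      -- the spectrum property
      intro x hx
      haveI : (H.map mkC).Normal := by
        rw [Subgroup.map_comap_eq_self_of_surjective hmkC H']
        exact hH'n
      set e₁ : ((G ⧸ C) ⧸ (H.map mkC)) ≃* (G ⧸ H) :=
        QuotientGroup.quotientQuotientEquivQuotient C H hCH with he₁
      have hHmap : H.map mkC = H' := Subgroup.map_comap_eq_self_of_surjective hmkC H'
      set eH : ((G ⧸ C) ⧸ (H.map mkC)) ≃* ((G ⧸ C) ⧸ H') :=
        QuotientGroup.congr (H.map mkC) H' (MulEquiv.refl _) (by
          rw [MulEquiv.coe_monoidHom_refl, Subgroup.map_id]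
          exact hHmap) with heH
      -- transport x
      have hx₂ : e₁.symm x ∈ commutator ((G ⧸ C) ⧸ (H.map mkC)) :=
        mem_commutator_equiv e₁.symm hx
      have hx₃ : eH (e₁.symm x) ∈ commutator ((G ⧸ C) ⧸ H') :=
        mem_commutator_equiv eH hx₂
      obtain ⟨yhat, hyhat_comm, hyhat_ord⟩ := hH'spec (eH (e₁.symm x)) hx₃
      -- yhat : (G ⧸ C) ⧸ N', orderOf yhat = orderOf (eH (e₁.symm x)) = orderOf x
      have hyhat_ord' : orderOf yhat = orderOf x := by
        rw [hyhat_ord, MulEquiv.orderOf_eq, MulEquiv.orderOf_eq]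
      -- transport yhat to G ⧸ (C ⊔ N)
      have hCsupN : (C ⊔ N).Normal := normal_sup hCn hN
      haveI := hCsupN
      have hmapsup : (C ⊔ N).map mkC = N' := by
        rw [Subgroup.map_sup]
        have h1 : C.map mkC = ⊥ := by
          rw [eq_bot_iff]
          rintro y ⟨c, hc, rfl⟩
          rw [Subgroup.mem_bot]
          exact (QuotientGroup.eq_one_iff c).mpr hc
        rw [h1, hN'def, bot_sup_eq]
      haveI : ((C ⊔ N).map mkC).Normal := by rw [hmapsup]; exact hN'n
      set eN : ((G ⧸ C) ⧸ N') ≃* ((G ⧸ C) ⧸ ((C ⊔ N).map mkC)) :=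
        QuotientGroup.congr N' ((C ⊔ N).map mkC) (MulEquiv.refl _) (by
          rw [MulEquiv.coe_monoidHom_refl, Subgroup.map_id]
          exact hmapsup.symm) with heN
      set e₂ : ((G ⧸ C) ⧸ ((C ⊔ N).map mkC)) ≃* (G ⧸ (C ⊔ N)) :=
        QuotientGroup.quotientQuotientEquivQuotient C (C ⊔ N) le_sup_left with he₂
      have hy' : e₂ (eN yhat) ∈ commutator (G ⧸ (C ⊔ N)) :=
        mem_commutator_equiv e₂ (mem_commutator_equiv eN hyhat_comm)
      have hy'ord : orderOf (e₂ (eN yhat)) = orderOf x := by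
        rw [MulEquiv.orderOf_eq, MulEquiv.orderOf_eq, hyhat_ord']
      -- realize the order in commutator (G ⧸ N)
      set π : (G ⧸ N) →* (G ⧸ (C ⊔ N)) :=
        QuotientGroup.map N (C ⊔ N) (MonoidHom.id G) (by
          rw [Subgroup.comap_id]; exact le_sup_right) with hπ
      have hπsurj : Function.Surjective π := by
        intro z
        obtain ⟨gz, rfl⟩ := QuotientGroup.mk'_surjective (C ⊔ N) z
        exact ⟨QuotientGroup.mk gz, by rw [hπ]; rfl⟩
      obtain ⟨y, hy_comm, hy_ord⟩ := realize_order he (quotient_exp N hN hexp) π hπsurj hy'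
      exact ⟨y, hy_comm, by rw [hy_ord, hy'ord]⟩
    · -- CASE B: all nontrivial elements of N have infinite orbit; H = ⊥ works
      push_neg at hcase
      have horb : ∀ g ∈ N, g ≠ (1 : G) → (Set.range fun φ : G ≃* G => φ g).Infinite := by
        intro g hg hg1
        exact hcase g hg hg1
      refine ⟨⊥, inferInstance, inferInstance, inferInstance, ?_⟩
      intro x hx
      set e₀ : (G ⧸ (⊥ : Subgroup G)) ≃* G := QuotientGroup.quotientBot with he₀
      have hx' : e₀ x ∈ commutator G := mem_commutator_equiv e₀ hx
      obtain ⟨y, hy_comm, hy_ord⟩ := caseB he hexp N hN hNfin horb hx'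
      exact ⟨y, hy_comm, by rw [hy_ord, MulEquiv.orderOf_eq]⟩


end Stmt12Helper

/-- **Spectrum theorem for commutator subgroups.** For any finite normal subgroup `N` of a
group `G` of bounded exponent, there is a characteristic finite subgroup `H` of `G` such
that every element of the commutator subgroup of `G/H` has the same order as some element
of the commutator subgroup of `G/N`. -/
theorem stmt_12 {G : Type*} [Group G] (e : ℕ) (he : 1 ≤ e)
    (hexp : ∀ g : G, g ^ e = 1)
    (N : Subgroup G) (hN : N.Normal) (hNfin : Finite ↥N) :
    ∃ (H : Subgroup G) (hH : H.Normal), H.Characteristic ∧ Finite ↥H ∧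
      CommSpectrumLE H N hH hN :=
  Stmt12Helper.aux (Nat.card ↥N) e he hexp N hN hNfin le_rfl
end

section
/- There exists a group G having a normal abelian subgroup N such that the quotient G/N is countable, but such that there is no characteristic subgroup H of G which is abelian and for which the quotient G/H is countable. -/
namespace Cornulier

/-- Pairing between `ℕ → ZMod 2` and finitely supported `ℕ →₀ ZMod 2`. -/
def B (v : ℕ → ZMod 2) (w : ℕ →₀ ZMod 2) : ZMod 2 := w.sum fun i a => a * v i

lemma B_zero_right (v : ℕ → ZMod 2) : B v 0 = 0 := Finsupp.sum_zero_index

lemma B_zero_left (w : ℕ →₀ ZMod 2) : B 0 w = 0 := by simp [B]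

lemma B_add_right (v : ℕ → ZMod 2) (w w' : ℕ →₀ ZMod 2) :
    B v (w + w') = B v w + B v w' :=
  Finsupp.sum_add_index (by simp) (by intros; ring)

lemma B_add_left (v v' : ℕ → ZMod 2) (w : ℕ →₀ ZMod 2) :
    B (v + v') w = B v w + B v' w := by
  simp only [B, Pi.add_apply, mul_add]
  exact Finsupp.sum_add

lemma B_single (v : ℕ → ZMod 2) (i : ℕ) (c : ZMod 2) :
    B v (Finsupp.single i c) = c * v i :=
  Finsupp.sum_single_index (by simp)

/-- embedding `ZMod 2 → ZMod 4` doubling. -/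
def d (x : ZMod 2) : ZMod 4 := 2 * x.val

/-- set-theoretic section `ZMod 2 → ZMod 4`. -/
def e (x : ZMod 2) : ZMod 4 := x.val

lemma d_add : ∀ x y : ZMod 2, d (x + y) = d x + d y := by decide
lemma d_zero : d 0 = 0 := by decide
lemma d_one : d 1 = 2 := by decide
lemma e_add : ∀ x y : ZMod 2, e (x + y) = e x + e y + d (x * y) := by decide

@[ext] structure GG where
  v : ℕ → ZMod 2
  w : ℕ →₀ ZMod 2
  t : ZMod 4

lemma vself (v : ℕ → ZMod 2) : v + v = 0 := by
  funext i; exact CharTwo.add_self_eq_zero _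

lemma wself (w : ℕ →₀ ZMod 2) : w + w = 0 := by
  ext i; simp [CharTwo.add_self_eq_zero]

noncomputable instance : Mul GG := ⟨fun g h => ⟨g.v + h.v, g.w + h.w, g.t + h.t + d (B g.v h.w)⟩⟩
instance : One GG := ⟨⟨0, 0, 0⟩⟩
noncomputable instance : Inv GG := ⟨fun g => ⟨g.v, g.w, -g.t - d (B g.v g.w)⟩⟩

@[simp] lemma mul_v (g h : GG) : (g * h).v = g.v + h.v := rfl
@[simp] lemma mul_w (g h : GG) : (g * h).w = g.w + h.w := rfl
@[simp] lemma mul_t (g h : GG) : (g * h).t = g.t + h.t + d (B g.v h.w) := rfl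
@[simp] lemma one_v : (1 : GG).v = 0 := rfl
@[simp] lemma one_w : (1 : GG).w = 0 := rfl
@[simp] lemma one_t : (1 : GG).t = 0 := rfl
@[simp] lemma inv_v (g : GG) : g⁻¹.v = g.v := rfl
@[simp] lemma inv_w (g : GG) : g⁻¹.w = g.w := rfl
@[simp] lemma inv_t (g : GG) : g⁻¹.t = -g.t - d (B g.v g.w) := rfl

noncomputable instance : Group GG where
  mul_assoc a b c := by
    ext : 1
    · simp [add_assoc]
    · simp [add_assoc]
    · simp only [mul_t, mul_v, mul_w, B_add_left, B_add_right, d_add]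
      abel
  one_mul a := by ext : 1 <;> simp [B_zero_left, d_zero]
  mul_one a := by ext : 1 <;> simp [B_zero_right, d_zero]
  inv_mul_cancel a := by
    ext : 1
    · simp [vself]
    · simp [wself]
    · simp only [mul_t, inv_t, inv_v, one_t]
      abel

/-- projection to the `w` coordinate. -/
noncomputable def Wproj : GG →* Multiplicative (ℕ →₀ ZMod 2) where
  toFun g := Multiplicative.ofAdd g.w
  map_one' := rfl
  map_mul' _ _ := rfl

noncomputable def NN : Subgroup GG := Wproj.ker

lemma mem_NN {g : GG} : g ∈ NN ↔ g.w = 0 := Iff.rfl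

/-- The transvection automorphisms. -/
noncomputable def phi (i : ℕ) : GG ≃* GG where
  toFun g := ⟨g.v, g.w + Finsupp.single i (g.v i), g.t + e (g.v i)⟩
  invFun g := ⟨g.v, g.w + Finsupp.single i (g.v i), g.t - e (g.v i)⟩
  left_inv g := by
    ext : 1
    · rfl
    · show g.w + Finsupp.single i (g.v i) + Finsupp.single i (g.v i) = g.w
      rw [add_assoc, wself, add_zero]
    · show g.t + e (g.v i) - e (g.v i) = g.t
      abel
  right_inv g := by
    ext : 1
    · rfl
    · show g.w + Finsupp.single i (g.v i) + Finsupp.single i (g.v i) = g.w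
      rw [add_assoc, wself, add_zero]
    · show g.t - e (g.v i) + e (g.v i) = g.t
      abel
  map_mul' g h := by
    ext : 1
    · rfl
    · show (g * h).w + Finsupp.single i ((g * h).v i) =
        (g.w + Finsupp.single i (g.v i)) + (h.w + Finsupp.single i (h.v i))
      simp only [mul_w, mul_v, Pi.add_apply, Finsupp.single_add]
      abel
    · show (g * h).t + e ((g * h).v i) =
        (g.t + e (g.v i)) + (h.t + e (h.v i)) +
          d (B g.v (h.w + Finsupp.single i (h.v i)))
      simp only [mul_t, mul_v, Pi.add_apply, e_add, B_add_right, B_single, d_add]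
      rw [mul_comm (g.v i) (h.v i)]
      abel

end Cornulier

open Cornulier in
/-- **Cornulier's example.** There is a group `G` with a normal abelian subgroup `N` such
that `G/N` is countable, but with no characteristic abelian subgroup `H` such that `G/H` is
countable. -/
theorem stmt_13 :
    ∃ (G : Type) (_ : Group G) (N : Subgroup G),
      N.Normal ∧ (∀ x y : ↥N, x * y = y * x) ∧ Countable (G ⧸ N) ∧
      ¬ ∃ H : Subgroup G, H.Characteristic ∧ (∀ x y : ↥H, x * y = y * x) ∧
          Countable (G ⧸ H) := by
  refine ⟨GG, inferInstance, NN, MonoidHom.normal_ker Wproj, ?_, ?_, ?_⟩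
  · -- NN is abelian
    rintro ⟨x, hx⟩ ⟨y, hy⟩
    rw [mem_NN] at hx hy
    apply Subtype.ext
    show x * y = y * x
    ext : 1
    · simp [add_comm]
    · simp [hx, hy]
    · simp [hx, hy, B_zero_right, add_comm]
  · -- countable quotient
    haveI : Countable (Multiplicative (ℕ →₀ ZMod 2)) :=
      Countable.of_equiv _ Multiplicative.ofAdd
    exact Countable.of_equiv _ (QuotientGroup.quotientKerEquivRange Wproj).symm.toEquiv
  · rintro ⟨H, hchar, hab, hcount⟩
    -- every element of H has trivial v-part
    have key : ∀ g ∈ H, ∀ i, g.v i = 0 := by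
      intro g hg i
      by_contra hne
      have hv : g.v i = 1 := by
        have : ∀ x : ZMod 2, x ≠ 0 → x = 1 := by decide
        exact this _ hne
      have h1 : phi i g ∈ H := by
        rw [← hchar.fixed (phi i)] at hg
        exact hg
      set k := phi i g * g⁻¹ with hk
      have hkH : k ∈ H := H.mul_mem h1 (H.inv_mem hg)
      have hkv : k.v = 0 := by
        show (phi i g).v + g⁻¹.v = 0
        exact vself g.v
      have hkw : k.w = Finsupp.single i 1 := by
        show (g.w + Finsupp.single i (g.v i)) + g⁻¹.w = Finsupp.single i 1
        rw [hv, inv_w, add_comm g.w (Finsupp.single i 1), add_assoc, wself, add_zero]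
      have hcomm : k * g = g * k := by
        have := hab ⟨k, hkH⟩ ⟨g, hg⟩
        exact congrArg Subtype.val this
      clear_value k
      have ht : (k * g).t = (g * k).t := congrArg GG.t hcomm
      rw [mul_t, mul_t, hkv, hkw, B_zero_left, d_zero, add_zero, B_single, hv,
        one_mul, d_one, add_comm k.t g.t] at ht
      have h2 : (2 : ZMod 4) = 0 := left_eq_add.mp ht
      exact absurd h2 (by decide)
    -- hence H is countable
    have hHc : Countable ↥H := by
      have inj : Function.Injective (fun h : ↥H => ((h : GG).w, (h : GG).t)) := by
        intro a b hab2
        apply Subtype.ext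
        ext : 1
        · funext j
          rw [key _ a.2 j, key _ b.2 j]
        · exact congrArg Prod.fst hab2
        · exact congrArg Prod.snd hab2
      exact inj.countable
    have hGc : Countable GG :=
      Countable.of_equiv _ (Subgroup.groupEquivQuotientProdSubgroup (s := H)).symm
    -- but GG is uncountable
    have hVc : Countable (ℕ → ZMod 2) := by
      have inj : Function.Injective (fun v : ℕ → ZMod 2 => (⟨v, 0, 0⟩ : GG)) := by
        intro a b h
        exact congrArg GG.v h
      exact inj.countable
    obtain ⟨f, hf⟩ := exists_surjective_nat (ℕ → ZMod 2)
    obtain ⟨n, hn⟩ := hf (fun m => f m m + 1)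
    have hdiag : f n n = f n n + 1 := congrFun hn n
    have : (1 : ZMod 2) = 0 := (left_eq_add.mp hdiag)
    exact absurd this (by decide)
end

section
/- There exists a group G having a finite normal subgroup N such that every element of the quotient group G/N is a square (for every x in G/N there is y in G/N with x = y²), while there is no finite characteristic subgroup H of G such that every element of the quotient group G/H is a square. -/
private abbrev Dd : Type := ℕ → AddCircle (1:ℝ)
private abbrev Aa : Type := ZMod 2 × Dd

private noncomputable def sn (n : ℕ) : Dd := Pi.single n (((1/2 : ℝ) : AddCircle (1:ℝ)))

private lemma half_ne_zero : (((1/2 : ℝ) : AddCircle (1:ℝ))) ≠ 0 := by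
  intro h
  rw [AddCircle.coe_eq_zero_iff] at h
  obtain ⟨n, hn⟩ := h
  have : (n : ℝ) = 1/2 := by simpa using hn
  have h2 : ((2*n : ℤ) : ℝ) = (1:ℤ) := by push_cast; linarith
  have := Int.cast_injective h2
  omega

private lemma two_smul_sn (n : ℕ) : (2:ℤ) • sn n = 0 := by
  funext m
  simp only [Pi.smul_apply, Pi.zero_apply, sn]
  by_cases h : m = n
  · subst h
    rw [Pi.single_eq_same]
    rw [two_zsmul, ← AddCircle.coe_add]
    norm_num
  · rw [Pi.single_eq_of_ne h, smul_zero]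

private noncomputable def psi (n : ℕ) : ZMod 2 →+ Dd :=
  ZMod.lift 2 ⟨zmultiplesHom Dd (sn n), by
    show ((2:ℤ) • sn n) = 0
    exact two_smul_sn n⟩

private lemma psi_one (n : ℕ) : psi n 1 = sn n := by
  have : ((1:ℤ) : ZMod 2) = 1 := by norm_cast
  rw [psi, ← this, ZMod.lift_coe]
  simp

private lemma psi_self_add (n : ℕ) (a : ZMod 2) : psi n a + psi n a = 0 := by
  rw [← map_add]
  have : a + a = 0 := by
    have h : a + a = 2 * a := by ring
    rw [h]
    rw [show (2 : ZMod 2) = 0 by decide, zero_mul]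
  rw [this, map_zero]

private noncomputable def phi (n : ℕ) : Aa ≃+ Aa where
  toFun p := (p.1, p.2 + psi n p.1)
  invFun p := (p.1, p.2 + psi n p.1)
  left_inv p := by
    simp only
    ext
    · rfl
    · rw [add_assoc, psi_self_add, add_zero]
  right_inv p := by
    simp only
    ext
    · rfl
    · rw [add_assoc, psi_self_add, add_zero]
  map_add' p q := by
    simp only [Prod.fst_add, Prod.snd_add, map_add, Prod.mk_add_mk, Prod.mk.injEq]
    exact ⟨trivial, by abel⟩

/-- There is a group `G` with a finite normal subgroup `N` such that every element of `G/N`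
is a square, but with no finite characteristic subgroup `H` such that every element of `G/H`
is a square. -/
theorem stmt_14 :
    ∃ (G : Type) (_ : Group G) (N : Subgroup G) (hN : N.Normal),
      Finite ↥N ∧
      (haveI := hN; ∀ x : G ⧸ N, ∃ y : G ⧸ N, y ^ 2 = x) ∧
      ¬ ∃ (H : Subgroup G) (hH : H.Normal), H.Characteristic ∧ Finite ↥H ∧
          (haveI := hH; ∀ x : G ⧸ H, ∃ y : G ⧸ H, y ^ 2 = x) := by
  refine ⟨Multiplicative Aa, inferInstance,
    AddSubgroup.toSubgroup ((⊤ : AddSubgroup (ZMod 2)).prod (⊥ : AddSubgroup Dd)),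
    inferInstance, ?_, ?_, ?_⟩
  · -- Finite N
    refine Finite.of_injective
      (fun x : AddSubgroup.toSubgroup ((⊤ : AddSubgroup (ZMod 2)).prod (⊥ : AddSubgroup Dd)) =>
        (Multiplicative.toAdd (x : Multiplicative Aa)).1) ?_
    rintro ⟨x, hx⟩ ⟨y, hy⟩ h
    have hx2 : (Multiplicative.toAdd x).2 = 0 := by
      have := (AddSubgroup.mem_prod.mp hx).2
      exact AddSubgroup.mem_bot.mp this
    have hy2 : (Multiplicative.toAdd y).2 = 0 := by
      have := (AddSubgroup.mem_prod.mp hy).2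
      exact AddSubgroup.mem_bot.mp this
    apply Subtype.ext
    have : Multiplicative.toAdd x = Multiplicative.toAdd y := by
      ext
      · exact h
      · rw [hx2, hy2]
    exact Multiplicative.toAdd.injective this
  · -- squares in quotient
    intro x
    obtain ⟨g, rfl⟩ := QuotientGroup.mk_surjective x
    have hc : ∀ c : AddCircle (1:ℝ), ∃ h, h + h = c := by
      intro c
      obtain ⟨r, rfl⟩ := QuotientAddGroup.mk_surjective c
      exact ⟨((r/2 : ℝ) : AddCircle (1:ℝ)), by rw [← AddCircle.coe_add]; norm_num⟩
    set a := Multiplicative.toAdd g with ha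
    set f₂ : Dd := fun m => Classical.choose (hc (a.2 m)) with hf₂
    refine ⟨QuotientGroup.mk (Multiplicative.ofAdd ((0 : ZMod 2), f₂)), ?_⟩
    rw [sq, ← QuotientGroup.mk_mul, QuotientGroup.eq]
    refine (show ∀ z : Multiplicative Aa,
      z ∈ AddSubgroup.toSubgroup ((⊤ : AddSubgroup (ZMod 2)).prod (⊥ : AddSubgroup Dd))
        ↔ Multiplicative.toAdd z ∈ ((⊤ : AddSubgroup (ZMod 2)).prod (⊥ : AddSubgroup Dd))
      from fun z => Iff.rfl) _ |>.mpr ?_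
    refine AddSubgroup.mem_prod.mpr ⟨trivial, ?_⟩
    rw [AddSubgroup.mem_bot]
    show -(f₂ + f₂) + a.2 = 0
    funext m
    have hs : f₂ m + f₂ m = a.2 m := Classical.choose_spec (hc (a.2 m))
    show -(f₂ m + f₂ m) + a.2 m = 0
    rw [hs, neg_add_cancel]
  · -- no finite characteristic H
    rintro ⟨H, hHn, hchar, hfin, hsq⟩
    set e : Multiplicative Aa := Multiplicative.ofAdd ((1:ZMod 2), (0:Dd)) with he
    obtain ⟨y, hy⟩ := hsq (QuotientGroup.mk e)
    obtain ⟨g, rfl⟩ := QuotientGroup.mk_surjective y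
    rw [sq, ← QuotientGroup.mk_mul, QuotientGroup.eq] at hy
    set h₀ : Multiplicative Aa := (g * g)⁻¹ * e with hh₀
    set a := Multiplicative.toAdd g with ha
    have hfst : (Multiplicative.toAdd h₀).1 = 1 := by
      show -(a.1 + a.1) + 1 = 1
      have : a.1 + a.1 = 0 := by
        have h2 : a.1 + a.1 = 2 * a.1 := by ring
        rw [h2, show (2 : ZMod 2) = 0 by decide, zero_mul]
      rw [this, neg_zero, zero_add]
    set d : Dd := (Multiplicative.toAdd h₀).2 with hd
    have hmem : ∀ n : ℕ, (Multiplicative.ofAdd ((1 : ZMod 2), d + sn n)) ∈ H := by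
      intro n
      have hfix := hchar.fixed (AddEquiv.toMultiplicative (phi n))
      have : h₀ ∈ H.comap (AddEquiv.toMultiplicative (phi n)).toMonoidHom := by
        rw [hfix]; exact hy
      have hmem' := Subgroup.mem_comap.mp this
      have heq : (AddEquiv.toMultiplicative (phi n)).toMonoidHom h₀
          = Multiplicative.ofAdd ((1 : ZMod 2), d + sn n) := by
        show Multiplicative.ofAdd ((phi n) (Multiplicative.toAdd h₀)) = _
        congr 1
        show ((Multiplicative.toAdd h₀).1,
          (Multiplicative.toAdd h₀).2 + psi n (Multiplicative.toAdd h₀).1) = _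
        rw [hfst, psi_one, ← hd]
      rwa [heq] at hmem'
    have hinj : Function.Injective (fun n : ℕ =>
        (⟨Multiplicative.ofAdd ((1 : ZMod 2), d + sn n), hmem n⟩ : H)) := by
      intro n m hnm
      by_contra hne
      have h1 : Multiplicative.ofAdd ((1 : ZMod 2), d + sn n)
          = Multiplicative.ofAdd ((1 : ZMod 2), d + sn m) := congrArg Subtype.val hnm
      have h2 : d + sn n = d + sn m := congrArg (fun z => (Multiplicative.toAdd z).2) h1
      have h3 : sn n = sn m := by
        have := congrArg (fun w => -d + w) h2
        simpa [← add_assoc] using this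
      have h4 := congrArg (fun f => f n) h3
      simp only [sn, Pi.single_eq_same, Pi.single_eq_of_ne hne] at h4
      exact half_ne_zero h4
    have := Finite.of_injective _ hinj
    exact not_finite ℕ
end

section
/- Let G be a simple graph and let Γ₁,…,Γ_l be finitely many finite simple graphs (the forbidden graphs), each having at most t edges, where t ≥ 1. Suppose there is a finite set N̄ of edges of G such that the graph obtained from G by deleting the edges in N̄ contains no subgraph isomorphic to any Γᵢ. Then there exists a finite set H̄ of edges of G such that: (1) H̄ is invariant under every automorphism of G, i.e., every automorphism of G maps the set of edges H̄ onto itself; (2) the graph obtained from G by deleting the edges in H̄ contains no subgraph isomorphic to any Γᵢ; (3) |H̄| ≤ f^{t−1}(|N̄|); (4) if H̄ is nonempty then H̄ ∩ N̄ is nonempty. -/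
namespace Stmt15Aux

variable {α β : Type*}

/-- `T` is a transversal of the set family `C`. -/
def IsTv (C : Set (Set α)) (T : Set α) : Prop := ∀ K ∈ C, (K ∩ T).Nonempty

/-- Critical elements: `e` such that some transversal `T` of size at most `n`
meets some member `K` exactly in `{e}`. -/
def Crit (C : Set (Set α)) (n : ℕ) : Set α :=
  {e | ∃ T : Set α, IsTv C T ∧ T.Finite ∧ T.ncard ≤ n ∧ ∃ K ∈ C, K ∩ T = {e}}

/-- The recursion `B 0 = n`, `B (t+1) = n + n * B t`. -/
def Bb (n : ℕ) : ℕ → ℕ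
  | 0 => n
  | t + 1 => n + n * Bb n t

lemma le_iter (n : ℕ) : ∀ t, n ≤ (fun x : ℕ => x * (x + 1))^[t] n := by
  intro t
  induction t with
  | zero => simp
  | succ t ih =>
    rw [Function.iterate_succ_apply']
    refine ih.trans ?_
    set m := (fun x : ℕ => x * (x + 1))^[t] n
    show m ≤ m * (m + 1)
    nlinarith

lemma Bb_le_iter (n : ℕ) : ∀ t, Bb n t ≤ (fun x : ℕ => x * (x + 1))^[t] n := by
  intro t
  induction t with
  | zero => simp [Bb]
  | succ t ih =>
    rw [Function.iterate_succ_apply']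
    have h1 : n ≤ (fun x : ℕ => x * (x + 1))^[t] n := le_iter n t
    set m := (fun x : ℕ => x * (x + 1))^[t] n
    show n + n * Bb n t ≤ m * (m + 1)
    nlinarith

lemma ncard_biUnion_le (s : Finset β) (F : β → Set α) (m : ℕ)
    (hcard : ∀ b ∈ s, (F b).ncard ≤ m) :
    (⋃ b ∈ s, F b).ncard ≤ s.card * m := by
  classical
  induction s using Finset.induction with
  | empty => simp
  | @insert a s ha ih =>
    have : (⋃ b ∈ insert a s, F b) = F a ∪ ⋃ b ∈ s, F b := by
      simp [Set.biUnion_insert]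
    rw [this, Finset.card_insert_of_notMem ha]
    calc (F a ∪ ⋃ b ∈ s, F b).ncard ≤ (F a).ncard + (⋃ b ∈ s, F b).ncard :=
          Set.ncard_union_le _ _
      _ ≤ m + s.card * m := by
          gcongr
          · exact hcard a (Finset.mem_insert_self a s)
          · exact ih fun b hb => hcard b (Finset.mem_insert_of_mem hb)
      _ = (s.card + 1) * m := by ring

lemma crit_bound : ∀ t, 1 ≤ t → ∀ (C : Set (Set α)) (n : ℕ),
    (∀ K ∈ C, K.Finite ∧ K.ncard ≤ t) →
    (Crit C n).Finite ∧ (Crit C n).ncard ≤ Bb n (t - 1) := by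
  intro t ht
  induction t, ht using Nat.le_induction with
  | base =>
    intro C n hsize
    rcases Set.eq_empty_or_nonempty (Crit C n) with hE | hE
    · simp [hE]
    obtain ⟨e₀, T₀, hT₀tv, hT₀fin, hT₀card, _⟩ := hE
    have hsub : Crit C n ⊆ T₀ := by
      rintro e ⟨T, hTtv, hTfin, hTcard, K, hKC, hKT⟩
      have heKT : e ∈ K ∩ T := by rw [hKT]; rfl
      obtain ⟨x, hxK, hxT₀⟩ := hT₀tv K hKC
      have hxe : x = e :=
        (Set.ncard_le_one (hsize K hKC).1).mp (hsize K hKC).2 x hxK e heKT.1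
      rwa [← hxe]
    exact ⟨hT₀fin.subset hsub,
      le_trans (Set.ncard_le_ncard hsub hT₀fin) hT₀card⟩
  | succ t ht ih =>
    intro C n hsize
    rcases Set.eq_empty_or_nonempty (Crit C n) with hE | hE
    · simp [hE]
    obtain ⟨e₀, T₀, hT₀tv, hT₀fin, hT₀card, _⟩ := hE
    -- trace families
    set D : α → Set (Set α) := fun g => {S | ∃ K ∈ C, g ∈ K ∧ S = K \ {g}} with hD
    have hDsize : ∀ g, ∀ S ∈ D g, S.Finite ∧ S.ncard ≤ t := by
      rintro g S ⟨K, hKC, hgK, rfl⟩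
      obtain ⟨hKfin, hKcard⟩ := hsize K hKC
      refine ⟨hKfin.diff, ?_⟩
      have : (K \ {g}).ncard = K.ncard - 1 := by
        rw [← Set.ncard_diff_singleton_add_one hgK hKfin]
        omega
      omega
    have hDres : ∀ g, (Crit (D g) n).Finite ∧ (Crit (D g) n).ncard ≤ Bb n (t - 1) :=
      fun g => ih (D g) n (hDsize g)
    -- covering of Crit
    have hsub : Crit C n ⊆ T₀ ∪ ⋃ g ∈ hT₀fin.toFinset, Crit (D g) n := by
      rintro e ⟨T, hTtv, hTfin, hTcard, K, hKC, hKT⟩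
      by_cases heT₀ : e ∈ T₀
      · exact Or.inl heT₀
      obtain ⟨g, hgK, hgT₀⟩ := hT₀tv K hKC
      have hge : g ≠ e := fun h => heT₀ (h ▸ hgT₀)
      have hgT : g ∉ T := by
        intro hgT
        have : g ∈ K ∩ T := ⟨hgK, hgT⟩
        rw [hKT] at this
        exact hge this
      refine Or.inr (Set.mem_biUnion (hT₀fin.mem_toFinset.mpr hgT₀) ?_)
      refine ⟨T, ?_, hTfin, hTcard, K \ {g}, ⟨K, hKC, hgK, rfl⟩, ?_⟩
      · rintro S ⟨K', hK'C, hgK', rfl⟩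
        obtain ⟨x, hxK', hxT⟩ := hTtv K' hK'C
        exact ⟨x, ⟨hxK', fun hx => hgT (hx ▸ hxT)⟩, hxT⟩
      · ext x
        simp only [Set.mem_inter_iff, Set.mem_diff, Set.mem_singleton_iff]
        constructor
        · rintro ⟨⟨hxK, _⟩, hxT⟩
          have : x ∈ K ∩ T := ⟨hxK, hxT⟩
          rw [hKT] at this
          exact this
        · intro hx
          have hmem : e ∈ K ∩ T := by rw [hKT]; rfl
          rw [hx]
          exact ⟨⟨hmem.1, fun h => hge h.symm⟩, hmem.2⟩
    have hfinU : (T₀ ∪ ⋃ g ∈ hT₀fin.toFinset, Crit (D g) n).Finite := by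
      refine hT₀fin.union ?_
      apply Set.Finite.biUnion (Set.finite_mem_finset _)
      exact fun g _ => (hDres g).1
    refine ⟨hfinU.subset hsub, ?_⟩
    have hcard1 : (Crit C n).ncard ≤
        (T₀ ∪ ⋃ g ∈ hT₀fin.toFinset, Crit (D g) n).ncard :=
      Set.ncard_le_ncard hsub hfinU
    have hcard2 : (T₀ ∪ ⋃ g ∈ hT₀fin.toFinset, Crit (D g) n).ncard ≤
        T₀.ncard + (⋃ g ∈ hT₀fin.toFinset, Crit (D g) n).ncard :=
      Set.ncard_union_le _ _
    have hcard3 : (⋃ g ∈ hT₀fin.toFinset, Crit (D g) n).ncard ≤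
        hT₀fin.toFinset.card * Bb n (t - 1) :=
      ncard_biUnion_le _ _ _ fun g _ => (hDres g).2
    have hT₀c : hT₀fin.toFinset.card = T₀.ncard :=
      (Set.ncard_eq_toFinset_card _ hT₀fin).symm
    have hBb : Bb n (t + 1 - 1) = n + n * Bb n (t - 1) := by
      obtain ⟨t', rfl⟩ : ∃ t', t = t' + 1 := ⟨t - 1, by omega⟩
      simp [Bb]
    rw [hBb]
    rw [hT₀c] at hcard3
    have h5 : (Crit C n).ncard ≤ T₀.ncard + T₀.ncard * Bb n (t - 1) :=
      le_trans hcard1 (le_trans hcard2 (Nat.add_le_add_left hcard3 _))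
    exact le_trans h5
      (Nat.add_le_add hT₀card (Nat.mul_le_mul_right _ hT₀card))

lemma exists_min_tv (C : Set (Set α)) (N : Finset α) (hN : IsTv C ↑N) :
    ∃ T : Finset α, T ⊆ N ∧ IsTv C ↑T ∧ ∀ e ∈ T, ∃ K ∈ C, K ∩ ↑T = {e} := by
  classical
  obtain ⟨T, hTmem, hTmin⟩ :=
    Finset.exists_min_image (N.powerset.filter (fun T : Finset α => IsTv C ↑T)) (fun T : Finset α => T.card)
      ⟨N, by simp [hN]⟩
  simp only [Finset.mem_filter, Finset.mem_powerset] at hTmem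
  refine ⟨T, hTmem.1, hTmem.2, fun e he => ?_⟩
  have herase : ¬ IsTv C ↑(T.erase e) := by
    intro h
    have : T.card ≤ (T.erase e).card := by
      refine hTmin _ ?_
      simp only [Finset.mem_filter, Finset.mem_powerset]
      exact ⟨(Finset.erase_subset _ _).trans hTmem.1, h⟩
    have := Finset.card_erase_lt_of_mem he
    omega
  rw [IsTv] at herase
  push_neg at herase
  obtain ⟨K, hKC, hKe⟩ := herase
  refine ⟨K, hKC, ?_⟩
  have hne : (K ∩ ↑T).Nonempty := hTmem.2 K hKC
  have hsubs : K ∩ ↑T ⊆ {e} := by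
    intro x ⟨hxK, hxT⟩
    by_contra hxe
    have : x ∈ K ∩ ↑(T.erase e) := ⟨hxK, Finset.mem_coe.mpr (Finset.mem_erase.mpr ⟨hxe, hxT⟩)⟩
    rw [hKe] at this
    exact this
  rcases Set.subset_singleton_iff_eq.mp hsubs with h | h
  · rw [h] at hne; exact absurd rfl hne.ne_empty
  · exact h

end Stmt15Aux

open Stmt15Aux

/-- **Forbidden-subgraph theorem.** Let `Γ₁,…,Γ_l` be finitely many finite forbidden graphs,
each with at most `t` edges. If deleting a finite set `N̄` of edges of `G` destroys all
subgraphs isomorphic to the forbidden graphs, then there is a finite set `H̄` of edges of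
`G`, invariant under all automorphisms of `G`, doing the same, with
`|H̄| ≤ f^{t-1}(|N̄|)` (where `f(x) = x(x+1)`); moreover `H̄ ∩ N̄ ≠ ∅` whenever `H̄ ≠ ∅`. -/
theorem stmt_15 {V : Type*} (G : SimpleGraph V) {l t : ℕ} (ht : 1 ≤ t)
    (W : Fin l → Type) [∀ i, Finite (W i)] (Γ : ∀ i, SimpleGraph (W i))
    (hedges : ∀ i, (Γ i).edgeSet.ncard ≤ t)
    (N' : Finset (Sym2 V)) (hN'sub : ↑N' ⊆ G.edgeSet)
    (hN' : ∀ i, ¬ ∃ f : Γ i →g G.deleteEdges ↑N', Function.Injective f) :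
    ∃ H' : Finset (Sym2 V), ↑H' ⊆ G.edgeSet ∧
      (∀ φ : G ≃g G, Sym2.map ⇑φ '' ↑H' = (↑H' : Set (Sym2 V))) ∧
      (∀ i, ¬ ∃ f : Γ i →g G.deleteEdges ↑H', Function.Injective f) ∧
      H'.card ≤ (fun x : ℕ => x * (x + 1))^[t - 1] N'.card ∧
      (H'.Nonempty → ((↑H' : Set (Sym2 V)) ∩ ↑N').Nonempty) := by
  classical
  set n := N'.card with hn
  -- the family of edge sets of copies of forbidden graphs (with at least one edge) in G
  set C : Set (Set (Sym2 V)) :=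
    {S | ∃ i : Fin l, ∃ f : Γ i →g G, Function.Injective ⇑f ∧
      (Γ i).edgeSet.Nonempty ∧ S = Sym2.map ⇑f '' (Γ i).edgeSet} with hC
  -- members of C are sets of edges of G
  have hKsubE : ∀ K ∈ C, K ⊆ G.edgeSet := by
    rintro K ⟨i, f, hfinj, hne, rfl⟩ e ⟨z, hz, rfl⟩
    induction z using Sym2.ind with
    | _ u v =>
      rw [Sym2.map_pair_eq]
      exact f.map_adj ((Γ i).mem_edgeSet.mp hz)
  -- members are finite of size at most t
  have hsize : ∀ K ∈ C, K.Finite ∧ K.ncard ≤ t := by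
    rintro K ⟨i, f, hfinj, hne, rfl⟩
    have hfin : (Γ i).edgeSet.Finite := Set.toFinite _
    exact ⟨hfin.image _, le_trans (Set.ncard_image_le hfin) (hedges i)⟩
  -- N' is a transversal of C
  have hNtv : IsTv C ↑N' := by
    rintro K ⟨i, f, hfinj, hne, rfl⟩
    by_contra hcon
    rw [Set.not_nonempty_iff_eq_empty] at hcon
    refine hN' i ⟨⟨⇑f, ?_⟩, hfinj⟩
    intro a b hab
    rw [SimpleGraph.deleteEdges_adj]
    refine ⟨f.map_adj hab, fun hmem => ?_⟩
    have : s(f a, f b) ∈ Sym2.map ⇑f '' (Γ i).edgeSet ∩ ↑N' := by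
      refine ⟨⟨s(a, b), (Γ i).mem_edgeSet.mpr hab, Sym2.map_pair_eq _ _ _⟩, hmem⟩
    rw [hcon] at this
    exact this
  -- a minimal transversal inside N'
  obtain ⟨T, hTN, hTtv, hTmin⟩ := exists_min_tv C N' hNtv
  have hTcrit : ∀ e ∈ T, e ∈ Crit C n := by
    intro e he
    obtain ⟨K, hKC, hKT⟩ := hTmin e he
    exact ⟨↑T, hTtv, T.finite_toSet, by
      rw [Set.ncard_coe_finset]; exact Finset.card_le_card hTN, K, hKC, hKT⟩
  -- the invariant set: critical edges
  obtain ⟨hfin, hcard⟩ := crit_bound t ht C n hsize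
  refine ⟨hfin.toFinset, ?_, ?_, ?_, ?_, ?_⟩
  · -- subset of edges of G
    intro e he
    rw [Finset.mem_coe, Set.Finite.mem_toFinset] at he
    obtain ⟨Tw, _, _, _, K, hKC, hKT⟩ := he
    have : e ∈ K ∩ Tw := by rw [hKT]; rfl
    exact hKsubE K hKC this.1
  · -- invariance
    intro φ
    -- C is closed under the action of automorphisms
    have hmapC : ∀ (ψ : G ≃g G), ∀ S ∈ C, Sym2.map ⇑ψ '' S ∈ C := by
      rintro ψ S ⟨i, f, hfinj, hne, rfl⟩
      refine ⟨i, ⟨⇑ψ ∘ ⇑f, fun {a b} hab => ψ.map_rel_iff.mpr (f.map_adj hab)⟩,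
        ψ.injective.comp hfinj, hne, ?_⟩
      rw [Set.image_image]
      exact Set.image_congr' (fun z => Sym2.map_map z)
    have hid : ∀ (ψ : G ≃g G) (z : Sym2 V), Sym2.map ⇑ψ (Sym2.map ⇑ψ.symm z) = z := by
      intro ψ z
      rw [Sym2.map_map]
      have : (⇑ψ ∘ ⇑ψ.symm) = id := by
        funext x
        exact ψ.apply_symm_apply x
      rw [this, Sym2.map_id, id_eq]
    have hcritmap : ∀ (ψ : G ≃g G), ∀ e ∈ Crit C n, Sym2.map ⇑ψ e ∈ Crit C n := by
      rintro ψ e ⟨Tw, hTwtv, hTwfin, hTwcard, K, hKC, hKT⟩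
      have hinj : Function.Injective (Sym2.map ⇑ψ) := Sym2.map.injective ψ.injective
      refine ⟨Sym2.map ⇑ψ '' Tw, ?_, hTwfin.image _, ?_, Sym2.map ⇑ψ '' K, hmapC ψ K hKC, ?_⟩
      · rintro K' hK'C
        obtain ⟨x, hxK, hxT⟩ := hTwtv (Sym2.map ⇑ψ.symm '' K') (hmapC ψ.symm K' hK'C)
        obtain ⟨y, hyK', hyx⟩ := hxK
        refine ⟨Sym2.map ⇑ψ x, ?_, Set.mem_image_of_mem _ hxT⟩
        rw [← hyx, hid ψ y]
        exact hyK'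
      · rw [Set.ncard_image_of_injective _ hinj]; exact hTwcard
      · rw [← Set.image_inter hinj, hKT, Set.image_singleton]
    rw [Set.Finite.coe_toFinset]
    apply Set.eq_of_subset_of_subset
    · rintro _ ⟨e, he, rfl⟩
      exact hcritmap φ e he
    · intro e he
      refine ⟨Sym2.map ⇑φ.symm e, hcritmap φ.symm e he, hid φ e⟩
  · -- no forbidden subgraph after deletion
    rintro i ⟨f, hfinj⟩
    by_cases hne : (Γ i).edgeSet.Nonempty
    · -- compose with the inclusion into G
      set f' : Γ i →g G :=
        (SimpleGraph.Hom.ofLE (G.deleteEdges_le _)).comp f with hf'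
      have hf'coe : ⇑f' = ⇑f := rfl
      have hKC : Sym2.map ⇑f' '' (Γ i).edgeSet ∈ C := ⟨i, f', by rw [hf'coe]; exact hfinj, hne, rfl⟩
      obtain ⟨x, hxK, hxT⟩ := hTtv _ hKC
      -- x is an edge of the copy, so it is not deleted; but x ∈ T ⊆ Crit
      obtain ⟨z, hz, hzx⟩ := hxK
      have hxCrit : x ∈ Crit C n := hTcrit x hxT
      revert hzx
      induction z using Sym2.ind with
      | _ u v =>
        intro hzx
        have hadj : (G.deleteEdges ↑hfin.toFinset).Adj (f u) (f v) :=
          f.map_adj ((Γ i).mem_edgeSet.mp hz)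
        rw [SimpleGraph.deleteEdges_adj] at hadj
        apply hadj.2
        rw [Finset.mem_coe, Set.Finite.mem_toFinset]
        rw [Sym2.map_pair_eq, hf'coe] at hzx
        rwa [← hzx] at hxCrit
    · -- Γ i has no edges at all: it cannot embed injectively even into G - N'
      rw [Set.not_nonempty_iff_eq_empty] at hne
      refine hN' i ⟨⟨⇑f, ?_⟩, hfinj⟩
      intro a b hab
      exact absurd ((Γ i).mem_edgeSet.mpr hab) (by rw [hne]; exact Set.notMem_empty _)
  · -- cardinality bound
    have : hfin.toFinset.card = (Crit C n).ncard :=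
      (Set.ncard_eq_toFinset_card _ hfin).symm
    rw [this]
    exact le_trans hcard (Bb_le_iter n (t - 1))
  · -- intersection with N'
    rintro ⟨e, he⟩
    rw [Set.Finite.mem_toFinset] at he
    obtain ⟨Tw, _, _, _, K, hKC, _⟩ := he
    obtain ⟨x, hxK, hxT⟩ := hTtv K hKC
    refine ⟨x, ?_, hTN hxT⟩
    rw [Set.Finite.coe_toFinset]
    exact hTcrit x hxT
end

section
/- Let G be a simple graph and let N̄ be a finite set of edges of G. Then there exists a finite set H̄ of edges of G, invariant under every automorphism of G (every automorphism of G maps the set of edges H̄ onto itself), such that the graph obtained from G by deleting the edges in H̄ locally embeds into the graph obtained from G by deleting the edges in N̄. -/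
open MulAction
open scoped Pointwise

section Aux
variable {V : Type*} {G : SimpleGraph V}

/-- Action of the automorphism group of `G` on `Sym2 V`. -/
instance autSym2Action : MulAction (G ≃g G) (Sym2 V) where
  smul φ e := Sym2.map ⇑φ e
  one_smul e := by
    show Sym2.map _ e = e
    simp [RelIso.coe_one]
  mul_smul φ ψ e := by
    show Sym2.map _ e = Sym2.map _ (Sym2.map _ e)
    rw [Sym2.map_map]
    rfl

lemma aut_smul_def (φ : G ≃g G) (e : Sym2 V) : φ • e = Sym2.map ⇑φ e := rfl

lemma aut_smul_mem_edgeSet (φ : G ≃g G) {e : Sym2 V} (he : e ∈ G.edgeSet) :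
    φ • e ∈ G.edgeSet := by
  induction e using Sym2.ind with
  | _ a b =>
    rw [aut_smul_def, Sym2.map_pair_eq]
    exact (φ.map_adj_iff.mpr he : G.Adj (φ a) (φ b))

end Aux

/-- A graph `X` *locally embeds* into a graph `Y` if every finite simple graph admitting an
injective graph homomorphism into `X` also admits one into `Y`. -/
def LocallyEmbeds {V₁ V₂ : Type*} (X : SimpleGraph V₁) (Y : SimpleGraph V₂) : Prop :=
  ∀ (W : Type) [Finite W] (Γ : SimpleGraph W),
    (∃ f : Γ →g X, Function.Injective f) → ∃ g : Γ →g Y, Function.Injective g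

/-- **Local-embeddability theorem.** For any graph `G` and any finite set `N̄` of its edges,
there is a finite set `H̄` of edges of `G`, invariant under all automorphisms of `G`, such
that `G ∖ H̄` locally embeds into `G ∖ N̄`. -/
theorem stmt_16 {V : Type*} (G : SimpleGraph V)
    (N' : Finset (Sym2 V)) (hN'sub : ↑N' ⊆ G.edgeSet) :
    ∃ H' : Finset (Sym2 V), ↑H' ⊆ G.edgeSet ∧
      (∀ φ : G ≃g G, Sym2.map ⇑φ '' ↑H' = (↑H' : Set (Sym2 V))) ∧
      LocallyEmbeds (G.deleteEdges ↑H') (G.deleteEdges ↑N') := by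
  classical
  -- `Hs` is the union of the finite automorphism orbits of edges of `N'`.
  set A := G ≃g G
  set Hs : Set (Sym2 V) :=
    ⋃ e ∈ {e : Sym2 V | e ∈ N' ∧ (orbit A e).Finite}, orbit A e with hHs
  have hHsfin : Hs.Finite := by
    apply Set.Finite.biUnion
    · exact (N'.finite_toSet.subset (fun e he => he.1))
    · exact fun e he => he.2
  refine ⟨hHsfin.toFinset, ?_, ?_, ?_⟩
  · -- contained in edge set
    intro x hx
    simp only [Set.Finite.coe_toFinset, hHs, Set.mem_iUnion] at hx
    obtain ⟨e, ⟨heN, _⟩, hx⟩ := hx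
    obtain ⟨φ, rfl⟩ := hx
    exact aut_smul_mem_edgeSet φ (hN'sub heN)
  · -- invariance
    intro φ
    have : ∀ ψ : A, Sym2.map ⇑ψ '' Hs = Hs := by
      intro ψ
      have : Sym2.map ⇑ψ '' Hs = ψ • Hs := rfl
      rw [this, hHs, Set.smul_set_iUnion₂]
      exact Set.iUnion₂_congr fun e he => smul_orbit ψ e
    rw [Set.Finite.coe_toFinset]
    exact this φ
  · -- local embeddability
    intro W _ Γ ⟨f, hf⟩
    -- the finite set of `G`-edges used by the image of `f`
    have hΓfin : Γ.edgeSet.Finite := Set.toFinite _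
    set F : Set (Sym2 V) := Sym2.map ⇑f '' Γ.edgeSet with hF
    have hFfin : F.Finite := hΓfin.image _
    -- edges in `F` avoid `Hs`
    have hFavoid : ∀ x ∈ F, x ∈ G.edgeSet ∧ x ∉ Hs := by
      rintro x ⟨ε, hε, rfl⟩
      induction ε using Sym2.ind with
      | _ a b =>
        rw [SimpleGraph.mem_edgeSet] at hε
        have := f.map_adj hε
        rw [SimpleGraph.deleteEdges_adj] at this
        rw [Sym2.map_pair_eq]
        exact ⟨this.1, by simpa using this.2⟩
    -- find a good automorphism φ
    have key : ∃ φ : A, ∀ x ∈ F, ¬(φ • x ∈ N' ∧ ¬(orbit A (φ • x)).Finite) := by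
      by_contra hno
      push_neg at hno
      -- build a finite coset cover
      set s : Finset (Sym2 V × Sym2 V) :=
        (N' ×ˢ hFfin.toFinset).filter
          (fun p => ¬(orbit A p.1).Finite ∧ ∃ φ : A, φ • p.2 = p.1) with hs
      have hgex : ∀ p ∈ s, ∃ φ : A, φ • p.2 = p.1 := by
        intro p hp
        exact ((Finset.mem_filter.mp hp).2).2
      choose! g hg using hgex
      have hcovers : ⋃ p ∈ s, (g p) • ((stabilizer A p.2 : Subgroup A) : Set A)
          = Set.univ := by
        apply Set.eq_univ_of_forall
        intro ψ
        obtain ⟨x, hxF, hxN, hxinf⟩ := hno ψ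
        have hps : (ψ • x, x) ∈ s := by
          rw [hs, Finset.mem_filter]
          refine ⟨Finset.mem_product.mpr ⟨hxN, hFfin.mem_toFinset.mpr hxF⟩, hxinf, ψ, rfl⟩
        refine Set.mem_biUnion hps ?_
        rw [Set.mem_smul_set_iff_inv_smul_mem, SetLike.mem_coe, mem_stabilizer_iff,
          smul_eq_mul, mul_smul]
        have h1 : g (ψ • x, x) • x = ψ • x := hg _ hps
        exact inv_smul_eq_iff.mpr h1.symm
      obtain ⟨p, hps, hpfin⟩ := Subgroup.exists_finiteIndex_of_leftCoset_cover hcovers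
      -- but the stabilizer of `p.2` has infinite index
      have horb : orbit A p.2 = orbit A p.1 := by
        rw [← hg p hps, orbit_smul]
      have hinf : ¬(orbit A p.2).Finite := by
        rw [horb]; exact ((Finset.mem_filter.mp hps).2).1
      have : (stabilizer A p.2).index = 0 := by
        rw [index_stabilizer, Set.Infinite.ncard hinf]
      exact hpfin.index_ne_zero this
    obtain ⟨φ, hφ⟩ := key
    -- assemble the embedding
    refine ⟨⟨fun w => φ (f w), ?_⟩, fun a b hab => hf (φ.injective hab)⟩
    intro a b hab
    have hfab := f.map_adj hab
    rw [SimpleGraph.deleteEdges_adj] at hfab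
    rw [SimpleGraph.deleteEdges_adj]
    constructor
    · exact φ.map_adj_iff.mpr hfab.1
    · -- the key point: the edge avoids `N'`
      intro hmem
      have hx : s(f a, f b) ∈ F := ⟨s(a, b), hab, Sym2.map_pair_eq _ _ _⟩
      have hsm : φ • s(f a, f b) = s(φ (f a), φ (f b)) := Sym2.map_pair_eq _ _ _
      rw [Finset.mem_coe] at hmem
      by_cases hfin : (orbit A (φ • s(f a, f b))).Finite
      · -- finite orbit: then the original edge lies in `Hs`, contradiction
        apply hfab.2
        have : s(f a, f b) ∈ Hs :=
          Set.mem_biUnion (show (φ • s(f a, f b) : Sym2 V) ∈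
              {e : Sym2 V | e ∈ N' ∧ (orbit A e).Finite} from ⟨by rw [hsm]; exact hmem, hfin⟩)
            (by rw [orbit_smul]; exact mem_orbit_self _)
        simpa using this
      · exact hφ _ hx ⟨by rw [hsm]; exact hmem, hfin⟩
end

section
/- Let G be the simple graph with vertex set ℤ in which two integers i and j are adjacent if and only if |i − j| = 1, and let N be the graph obtained from G by deleting the single edge {0,1}. Then there is no finite set H̄ of edges of G, invariant under every automorphism of G (every automorphism of G maps the set of edges H̄ onto itself), such that the graph obtained from G by deleting the edges in H̄ admits an injective graph homomorphism into N. -/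
/-- The bi-infinite path graph: vertex set `ℤ`, with `i` and `j` adjacent iff `|i - j| = 1`. -/
def lineGraph : SimpleGraph ℤ where
  Adj i j := |i - j| = 1
  symm := by
    constructor
    intro i j h
    rwa [abs_sub_comm]
  loopless := by
    constructor
    intro i h
    simp at h

/-- It is impossible to remove a finite set of edges from the bi-infinite path graph,
invariant under all of its automorphisms, so that the resulting graph admits an injective
graph homomorphism into the graph obtained by deleting the single edge `{0, 1}`. -/
theorem stmt_17 :
    ¬ ∃ H' : Finset (Sym2 ℤ), ↑H' ⊆ lineGraph.edgeSet ∧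
        (∀ φ : lineGraph ≃g lineGraph, Sym2.map ⇑φ '' ↑H' = (↑H' : Set (Sym2 ℤ))) ∧
        ∃ f : lineGraph.deleteEdges ↑H' →g lineGraph.deleteEdges {s(0, 1)},
          Function.Injective f := by
  rintro ⟨H', hsub, hinv, f, hf⟩
  -- translations are automorphisms
  have hτ : ∀ n : ℤ, ∃ φ : lineGraph ≃g lineGraph, ⇑φ = (· + n) := by
    intro n
    refine ⟨⟨Equiv.addRight n, ?_⟩, rfl⟩
    intro i j
    show lineGraph.Adj (i + n) (j + n) ↔ lineGraph.Adj i j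
    simp only [lineGraph, add_sub_add_right_eq_sub]
  -- H' must be empty
  have hempty : H' = ∅ := by
    by_contra hne
    obtain ⟨e, he⟩ := Finset.nonempty_iff_ne_empty.mpr hne
    induction e using Sym2.ind with
    | _ a b =>
    have hg : ∀ n : ℤ, s(a + n, b + n) ∈ H' := by
      intro n
      obtain ⟨φ, hφ⟩ := hτ n
      have h1 : Sym2.map ⇑φ s(a, b) ∈ (↑H' : Set (Sym2 ℤ)) := by
        rw [← hinv φ]; exact ⟨_, he, rfl⟩
      simpa [hφ, Sym2.map_pair_eq] using h1
    have hsub2 : Set.range (fun n : ℤ => s(a + n, b + n)) ⊆ (↑H' : Set (Sym2 ℤ)) := by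
      rintro _ ⟨n, rfl⟩; exact hg n
    have hinj : Function.Injective (fun n : ℤ => s(a + n, b + n)) := by
      intro m n h
      simp only [Sym2.eq, Sym2.rel_iff', Prod.mk.injEq, Prod.swap_prod_mk] at h
      rcases h with ⟨h1, _⟩ | ⟨h1, h2⟩ <;> omega
    exact H'.finite_toSet.not_infinite ((Set.infinite_range_of_injective hinj).mono hsub2)
  subst hempty
  -- consecutive integers are adjacent in the deleted graph
  have hadj : ∀ n : ℤ, (lineGraph.deleteEdges (↑(∅ : Finset (Sym2 ℤ)))).Adj n (n + 1) := by
    intro n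
    simp only [SimpleGraph.deleteEdges_adj, Finset.coe_empty, Set.mem_empty_iff_false,
      not_false_iff, and_true]
    show |n - (n + 1)| = 1
    simp
  have hstep : ∀ n : ℤ, |f n - f (n + 1)| = 1 ∧ s(f n, f (n + 1)) ≠ s(0, 1) := by
    intro n
    have := f.map_adj (hadj n)
    simp only [SimpleGraph.deleteEdges_adj, Set.mem_singleton_iff] at this
    exact ⟨this.1, this.2⟩
  set d : ℤ → ℤ := fun n => f (n + 1) - f n with hd
  have hd1 : ∀ n : ℤ, d n = 1 ∨ d n = -1 := by
    intro n
    have := (hstep n).1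
    rcases abs_cases (f n - f (n + 1)) with ⟨h1, _⟩ | ⟨h1, _⟩ <;> simp only [hd] <;> omega
  have hdconst : ∀ n : ℤ, d (n + 1) = d n := by
    intro n
    rcases hd1 n with h1 | h1 <;> rcases hd1 (n + 1) with h2 | h2 <;> try omega
    all_goals {
      exfalso
      have hfeq : f (n + 2) = f n := by
        have e1 : f (n + 1) - f n = d n := rfl
        have e2 : f (n + 1 + 1) - f (n + 1) = d (n + 1) := rfl
        have : n + 1 + 1 = n + 2 := by ring
        rw [this] at e2
        omega
      have := hf hfeq
      omega }
  have hd0 : ∀ n : ℤ, d n = d 0 := by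
    intro n
    induction n using Int.induction_on with
    | zero => rfl
    | succ k ih => rw [hdconst k, ih]
    | pred k ih =>
      have := hdconst (-(k : ℤ) - 1)
      rw [show (-(k : ℤ) - 1 + 1) = -(k : ℤ) by ring] at this
      rw [← this]
      exact ih
  have hstep2 : ∀ n : ℤ, f (n + 1) - f n = d 0 := fun n => hd0 n ▸ rfl
  rcases hd1 0 with h1 | h1
  · have hlin : ∀ n : ℤ, f n = f 0 + n := by
      intro n
      induction n using Int.induction_on with
      | zero => simp
      | succ k ih =>
        have e1 := hstep2 (k : ℤ)
        rw [h1] at e1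
        push_cast
        omega
      | pred k ih =>
        have e1 := hstep2 (-(k : ℤ) - 1)
        rw [h1, show (-(k : ℤ) - 1 + 1) = -(k : ℤ) by ring] at e1
        push_cast
        push_cast at ih
        omega
    have hn := (hstep (-f 0)).2
    have e1 : f (-f 0) = 0 := by rw [hlin]; omega
    have e2 : f (-f 0 + 1) = 1 := by rw [hlin]; omega
    rw [e1, e2] at hn
    exact hn rfl
  · have hlin : ∀ n : ℤ, f n = f 0 - n := by
      intro n
      induction n using Int.induction_on with
      | zero => simp
      | succ k ih =>
        have e1 := hstep2 (k : ℤ)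
        rw [h1] at e1
        push_cast
        omega
      | pred k ih =>
        have e1 := hstep2 (-(k : ℤ) - 1)
        rw [h1, show (-(k : ℤ) - 1 + 1) = -(k : ℤ) by ring] at e1
        push_cast
        push_cast at ih
        omega
    have hn := (hstep (f 0 - 1)).2
    have e1 : f (f 0 - 1) = 1 := by rw [hlin]; omega
    have e2 : f (f 0 - 1 + 1) = 0 := by rw [hlin]; omega
    rw [e1, e2, Sym2.eq_swap] at hn
    exact hn rfl
end

section
/- Let X be a subset of three-dimensional Euclidean space ℝ³. Suppose there is a finite subset F of X such that no 2018 pairwise distinct points of X \ F lie on a common sphere (i.e., there do not exist a point c ∈ ℝ³, a real number r, and 2018 pairwise distinct points of X \ F all at distance r from c). Then there exists a finite subset F' of X with the same property (no 2018 pairwise distinct points of X \ F' lie on a common sphere) such that F' is invariant under every isometry of ℝ³ that maps X onto itself (φ(X) = X implies φ(F') = F'), and moreover |F'| ≤ f^{2017}(|F|). -/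
/-- `NoSphere2018 X F` says that no 2018 pairwise distinct points of `X \ F` lie on a
common sphere in `ℝ³`. -/
def NoSphere2018 (X F : Set (EuclideanSpace ℝ (Fin 3))) : Prop :=
  ¬ ∃ (c : EuclideanSpace ℝ (Fin 3)) (r : ℝ) (p : Fin 2018 → EuclideanSpace ℝ (Fin 3)),
      Function.Injective p ∧ (∀ i, p i ∈ X \ F) ∧ ∀ i, dist (p i) c = r

open Set

variable {α : Type*}

/-- `G` hits every member of the family `𝒯`. -/
def Hits (𝒯 : Set (Set α)) (G : Set α) : Prop := ∀ T ∈ 𝒯, (T ∩ G).Nonempty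

/-- `G` is a finite, inclusion-minimal hitting set for `𝒯`. -/
def MinHit (𝒯 : Set (Set α)) (G : Set α) : Prop :=
  Hits 𝒯 G ∧ G.Finite ∧ ∀ G' ⊂ G, ¬ Hits 𝒯 G'

/-- Union of all minimal hitting sets of cardinality at most `s`. -/
def UU (𝒯 : Set (Set α)) (s : ℕ) : Set α :=
  {x | ∃ G, MinHit 𝒯 G ∧ G.ncard ≤ s ∧ x ∈ G}

def gfun (s : ℕ) : ℕ → ℕ
  | 0 => 0
  | d + 1 => s + s * gfun s d

lemma exists_minHit (𝒯 : Set (Set α)) :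
    ∀ n (G : Set α), G.Finite → G.ncard ≤ n → Hits 𝒯 G →
      ∃ G', G' ⊆ G ∧ MinHit 𝒯 G' := by
  intro n
  induction n with
  | zero =>
    intro G hGf hGc hG
    have : G = ∅ := by
      rw [← Set.ncard_eq_zero hGf]; omega
    subst this
    refine ⟨∅, subset_rfl, hG, finite_empty, fun G' hG' _ => hG'.2 ?_⟩
    rw [Set.subset_empty_iff.mp hG'.1]
  | succ n ih =>
    intro G hGf hGc hG
    by_cases hmin : ∀ G' ⊂ G, ¬ Hits 𝒯 G'
    · exact ⟨G, subset_rfl, hG, hGf, hmin⟩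
    · push_neg at hmin
      obtain ⟨G', hG'sub, hG'⟩ := hmin
      have hG'f : G'.Finite := hGf.subset hG'sub.subset
      have : G'.ncard < G.ncard := Set.ncard_lt_ncard hG'sub hGf
      obtain ⟨G'', h1, h2⟩ := ih G' hG'f (by omega) hG'
      exact ⟨G'', h1.trans hG'sub.subset, h2⟩

lemma minHit_private {𝒯 : Set (Set α)} {G : Set α} (hG : MinHit 𝒯 G) {x : α} (hx : x ∈ G) :
    ∃ T ∈ 𝒯, x ∈ T ∧ T ∩ G = {x} := by
  have hss : G \ {x} ⊂ G := Set.sdiff_singleton_ssubset.mpr hx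
  have := hG.2.2 _ hss
  rw [Hits] at this
  push_neg at this
  obtain ⟨T, hT, hTe⟩ := this
  have hkey : T ∩ G ⊆ {x} := by
    intro z ⟨hzT, hzG⟩
    by_contra hzx
    have : z ∈ T ∩ (G \ {x}) := ⟨hzT, hzG, hzx⟩
    rw [hTe] at this
    exact this
  obtain ⟨y, hyT, hyG⟩ := hG.1 T hT
  have hyx : y = x := hkey ⟨hyT, hyG⟩
  subst hyx
  exact ⟨T, hT, hyT, Set.Subset.antisymm hkey (by rintro z rfl; exact ⟨hyT, hyG⟩)⟩

lemma biUnion_bound {β : Type*} (U : α → Set β) (m : ℕ) (Fs : Finset α)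
    (h : ∀ a ∈ Fs, (U a).Finite ∧ (U a).ncard ≤ m) :
    (⋃ a ∈ Fs, U a).Finite ∧ (⋃ a ∈ Fs, U a).ncard ≤ Fs.card * m := by
  classical
  induction Fs using Finset.induction with
  | empty => simp
  | @insert a Fs' hnotmem ih =>
    have hmain := h a (Finset.mem_insert_self a Fs')
    have hrest := ih (fun b hb => h b (Finset.mem_insert_of_mem hb))
    rw [Finset.set_biUnion_insert]
    constructor
    · exact hmain.1.union hrest.1
    · calc (U a ∪ ⋃ b ∈ Fs', U b).ncard ≤ (U a).ncard + (⋃ b ∈ Fs', U b).ncard :=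
            Set.ncard_union_le _ _
        _ ≤ m + Fs'.card * m := Nat.add_le_add hmain.2 hrest.2
        _ = (insert a Fs').card * m := by
            rw [Finset.card_insert_of_notMem hnotmem]; ring

lemma UU_finite_bound :
    ∀ (d : ℕ) (𝒯 : Set (Set α)) (s : ℕ), (∀ T ∈ 𝒯, T.Finite ∧ T.ncard = d) →
      (UU 𝒯 s).Finite ∧ (UU 𝒯 s).ncard ≤ gfun s d := by
  intro d
  induction d with
  | zero =>
    intro 𝒯 s hunif
    have hempty : UU 𝒯 s = ∅ := by
      ext x
      simp only [UU, Set.mem_setOf_eq, Set.mem_empty_iff_false, iff_false]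
      rintro ⟨G, hG, _, hxG⟩
      by_cases h𝒯 : ∃ T, T ∈ 𝒯
      · obtain ⟨T, hT⟩ := h𝒯
        have hT0 : T = ∅ := by
          have := hunif T hT
          rw [← Set.ncard_eq_zero this.1]; exact this.2
        obtain ⟨y, hy⟩ := hG.1 T hT
        rw [hT0] at hy
        exact hy.1
      · push_neg at h𝒯
        refine hG.2.2 ∅ ⟨Set.empty_subset G, ?_⟩ (fun T hT => absurd hT (h𝒯 T))
        intro hGsub
        exact (hGsub hxG)
    rw [hempty]
    simp [gfun]
  | succ d ih =>
    intro 𝒯 s hunif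
    by_cases hex : ∃ F : Set α, F.Finite ∧ F.ncard ≤ s ∧ Hits 𝒯 F
    swap
    · have hempty : UU 𝒯 s = ∅ := by
        ext x
        simp only [UU, Set.mem_setOf_eq, Set.mem_empty_iff_false, iff_false]
        rintro ⟨G, hG, hGc, hxG⟩
        exact hex ⟨G, hG.2.1, hGc, hG.1⟩
      rw [hempty]
      simp
    obtain ⟨F, hFf, hFc, hFhit⟩ := hex
    classical
    -- the link families
    set link : α → Set (Set α) := fun a => {T' | ∃ T ∈ 𝒯, a ∈ T ∧ T' = T \ {a}} with hlink
    have hlinkunif : ∀ a, ∀ T' ∈ link a, T'.Finite ∧ T'.ncard = d := by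
      rintro a T' ⟨T, hT, haT, rfl⟩
      obtain ⟨hTf, hTc⟩ := hunif T hT
      refine ⟨hTf.diff, ?_⟩
      rw [Set.ncard_diff_singleton_of_mem haT, hTc]
      omega
    -- the key inclusion
    have hsub : UU 𝒯 s ⊆ F ∪ ⋃ a ∈ hFf.toFinset, UU (link a) s := by
      rintro x ⟨G, hG, hGc, hxG⟩
      by_cases hxF : x ∈ F
      · exact Or.inl hxF
      right
      obtain ⟨Tx, hTx, hxTx, hTxG⟩ := minHit_private hG hxG
      obtain ⟨a, haTx, haF⟩ := hFhit Tx hTx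
      have hax : a ≠ x := fun h => hxF (h ▸ haF)
      have haG : a ∉ G := by
        intro haG
        have : a ∈ Tx ∩ G := ⟨haTx, haG⟩
        rw [hTxG] at this
        exact hax this
      -- G hits the link at a
      have hGhits : Hits (link a) G := by
        rintro T' ⟨T, hT, haT, rfl⟩
        obtain ⟨z, hzT, hzG⟩ := hG.1 T hT
        have hza : z ≠ a := fun h => haG (h ▸ hzG)
        exact ⟨z, ⟨hzT, hza⟩, hzG⟩
      obtain ⟨G', hG'sub, hG'⟩ := exists_minHit (link a) G.ncard G hG.2.1 le_rfl hGhits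
      have hG'c : G'.ncard ≤ s := le_trans (Set.ncard_le_ncard hG'sub hG.2.1) hGc
      -- x belongs to G'
      have hxG' : x ∈ G' := by
        have hTx' : Tx \ {a} ∈ link a := ⟨Tx, hTx, haTx, rfl⟩
        obtain ⟨z, hzTx', hzG'⟩ := hG'.1 _ hTx'
        have : z ∈ Tx ∩ G := ⟨hzTx'.1, hG'sub hzG'⟩
        rw [hTxG] at this
        rwa [← this]
      exact Set.mem_biUnion (hFf.mem_toFinset.mpr haF) ⟨G', hG', hG'c, hxG'⟩
    have hbi := biUnion_bound (fun a => UU (link a) s) (gfun s d) hFf.toFinset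
      (fun a _ => ih (link a) s (hlinkunif a))
    have hufin : (F ∪ ⋃ a ∈ hFf.toFinset, UU (link a) s).Finite := hFf.union hbi.1
    refine ⟨hufin.subset hsub, ?_⟩
    calc (UU 𝒯 s).ncard ≤ (F ∪ ⋃ a ∈ hFf.toFinset, UU (link a) s).ncard :=
          Set.ncard_le_ncard hsub hufin
      _ ≤ F.ncard + (⋃ a ∈ hFf.toFinset, UU (link a) s).ncard := Set.ncard_union_le _ _
      _ ≤ F.ncard + hFf.toFinset.card * gfun s d := Nat.add_le_add_left hbi.2 _
      _ ≤ s + s * gfun s d := by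
          have : hFf.toFinset.card = F.ncard := (Set.ncard_eq_toFinset_card F hFf).symm
          rw [this]
          exact Nat.add_le_add hFc (Nat.mul_le_mul_right _ hFc)
      _ = gfun s (d + 1) := rfl

lemma le_iterate_f (d x : ℕ) : x ≤ (fun x : ℕ => x * (x + 1))^[d] x := by
  induction d with
  | zero => simp
  | succ d ih =>
    rw [Function.iterate_succ_apply']
    refine le_trans ih ?_
    set y := (fun x : ℕ => x * (x + 1))^[d] x
    calc y ≤ y * (y + 1) := Nat.le_mul_of_pos_right y (Nat.succ_pos y)
      _ = (fun x : ℕ => x * (x + 1)) y := rfl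

lemma gfun_le_iterate (d s : ℕ) : gfun s (d + 1) ≤ (fun x : ℕ => x * (x + 1))^[d] s := by
  induction d with
  | zero => simp [gfun]
  | succ d ih =>
    rw [Function.iterate_succ_apply']
    set I := (fun x : ℕ => x * (x + 1))^[d] s with hI
    have hsI : s ≤ I := le_iterate_f d s
    calc gfun s (d + 2) = s + s * gfun s (d + 1) := rfl
      _ ≤ I + I * I := Nat.add_le_add hsI (Nat.mul_le_mul hsI ih)
      _ = I * (I + 1) := by ring
      _ = (fun x : ℕ => x * (x + 1)) I := rfl

/-- The family of 2018-point cospherical subsets of `X`. -/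
def Sph (X : Set (EuclideanSpace ℝ (Fin 3))) : Set (Set (EuclideanSpace ℝ (Fin 3))) :=
  {T | T ⊆ X ∧ T.Finite ∧ T.ncard = 2018 ∧ ∃ c r, ∀ x ∈ T, dist x c = r}

lemma noSphere_iff_hits (X G : Set (EuclideanSpace ℝ (Fin 3))) :
    NoSphere2018 X G ↔ Hits (Sph X) G := by
  constructor
  · intro h T hT
    by_contra hne
    rw [Set.not_nonempty_iff_eq_empty] at hne
    obtain ⟨hTX, hTf, hTc, c, r, hcr⟩ := hT
    have : Finite T := hTf
    have hcard : Nat.card T = 2018 := by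
      rw [Nat.card_coe_set_eq]; exact hTc
    let e : T ≃ Fin 2018 := Finite.equivFinOfCardEq hcard
    refine h ⟨c, r, fun i => (e.symm i : EuclideanSpace ℝ (Fin 3)), ?_, ?_, ?_⟩
    · intro i j hij
      exact e.symm.injective (Subtype.val_injective hij)
    · intro i
      refine ⟨hTX (e.symm i).2, fun hG => ?_⟩
      have : ((e.symm i : EuclideanSpace ℝ (Fin 3))) ∈ T ∩ G := ⟨(e.symm i).2, hG⟩
      rw [hne] at this
      exact this
    · intro i
      exact hcr _ (e.symm i).2
  · intro h
    rintro ⟨c, r, p, hinj, hmem, hdist⟩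
    have hmemS : Set.range p ∈ Sph X := by
      refine ⟨by rintro _ ⟨i, rfl⟩; exact (hmem i).1, Set.finite_range p, ?_,
        ⟨c, r, by rintro _ ⟨i, rfl⟩; exact hdist i⟩⟩
      have h1 : Nat.card (Set.range p) = Nat.card (Fin 2018) := Nat.card_range_of_injective hinj
      rw [Nat.card_coe_set_eq] at h1
      rw [h1, Nat.card_eq_fintype_card, Fintype.card_fin]
    obtain ⟨y, hyT, hyG⟩ := h (Set.range p) hmemS
    obtain ⟨i, rfl⟩ := hyT
    exact (hmem i).2 hyG

lemma hits_image {𝒯 : Set (Set α)} {χ η : α → α} (hη : ∀ T ∈ 𝒯, η '' T ∈ 𝒯)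
    (hcomp : ∀ x, χ (η x) = x) {G : Set α} (hG : Hits 𝒯 G) : Hits 𝒯 (χ '' G) := by
  intro T hT
  obtain ⟨y, ⟨t, htT, hty⟩, hyG⟩ := hG (η '' T) (hη T hT)
  exact ⟨χ y, by rw [← hty, hcomp]; exact htT, Set.mem_image_of_mem χ hyG⟩

lemma image_comp_inv {χ η : α → α} (hcomp : ∀ x, η (χ x) = x) (G : Set α) :
    η '' (χ '' G) = G := by
  rw [← Set.image_comp]
  have : (η ∘ χ) = id := funext hcomp
  rw [this, Set.image_id]

lemma minHit_image {𝒯 : Set (Set α)} {χ η : α → α}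
    (hχ : ∀ T ∈ 𝒯, χ '' T ∈ 𝒯) (hη : ∀ T ∈ 𝒯, η '' T ∈ 𝒯)
    (hχη : ∀ x, χ (η x) = x) (hηχ : ∀ x, η (χ x) = x)
    {G : Set α} (hG : MinHit 𝒯 G) : MinHit 𝒯 (χ '' G) := by
  refine ⟨hits_image hη hχη hG.1, hG.2.1.image χ, ?_⟩
  intro G'' hss hhits
  have hsub : η '' G'' ⊆ G := by
    have := Set.image_mono (f := η) hss.subset
    rwa [image_comp_inv hηχ] at this
  have hne : η '' G'' ≠ G := by
    intro h
    have : χ '' (η '' G'') = χ '' G := by rw [h]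
    rw [image_comp_inv hχη] at this
    exact hss.ne this
  exact hG.2.2 (η '' G'') (HasSubset.Subset.ssubset_of_ne hsub hne)
    (hits_image hχ hηχ hhits)

lemma mem_UU_image {𝒯 : Set (Set α)} {s : ℕ} {χ η : α → α}
    (hχ : ∀ T ∈ 𝒯, χ '' T ∈ 𝒯) (hη : ∀ T ∈ 𝒯, η '' T ∈ 𝒯)
    (hχη : ∀ x, χ (η x) = x) (hηχ : ∀ x, η (χ x) = x)
    {x : α} (hx : x ∈ UU 𝒯 s) : χ x ∈ UU 𝒯 s := by
  obtain ⟨G, hG, hGc, hxG⟩ := hx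
  have hinj : Function.Injective χ := fun a b h => by rw [← hηχ a, h, hηχ b]
  refine ⟨χ '' G, minHit_image hχ hη hχη hηχ hG, ?_, Set.mem_image_of_mem χ hxG⟩
  rw [Set.ncard_image_of_injective G hinj]
  exact hGc

lemma sph_stable {X : Set (EuclideanSpace ℝ (Fin 3))} {χ : EuclideanSpace ℝ (Fin 3) → EuclideanSpace ℝ (Fin 3)}
    (hdist : ∀ a b, dist (χ a) (χ b) = dist a b) (hinj : Function.Injective χ)
    (hX : χ '' X = X) : ∀ T ∈ Sph X, χ '' T ∈ Sph X := by
  rintro T ⟨hTX, hTf, hTc, c, r, hcr⟩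
  refine ⟨?_, hTf.image χ, ?_, ⟨χ c, r, ?_⟩⟩
  · rw [← hX]
    exact Set.image_mono (f := χ) hTX
  · rw [Set.ncard_image_of_injective T hinj, hTc]
  · rintro _ ⟨t, ht, rfl⟩
    rw [hdist]
    exact hcr t ht

/-- **Problem 1.** If a finite set `F` can be removed from `X ⊆ ℝ³` so that no 2018 of the
remaining points lie on a common sphere, then such a finite set `F'` can be chosen invariant
under all isometries of `ℝ³` mapping `X` onto itself, with `|F'| ≤ f^{2017}(|F|)`
(where `f(x) = x(x+1)`). -/
theorem stmt_18 (X F : Set (EuclideanSpace ℝ (Fin 3)))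
    (hFX : F ⊆ X) (hFfin : F.Finite) (hF : NoSphere2018 X F) :
    ∃ F' : Set (EuclideanSpace ℝ (Fin 3)), F' ⊆ X ∧ F'.Finite ∧ NoSphere2018 X F' ∧
      (∀ φ : EuclideanSpace ℝ (Fin 3) → EuclideanSpace ℝ (Fin 3),
        Function.Bijective φ → Isometry φ → φ '' X = X → φ '' F' = F') ∧
      F'.ncard ≤ (fun x : ℕ => x * (x + 1))^[2017] F.ncard := by
  have hunif : ∀ T ∈ Sph X, T.Finite ∧ T.ncard = 2018 := fun T hT => ⟨hT.2.1, hT.2.2.1⟩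
  have bound := UU_finite_bound 2018 (Sph X) F.ncard hunif
  refine ⟨UU (Sph X) F.ncard, ?_, bound.1, ?_, ?_, ?_⟩
  · -- contained in X
    rintro x ⟨G, hG, hGc, hxG⟩
    obtain ⟨T, hT, hxT, -⟩ := minHit_private hG hxG
    exact hT.1 hxT
  · -- no sphere property
    rw [noSphere_iff_hits]
    have hFhits : Hits (Sph X) F := (noSphere_iff_hits X F).mp hF
    obtain ⟨G₀, hG₀sub, hG₀⟩ := exists_minHit (Sph X) F.ncard F hFfin le_rfl hFhits
    intro T hT
    obtain ⟨y, hyT, hyG₀⟩ := hG₀.1 T hT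
    exact ⟨y, hyT, G₀, hG₀, Set.ncard_le_ncard hG₀sub hFfin, hyG₀⟩
  · -- invariance
    intro φ hb hiso hXim
    set e := Equiv.ofBijective φ hb with he
    set ψ : EuclideanSpace ℝ (Fin 3) → EuclideanSpace ℝ (Fin 3) := ⇑e.symm with hψdef
    have hφψ : ∀ x, φ (ψ x) = x := fun x => e.apply_symm_apply x
    have hψφ : ∀ x, ψ (φ x) = x := fun x => e.symm_apply_apply x
    have hψinj : Function.Injective ψ := fun a b h => by rw [← hφψ a, h, hφψ b]
    have hψdist : ∀ a b, dist (ψ a) (ψ b) = dist a b := by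
      intro a b
      rw [← hiso.dist_eq (ψ a) (ψ b), hφψ, hφψ]
    have hψX : ψ '' X = X := by
      conv_lhs => rw [← hXim]
      exact image_comp_inv hψφ X
    have hφS := sph_stable hiso.dist_eq hb.1 hXim
    have hψS := sph_stable hψdist hψinj hψX
    apply Set.Subset.antisymm
    · rintro _ ⟨x, hx, rfl⟩
      exact mem_UU_image hφS hψS hφψ hψφ hx
    · intro x hx
      exact ⟨ψ x, mem_UU_image hψS hφS hψφ hφψ hx, hφψ x⟩
  · -- cardinality bound
    exact bound.2.trans (gfun_le_iterate 2017 F.ncard)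
end
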